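/- arXiv:2512.06585 — 12 statements merged into one kernel-verified Lean document; each statement's English description precedes it below -/
import Mathlib

section
/- Let M be a finite set of items and let v : 2^M → ℝ≥0 be an XOS valuation, i.e. there is a nonempty finite collection C of nonnegative weight functions c : M → ℝ≥0 such that v(S) = max_{c∈C} Σ_{j∈S} c(j) for every S ⊆ M. Let T ⊆ M, let p ∈ [0,1], and let S be a random subset of M, defined on some probability space, such that Pr[j ∈ S] ≥ p for every j ∈ T (the events {j ∈ S} need not be independent). Then E[v(S)] ≥ p · v(T). -/
open MeasureTheory

/-- If `v` is an XOS valuation on a finite item set `M` (a pointwise maximum of a nonempty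
finite collection of nonnegative additive functions) and `S` is a random subset of `M`
(on an arbitrary probability space, with no independence assumption) such that each item
`j ∈ T` belongs to `S` with probability at least `p`, then `E[v(S)] ≥ p · v(T)`. -/
theorem xos_fractional_coverage
    {M : Type*} [Fintype M] [DecidableEq M]
    (v : Finset M → ℝ) (C : Finset (M → ℝ)) (hC : C.Nonempty)
    (hCnonneg : ∀ c ∈ C, ∀ j : M, 0 ≤ c j)
    (hv : ∀ S : Finset M, v S = C.sup' hC (fun c => ∑ j ∈ S, c j))
    {Ω : Type*} [MeasurableSpace Ω] (μ : Measure Ω) [IsProbabilityMeasure μ]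
    (S : Ω → Finset M)
    (hmeas : ∀ j : M, MeasurableSet {ω | j ∈ S ω})
    (hmeasv : Measurable (fun ω => v (S ω)))
    (T : Finset M) (p : ℝ) (hp0 : 0 ≤ p) (hp1 : p ≤ 1)
    (hprob : ∀ j ∈ T, p ≤ (μ {ω | j ∈ S ω}).toReal) :
    p * v T ≤ ∫ ω, v (S ω) ∂μ := by
  obtain ⟨c, hcC, hcmax⟩ := C.exists_mem_eq_sup' hC (fun c => ∑ j ∈ T, c j)
  have hvT : v T = ∑ j ∈ T, c j := by rw [hv]; exact hcmax
  set g : Ω → ℝ := fun ω => ∑ j ∈ T, Set.indicator {ω | j ∈ S ω} (fun _ => c j) ω with hg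
  have hgeq : ∀ ω, g ω = ∑ j ∈ T ∩ S ω, c j := by
    intro ω
    simp only [hg, Set.indicator, Set.mem_setOf_eq]
    rw [Finset.sum_ite_mem]
  have hgle : ∀ ω, g ω ≤ v (S ω) := by
    intro ω
    rw [hgeq, hv]
    calc ∑ j ∈ T ∩ S ω, c j ≤ ∑ j ∈ S ω, c j :=
          Finset.sum_le_sum_of_subset_of_nonneg (Finset.inter_subset_right)
            (fun j hj _ => hCnonneg c hcC j)
      _ ≤ C.sup' hC (fun c => ∑ j ∈ S ω, c j) := Finset.le_sup' _ hcC
  -- integrability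
  have hint_ind : ∀ j : M, Integrable (fun ω => Set.indicator {ω | j ∈ S ω} (fun _ => c j) ω) μ := by
    intro j
    exact (integrable_const (c j)).indicator (hmeas j)
  have hint_g : Integrable g μ := integrable_finset_sum T (fun j _ => hint_ind j)
  have hint_v : Integrable (fun ω => v (S ω)) μ := by
    obtain ⟨B, hB⟩ := Finite.exists_le (fun A : Finset M => |v A|)
    exact ⟨hmeasv.aestronglyMeasurable,
      HasFiniteIntegral.of_bounded (C := B) (Filter.Eventually.of_forall fun ω => hB (S ω))⟩
  have h1 : ∫ ω, g ω ∂μ ≤ ∫ ω, v (S ω) ∂μ :=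
    integral_mono hint_g hint_v hgle
  have h2 : ∫ ω, g ω ∂μ = ∑ j ∈ T, (μ {ω | j ∈ S ω}).toReal * c j := by
    rw [hg, integral_finset_sum T (fun j _ => hint_ind j)]
    refine Finset.sum_congr rfl fun j _ => ?_
    rw [integral_indicator_const _ (hmeas j)]
    simp [mul_comm, Measure.real]
  have h3 : p * v T ≤ ∑ j ∈ T, (μ {ω | j ∈ S ω}).toReal * c j := by
    rw [hvT, Finset.mul_sum]
    refine Finset.sum_le_sum fun j hj => ?_
    exact mul_le_mul_of_nonneg_right (hprob j hj) (hCnonneg c hcC j)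
  linarith
end

section
/- There exist universal constants κ > 0 and C > 0 such that for all positive integers n and c with c ≥ C·n the following holds. Set ε = n^{-1/3}. For every integer z with n ≤ z ≤ 2^{κ·c/n} there exist subsets S_1, …, S_z of [c], each of size ⌊εc⌋, such that for every subset S ⊆ [c] and every L ⊆ [z] with |L| = n, Σ_{ℓ∈L} |S ∩ S_ℓ| ≤ (|S|/c + 3ε) · ε n c. -/
set_option maxHeartbeats 1000000
open Finset Real



lemma exp_le_one_add_add_sq {x : ℝ} (h : |x| ≤ 1) : Real.exp x ≤ 1 + x + x ^ 2 := by
  have h2 := Real.exp_bound h (n := 2) (by norm_num)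
  have : Real.exp x - (1 + x) ≤ |x| ^ 2 * (3 / (2 * 2)) := by
    have := abs_le.1 h2
    have hs : ∑ m ∈ Finset.range 2, x ^ m / m.factorial = 1 + x := by
      simp [Finset.sum_range_succ]
    simp only [hs] at this
    simpa using this.2
  have hx2 : |x| ^ 2 = x ^ 2 := sq_abs x
  nlinarith [sq_nonneg x]

-- sum over function space of product of coordinatewise factors
lemma sum_fun_prod {K A : Type*} [Fintype K] [DecidableEq K] [Fintype A]
    (Φ : K → A → ℝ) :
    ∑ x : K → A, ∏ u : K, Φ u (x u) = ∏ u : K, ∑ a : A, Φ u a := by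
  rw [Finset.prod_univ_sum (fun _ => (univ : Finset A)) Φ]
  rw [Fintype.piFinset_univ]

lemma sum_one_coord {K A : Type*} [Fintype K] [DecidableEq K] [Fintype A]
    (k : K) (φ : A → ℝ) :
    ∑ x : K → A, φ (x k) = (Fintype.card A : ℝ) ^ (Fintype.card K - 1) * ∑ a : A, φ a := by
  classical
  have := sum_fun_prod (K := K) (A := A) (fun u => if u = k then φ else fun _ => 1)
  have hL : ∀ x : K → A, (∏ u : K, (if u = k then φ else fun _ => (1:ℝ)) (x u)) = φ (x k) := by
    intro x
    rw [Finset.prod_eq_single k] <;> simp +contextual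
  have hR : (∏ u : K, ∑ a : A, (if u = k then φ else fun _ => (1:ℝ)) a)
      = (Fintype.card A : ℝ) ^ (Fintype.card K - 1) * ∑ a : A, φ a := by
    rw [← Finset.prod_erase_mul _ _ (Finset.mem_univ k)]
    have : ∀ u ∈ univ.erase k, (∑ a : A, (if u = k then φ else fun _ => (1:ℝ)) a)
        = (Fintype.card A : ℝ) := by
      intro u hu
      rcases Finset.mem_erase.1 hu with ⟨hne, _⟩
      simp [hne]
    rw [Finset.prod_congr rfl this, Finset.prod_const]
    simp [Finset.card_erase_of_mem, mul_comm]
  simp only [hL] at this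
  rw [this, hR]

lemma sum_two_coord {K A : Type*} [Fintype K] [DecidableEq K] [Fintype A]
    {k k' : K} (hkk : k ≠ k') (φ ψ : A → ℝ) :
    ∑ x : K → A, φ (x k) * ψ (x k')
      = (Fintype.card A : ℝ) ^ (Fintype.card K - 2) * ((∑ a : A, φ a) * ∑ a : A, ψ a) := by
  classical
  have := sum_fun_prod (K := K) (A := A)
    (fun u => if u = k then φ else if u = k' then ψ else fun _ => 1)
  have hL : ∀ x : K → A,
      (∏ u : K, (if u = k then φ else if u = k' then ψ else fun _ => (1:ℝ)) (x u))
        = φ (x k) * ψ (x k') := by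
    intro x
    rw [← Finset.prod_subset (Finset.subset_univ {k, k'})]
    · rw [Finset.prod_pair hkk]
      simp [hkk, hkk.symm]
    · intro u _ hu
      simp only [Finset.mem_insert, Finset.mem_singleton, not_or] at hu
      simp [hu.1, hu.2]
  have hR : (∏ u : K, ∑ a : A, (if u = k then φ else if u = k' then ψ else fun _ => (1:ℝ)) a)
      = (Fintype.card A : ℝ) ^ (Fintype.card K - 2) * ((∑ a : A, φ a) * ∑ a : A, ψ a) := by
    rw [← Finset.prod_sdiff (Finset.subset_univ {k, k'})]
    have hconst : ∀ u ∈ univ \ {k, k'},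
        (∑ a : A, (if u = k then φ else if u = k' then ψ else fun _ => (1:ℝ)) a)
          = (Fintype.card A : ℝ) := by
      intro u hu
      simp only [Finset.mem_sdiff, Finset.mem_insert, Finset.mem_singleton, not_or] at hu
      simp [hu.2.1, hu.2.2]
    rw [Finset.prod_congr rfl hconst, Finset.prod_const, Finset.prod_pair hkk]
    have hcard : (univ \ {k, k'}).card = Fintype.card K - 2 := by
      rw [Finset.card_sdiff_of_subset (Finset.subset_univ _), Finset.card_pair hkk, Finset.card_univ]
    rw [hcard]
    rw [if_pos rfl, if_neg hkk.symm, if_pos rfl]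
  simp only [hL] at this
  rw [this, hR]


lemma mgf_fin {A : Type*} [Fintype A] [Nonempty A] (lam : ℝ) (hlam : 0 ≤ lam) :
    ∀ (m : ℕ) (f : (Fin m → A) → ℝ) (cs : Fin m → ℝ),
      (∀ k, 0 ≤ cs k ∧ lam * cs k ≤ 1) →
      (∀ x k a, |f (Function.update x k a) - f x| ≤ cs k) →
      ∑ x : Fin m → A, Real.exp (lam * f x)
        ≤ (Fintype.card A : ℝ) ^ m *
            Real.exp (lam * ((∑ x : Fin m → A, f x) / (Fintype.card A : ℝ) ^ m)
              + lam ^ 2 * ∑ k, cs k ^ 2) := by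
  classical
  have hA : (0:ℝ) < (Fintype.card A : ℝ) := by
    exact_mod_cast Fintype.card_pos
  intro m
  induction m with
  | zero =>
    intro f cs _ _
    simp
  | succ m ih =>
    intro f cs hcs hbd
    set Ac : ℝ := (Fintype.card A : ℝ) with hAc
    -- decompose sum
    have hsplit : ∀ F : (Fin (m+1) → A) → ℝ,
        ∑ x : Fin (m+1) → A, F x = ∑ y : Fin m → A, ∑ a : A, F (Fin.cons a y) := by
      intro F
      have he := Fintype.sum_equiv (Fin.consEquiv fun _ => A)
        (fun p : A × (Fin m → A) => F (Fin.cons p.1 p.2)) F (fun p => rfl)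
      rw [← he, Fintype.sum_prod_type]
      exact Finset.sum_comm
    set g : (Fin m → A) → ℝ := fun y => (∑ a : A, f (Fin.cons a y)) / Ac with hg
    have hgsum : ∀ y, Ac * g y = ∑ a : A, f (Fin.cons a y) := by
      intro y; rw [hg]; exact mul_div_cancel₀ _ (ne_of_gt hA)
    -- fiber deviation bound
    have hfib : ∀ (y : Fin m → A) (a : A), |f (Fin.cons a y) - g y| ≤ cs 0 := by
      intro y a
      have : f (Fin.cons a y) - g y
          = (∑ a' : A, (f (Fin.cons a y) - f (Fin.cons a' y))) / Ac := by
        rw [Finset.sum_sub_distrib, Finset.sum_const, Finset.card_univ]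
        rw [sub_div, hg]
        congr 1
        rw [nsmul_eq_mul]
        field_simp
        rfl
      rw [this, abs_div, abs_of_pos hA]
      rw [div_le_iff₀ hA]
      calc |∑ a' : A, (f (Fin.cons a y) - f (Fin.cons a' y))|
          ≤ ∑ a' : A, |f (Fin.cons a y) - f (Fin.cons a' y)| := Finset.abs_sum_le_sum_abs _ _
        _ ≤ ∑ _a' : A, cs 0 := by
            apply Finset.sum_le_sum
            intro a' _
            have h1 : Function.update (Fin.cons a y : Fin (m+1) → A) 0 a' = Fin.cons a' y := by
              rw [Fin.update_cons_zero]
            rw [← h1, abs_sub_comm]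
            exact hbd _ _ _
        _ = cs 0 * Ac := by rw [Finset.sum_const, Finset.card_univ, nsmul_eq_mul, mul_comm]
    -- fiber mgf bound
    have hfmgf : ∀ y : Fin m → A,
        ∑ a : A, Real.exp (lam * f (Fin.cons a y))
          ≤ Ac * Real.exp (lam * g y + lam ^ 2 * cs 0 ^ 2) := by
      intro y
      have hzero : ∑ a : A, (f (Fin.cons a y) - g y) = 0 := by
        rw [Finset.sum_sub_distrib, Finset.sum_const, Finset.card_univ, nsmul_eq_mul,
          ← hgsum y]
        ring
      have key : ∑ a : A, Real.exp (lam * (f (Fin.cons a y) - g y))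
          ≤ Ac * Real.exp (lam ^ 2 * cs 0 ^ 2) := by
        calc ∑ a : A, Real.exp (lam * (f (Fin.cons a y) - g y))
            ≤ ∑ a : A, (1 + lam * (f (Fin.cons a y) - g y)
                + (lam * (f (Fin.cons a y) - g y)) ^ 2) := by
              apply Finset.sum_le_sum
              intro a _
              apply exp_le_one_add_add_sq
              rw [abs_mul, abs_of_nonneg hlam]
              calc lam * |f (Fin.cons a y) - g y| ≤ lam * cs 0 :=
                    mul_le_mul_of_nonneg_left (hfib y a) hlam
                _ ≤ 1 := (hcs 0).2
          _ ≤ ∑ a : A, (1 + lam * (f (Fin.cons a y) - g y) + lam ^ 2 * cs 0 ^ 2) := by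
              apply Finset.sum_le_sum
              intro a _
              have habs := abs_le.1 (hfib y a)
              have h2 : (f (Fin.cons a y) - g y) ^ 2 ≤ cs 0 ^ 2 :=
                sq_le_sq' (by linarith [habs.1]) habs.2
              have : (lam * (f (Fin.cons a y) - g y)) ^ 2 ≤ lam ^ 2 * cs 0 ^ 2 := by
                rw [mul_pow]
                exact mul_le_mul_of_nonneg_left h2 (sq_nonneg lam)
              linarith
          _ = Ac * (1 + lam ^ 2 * cs 0 ^ 2) := by
              rw [Finset.sum_add_distrib, Finset.sum_add_distrib, ← Finset.mul_sum, hzero]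
              rw [Finset.sum_const, Finset.sum_const, Finset.card_univ, nsmul_eq_mul,
                nsmul_eq_mul]
              ring
          _ ≤ Ac * Real.exp (lam ^ 2 * cs 0 ^ 2) := by
              apply mul_le_mul_of_nonneg_left _ (le_of_lt hA)
              have := Real.add_one_le_exp (lam ^ 2 * cs 0 ^ 2)
              linarith
      calc ∑ a : A, Real.exp (lam * f (Fin.cons a y))
          = Real.exp (lam * g y) * ∑ a : A, Real.exp (lam * (f (Fin.cons a y) - g y)) := by
            rw [Finset.mul_sum]
            congr 1; funext a
            rw [← Real.exp_add]; ring_nf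
        _ ≤ Real.exp (lam * g y) * (Ac * Real.exp (lam ^ 2 * cs 0 ^ 2)) := by
            exact mul_le_mul_of_nonneg_left key (le_of_lt (Real.exp_pos _))
        _ = Ac * Real.exp (lam * g y + lam ^ 2 * cs 0 ^ 2) := by
            rw [Real.exp_add]; ring
    -- apply IH to g
    have hgbd : ∀ y k b, |g (Function.update y k b) - g y| ≤ cs k.succ := by
      intro y k b
      have hc : ∀ a : A, (Fin.cons a (Function.update y k b) : Fin (m+1) → A)
          = Function.update (Fin.cons a y : Fin (m+1) → A) k.succ b := fun a => by
        simp
      have : g (Function.update y k b) - g y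
          = (∑ a : A, (f (Function.update (Fin.cons a y) k.succ b) - f (Fin.cons a y))) / Ac := by
        rw [hg]
        simp only [← hc]
        rw [Finset.sum_sub_distrib, sub_div]
      rw [this, abs_div, abs_of_pos hA, div_le_iff₀ hA]
      calc |∑ a : A, (f (Function.update (Fin.cons a y) k.succ b) - f (Fin.cons a y))|
          ≤ ∑ a : A, |f (Function.update (Fin.cons a y) k.succ b) - f (Fin.cons a y)| :=
            Finset.abs_sum_le_sum_abs _ _
        _ ≤ ∑ _a : A, cs k.succ := Finset.sum_le_sum (fun a _ => hbd _ _ _)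
        _ = cs k.succ * Ac := by rw [Finset.sum_const, Finset.card_univ, nsmul_eq_mul, mul_comm]
    have ihg := ih g (fun k => cs k.succ) (fun k => hcs k.succ) (fun y k b => hgbd y k b)
    -- average identity
    have havg : (∑ y : Fin m → A, g y) / Ac ^ m
        = (∑ x : Fin (m+1) → A, f x) / Ac ^ (m + 1) := by
      rw [hsplit f]
      have : ∑ y : Fin m → A, g y = (∑ y : Fin m → A, ∑ a : A, f (Fin.cons a y)) / Ac := by
        rw [hg, Finset.sum_div]
      rw [this]
      rw [div_div]
      congr 1
      ring
    calc ∑ x : Fin (m+1) → A, Real.exp (lam * f x)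
        = ∑ y : Fin m → A, ∑ a : A, Real.exp (lam * f (Fin.cons a y)) := hsplit _
      _ ≤ ∑ y : Fin m → A, Ac * Real.exp (lam * g y + lam ^ 2 * cs 0 ^ 2) := by
          exact Finset.sum_le_sum fun y _ => hfmgf y
      _ = Ac * Real.exp (lam ^ 2 * cs 0 ^ 2) * ∑ y : Fin m → A, Real.exp (lam * g y) := by
          rw [Finset.mul_sum]
          congr 1; funext y
          rw [Real.exp_add]; ring
      _ ≤ Ac * Real.exp (lam ^ 2 * cs 0 ^ 2) *
          (Ac ^ m * Real.exp (lam * ((∑ y : Fin m → A, g y) / Ac ^ m)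
            + lam ^ 2 * ∑ k : Fin m, cs k.succ ^ 2)) := by
          have h0 : (0:ℝ) ≤ Ac * Real.exp (lam ^ 2 * cs 0 ^ 2) := by positivity
          exact mul_le_mul_of_nonneg_left (by simpa using ihg) h0
      _ = Ac ^ (m+1) * Real.exp (lam * ((∑ x : Fin (m+1) → A, f x) / Ac ^ (m+1))
            + lam ^ 2 * ∑ k : Fin (m+1), cs k ^ 2) := by
          rw [← havg, Fin.sum_univ_succ (fun k => cs k ^ 2)]
          have harr : lam * ((∑ y : Fin m → A, g y) / Ac ^ m)
              + lam ^ 2 * (cs 0 ^ 2 + ∑ i : Fin m, cs i.succ ^ 2)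
              = lam ^ 2 * cs 0 ^ 2
                + (lam * ((∑ y : Fin m → A, g y) / Ac ^ m)
                  + lam ^ 2 * ∑ i : Fin m, cs i.succ ^ 2) := by ring
          rw [harr, Real.exp_add, pow_succ Ac m]
          rw [mul_mul_mul_comm, mul_comm Ac (Ac ^ m), ← Real.exp_add, ← Real.exp_add]


lemma mgf_general {K A : Type*} [Fintype K] [DecidableEq K] [Fintype A] [Nonempty A]
    (lam : ℝ) (hlam : 0 ≤ lam) (f : (K → A) → ℝ) (cs : K → ℝ)
    (hcs : ∀ k, 0 ≤ cs k ∧ lam * cs k ≤ 1)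
    (hbd : ∀ x k a, |f (Function.update x k a) - f x| ≤ cs k) :
    ∑ x : K → A, Real.exp (lam * f x)
      ≤ (Fintype.card A : ℝ) ^ (Fintype.card K) *
          Real.exp (lam * ((∑ x : K → A, f x) / (Fintype.card A : ℝ) ^ (Fintype.card K))
            + lam ^ 2 * ∑ k, cs k ^ 2) := by
  classical
  set m := Fintype.card K with hm
  set E : K ≃ Fin m := Fintype.equivFin K with hE
  have hup : ∀ (x : Fin m → A) (k : Fin m) (a : A),
      (Function.update x k a) ∘ E = Function.update (x ∘ E) (E.symm k) a := by
    intro x k a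
    funext u
    simp only [Function.comp_apply, Function.update]
    by_cases h : u = E.symm k
    · subst h; simp
    · have h2 : E u ≠ k := fun hc => h (by rw [← hc]; simp)
      simp [h, h2]
  have hbij : ∀ Φ : (K → A) → ℝ, ∑ x : Fin m → A, Φ (x ∘ E) = ∑ h : K → A, Φ h := by
    intro Φ
    exact Fintype.sum_equiv (Equiv.arrowCongr E.symm (Equiv.refl A))
      (fun x => Φ (x ∘ E)) Φ (fun x => rfl)
  have hcs2 : ∑ k : Fin m, cs (E.symm k) ^ 2 = ∑ u : K, cs u ^ 2 :=
    Fintype.sum_equiv E.symm (fun k => cs (E.symm k) ^ 2) (fun u => cs u ^ 2) (fun k => rfl)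
  have key := mgf_fin lam hlam m (fun x => f (x ∘ E)) (fun k => cs (E.symm k))
    (fun k => hcs (E.symm k))
    (fun x k a => by
      show |f ((Function.update x k a) ∘ E) - f (x ∘ E)| ≤ cs (E.symm k)
      rw [hup]; exact hbd (x ∘ E) (E.symm k) a)
  rw [hbij (fun h => Real.exp (lam * f h)), hbij f, hcs2] at key
  exact key

lemma chernoff_count {K A : Type*} [Fintype K] [DecidableEq K] [Fintype A] [Nonempty A]
    (lam B : ℝ) (hlam : 0 ≤ lam) (f : (K → A) → ℝ) (cs : K → ℝ)
    (hcs : ∀ k, 0 ≤ cs k ∧ lam * cs k ≤ 1)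
    (hbd : ∀ x k a, |f (Function.update x k a) - f x| ≤ cs k) :
    ((univ.filter fun x : K → A => B ≤ f x).card : ℝ)
      ≤ (Fintype.card A : ℝ) ^ (Fintype.card K) *
          Real.exp (lam * ((∑ x : K → A, f x) / (Fintype.card A : ℝ) ^ (Fintype.card K))
            + lam ^ 2 * (∑ k, cs k ^ 2) - lam * B) := by
  classical
  have h1 : ((univ.filter fun x : K → A => B ≤ f x).card : ℝ) * Real.exp (lam * B)
      ≤ ∑ x : K → A, Real.exp (lam * f x) := by
    calc ((univ.filter fun x : K → A => B ≤ f x).card : ℝ) * Real.exp (lam * B)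
        = ∑ _x ∈ univ.filter fun x : K → A => B ≤ f x, Real.exp (lam * B) := by
          rw [Finset.sum_const, nsmul_eq_mul]
      _ ≤ ∑ x ∈ univ.filter fun x : K → A => B ≤ f x, Real.exp (lam * f x) := by
          apply Finset.sum_le_sum
          intro x hx
          have := (Finset.mem_filter.1 hx).2
          exact Real.exp_le_exp.2 (mul_le_mul_of_nonneg_left this hlam)
      _ ≤ ∑ x : K → A, Real.exp (lam * f x) := by
          apply Finset.sum_le_sum_of_subset_of_nonneg (Finset.filter_subset _ _)
          intro x _ _
          exact le_of_lt (Real.exp_pos _)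
  have h2 := mgf_general lam hlam f cs hcs hbd
  have h3 := le_trans h1 h2
  rw [Real.exp_sub, ← mul_div_assoc, le_div_iff₀ (Real.exp_pos _)]
  exact h3


lemma variance_bin {K ι : Type*} [Fintype K] [DecidableEq K] [DecidableEq ι] {q : ℕ}
    (hq : 0 < q) (s : Finset ι) (κ : ι → K) (hκ : Set.InjOn κ s) (b : Fin q) :
    ∑ x : K → Fin q, (∑ ℓ ∈ s, ((if x (κ ℓ) = b then (1:ℝ) else 0) - 1/q)) ^ 2
      ≤ (s.card : ℝ) * (q : ℝ) ^ (Fintype.card K - 1) := by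
  classical
  have hqr : (0:ℝ) < (q:ℝ) := by exact_mod_cast hq
  set φ : Fin q → ℝ := fun a => (if a = b then (1:ℝ) else 0) - 1/q with hφ
  have hφsum : ∑ a : Fin q, φ a = 0 := by
    rw [hφ]
    rw [Finset.sum_sub_distrib]
    rw [Finset.sum_ite_eq' univ b (fun _ => (1:ℝ))]
    simp [Finset.card_univ]
    field_simp
    norm_num
  have hφsq : ∑ a : Fin q, φ a ^ 2 = 1 - 1/q := by
    rw [hφ]
    have : ∀ a : Fin q, ((if a = b then (1:ℝ) else 0) - 1/q) ^ 2
        = (if a = b then (1:ℝ) else 0) - (2/q) * (if a = b then (1:ℝ) else 0) + 1/q^2 := by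
      intro a
      by_cases h : a = b <;> simp [h] <;> ring
    rw [Finset.sum_congr rfl (fun a _ => this a)]
    rw [Finset.sum_add_distrib, Finset.sum_sub_distrib, ← Finset.mul_sum]
    rw [Finset.sum_ite_eq' univ b (fun _ => (1:ℝ)), Finset.sum_const, Finset.card_univ]
    simp only [Fintype.card_fin, mem_univ, if_true, nsmul_eq_mul]
    field_simp
    ring
  calc ∑ x : K → Fin q, (∑ ℓ ∈ s, φ (x (κ ℓ))) ^ 2
      = ∑ x : K → Fin q, ∑ ℓ ∈ s, ∑ ℓ' ∈ s, φ (x (κ ℓ)) * φ (x (κ ℓ')) := by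
        apply Finset.sum_congr rfl
        intro x _
        rw [sq, Finset.sum_mul_sum]
    _ = ∑ ℓ ∈ s, ∑ ℓ' ∈ s, ∑ x : K → Fin q, φ (x (κ ℓ)) * φ (x (κ ℓ')) := by
        rw [Finset.sum_comm]
        apply Finset.sum_congr rfl
        intro ℓ _
        rw [Finset.sum_comm]
    _ = ∑ ℓ ∈ s, ∑ ℓ' ∈ s, (if ℓ' = ℓ then ((q:ℝ) ^ (Fintype.card K - 1) * (1 - 1/q)) else 0) := by
        apply Finset.sum_congr rfl; intro ℓ hℓ
        apply Finset.sum_congr rfl; intro ℓ' hℓ'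
        by_cases h : ℓ' = ℓ
        · subst h
          rw [if_pos rfl]
          have := sum_one_coord (A := Fin q) (κ ℓ') (fun a => φ a ^ 2)
          simp only [Fintype.card_fin] at this
          rw [← hφsq]
          rw [← this]
          apply Finset.sum_congr rfl
          intro x _
          rw [sq]
        · rw [if_neg h]
          have hne : κ ℓ ≠ κ ℓ' := fun hc => h (hκ hℓ' hℓ hc.symm)
          rw [sum_two_coord hne φ φ]
          simp only [Fintype.card_fin]
          rw [hφsum]
          ring
    _ ≤ (s.card : ℝ) * (q : ℝ) ^ (Fintype.card K - 1) := by
        have : ∀ ℓ ∈ s, ∑ ℓ' ∈ s, (if ℓ' = ℓ then ((q:ℝ) ^ (Fintype.card K - 1) * (1 - 1/q)) else 0)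
            ≤ (q:ℝ) ^ (Fintype.card K - 1) := by
          intro ℓ hℓ
          rw [Finset.sum_ite_eq' s ℓ (fun _ => ((q:ℝ) ^ (Fintype.card K - 1) * (1 - 1/q)))]
          rw [if_pos hℓ]
          have h1 : (1:ℝ) - 1/q ≤ 1 := by
            have : (0:ℝ) ≤ 1/q := by positivity
            linarith
          calc (q:ℝ) ^ (Fintype.card K - 1) * (1 - 1/q)
              ≤ (q:ℝ) ^ (Fintype.card K - 1) * 1 := by
                apply mul_le_mul_of_nonneg_left h1 (by positivity)
            _ = (q:ℝ) ^ (Fintype.card K - 1) := mul_one _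
        calc ∑ ℓ ∈ s, ∑ ℓ' ∈ s, (if ℓ' = ℓ then ((q:ℝ) ^ (Fintype.card K - 1) * (1 - 1/q)) else 0)
            ≤ ∑ _ℓ ∈ s, (q:ℝ) ^ (Fintype.card K - 1) := Finset.sum_le_sum this
          _ = (s.card : ℝ) * (q : ℝ) ^ (Fintype.card K - 1) := by
              rw [Finset.sum_const, nsmul_eq_mul]


lemma pos01 (y : ℝ) : 0 ≤ max (y+1) 0 - max y 0 ∧ max (y+1) 0 - max y 0 ≤ 1 := by
  constructor
  · have : max y 0 ≤ max (y+1) 0 := max_le_max (by linarith) le_rfl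
    linarith
  · have h1 : max (y+1) 0 ≤ max y 0 + 1 := by
      apply max_le
      · have := le_max_left y 0; linarith
      · have := le_max_right y 0; linarith
    linarith

lemma key1 {q : ℕ} (θ : ℝ) (M : Fin q → ℝ) (a o : Fin q) :
    |∑ b : Fin q, (max (M b + (if a = b then (1:ℝ) else 0) - θ) 0
      - max (M b + (if o = b then (1:ℝ) else 0) - θ) 0)| ≤ 1 := by
  classical
  by_cases hao : a = o
  · subst hao
    simp
  · have hz : ∀ b ∈ (univ : Finset (Fin q)), b ∉ ({a, o} : Finset (Fin q)) →
        (max (M b + (if a = b then (1:ℝ) else 0) - θ) 0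
          - max (M b + (if o = b then (1:ℝ) else 0) - θ) 0) = 0 := by
      intro b _ hb
      simp only [Finset.mem_insert, Finset.mem_singleton, not_or] at hb
      rw [if_neg (fun h => hb.1 h.symm), if_neg (fun h => hb.2 h.symm)]
      ring
    rw [← Finset.sum_subset (Finset.subset_univ ({a, o} : Finset (Fin q))) hz]
    rw [Finset.sum_pair hao]
    have ha := pos01 (M a - θ)
    have ho := pos01 (M o - θ)
    have e1 : M a + (if a = a then (1:ℝ) else 0) - θ = (M a - θ) + 1 := by simp; ring
    have e2 : M a + (if o = a then (1:ℝ) else 0) - θ = M a - θ := by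
      rw [if_neg (fun h => hao h.symm)]; ring
    have e3 : M o + (if a = o then (1:ℝ) else 0) - θ = M o - θ := by
      rw [if_neg hao]; ring
    have e4 : M o + (if o = o then (1:ℝ) else 0) - θ = (M o - θ) + 1 := by simp; ring
    rw [e1, e2, e3, e4]
    rw [abs_le]
    constructor <;> [skip; skip] <;> (obtain ⟨ha1, ha2⟩ := ha; obtain ⟨ho1, ho2⟩ := ho; linarith)

variable {z w q : ℕ}

/-- the excess function -/
noncomputable def FL (L : Finset (Fin z)) (θ : ℝ) (x : Fin z × Fin w → Fin q) : ℝ :=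
  ∑ i : Fin w, ∑ b : Fin q, max ((∑ ℓ ∈ L, (if x (ℓ, i) = b then (1:ℝ) else 0)) - θ) 0

lemma FL_bdd (L : Finset (Fin z)) (θ : ℝ) (x : Fin z × Fin w → Fin q)
    (k : Fin z × Fin w) (a : Fin q) :
    |FL L θ (Function.update x k a) - FL L θ x| ≤ (if k.1 ∈ L then (1:ℝ) else 0) := by
  classical
  obtain ⟨ℓ0, i0⟩ := k
  have hcoord : ∀ (ℓ : Fin z) (i : Fin w), (ℓ, i) ≠ (ℓ0, i0) →
      Function.update x (ℓ0, i0) a (ℓ, i) = x (ℓ, i) := by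
    intro ℓ i h
    exact Function.update_of_ne h a x
  by_cases hm : ℓ0 ∈ L
  · rw [if_pos hm]
    have hdiff : FL L θ (Function.update x (ℓ0, i0) a) - FL L θ x
        = ∑ i : Fin w, ((∑ b : Fin q,
            max ((∑ ℓ ∈ L, (if Function.update x (ℓ0, i0) a (ℓ, i) = b then (1:ℝ) else 0)) - θ) 0)
          - (∑ b : Fin q, max ((∑ ℓ ∈ L, (if x (ℓ, i) = b then (1:ℝ) else 0)) - θ) 0)) := by
      rw [FL, FL, ← Finset.sum_sub_distrib]
    rw [hdiff]
    rw [Finset.sum_eq_single i0]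
    · -- main coordinate
      set M : Fin q → ℝ := fun b => ∑ ℓ ∈ L.erase ℓ0, (if x (ℓ, i0) = b then (1:ℝ) else 0) with hM
      have hupd : ∀ b : Fin q, (∑ ℓ ∈ L, (if Function.update x (ℓ0, i0) a (ℓ, i0) = b then (1:ℝ) else 0))
          = M b + (if a = b then (1:ℝ) else 0) := by
        intro b
        rw [← Finset.sum_erase_add _ _ hm, Function.update_self]
        congr 1
        apply Finset.sum_congr rfl
        intro ℓ hℓ
        have hℓne : (ℓ, i0) ≠ (ℓ0, i0) := fun hc =>
          (Finset.mem_erase.1 hℓ).1 (Prod.ext_iff.1 hc).1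
        rw [hcoord ℓ i0 hℓne]
      have horig : ∀ b : Fin q, (∑ ℓ ∈ L, (if x (ℓ, i0) = b then (1:ℝ) else 0))
          = M b + (if x (ℓ0, i0) = b then (1:ℝ) else 0) := by
        intro b
        rw [← Finset.sum_erase_add _ _ hm]
      have : (∑ b : Fin q,
            max ((∑ ℓ ∈ L, (if Function.update x (ℓ0, i0) a (ℓ, i0) = b then (1:ℝ) else 0)) - θ) 0)
          - (∑ b : Fin q, max ((∑ ℓ ∈ L, (if x (ℓ, i0) = b then (1:ℝ) else 0)) - θ) 0)
          = ∑ b : Fin q, (max (M b + (if a = b then (1:ℝ) else 0) - θ) 0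
            - max (M b + (if x (ℓ0, i0) = b then (1:ℝ) else 0) - θ) 0) := by
        rw [← Finset.sum_sub_distrib]
        apply Finset.sum_congr rfl
        intro b _
        rw [hupd b, horig b]
      rw [this]
      exact key1 θ M a (x (ℓ0, i0))
    · -- other coordinates vanish
      intro i _ hi
      have : ∀ b : Fin q, (∑ ℓ ∈ L, (if Function.update x (ℓ0, i0) a (ℓ, i) = b then (1:ℝ) else 0))
          = (∑ ℓ ∈ L, (if x (ℓ, i) = b then (1:ℝ) else 0)) := by
        intro b
        apply Finset.sum_congr rfl
        intro ℓ _
        rw [hcoord ℓ i (by simp [hi])]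
      rw [Finset.sum_congr rfl (fun b _ => by rw [this b])]
      ring
    · intro h
      exact absurd (Finset.mem_univ i0) h
  · rw [if_neg hm]
    have : FL L θ (Function.update x (ℓ0, i0) a) = FL L θ x := by
      rw [FL, FL]
      apply Finset.sum_congr rfl
      intro i _
      apply Finset.sum_congr rfl
      intro b _
      congr 2
      apply Finset.sum_congr rfl
      intro ℓ hℓ
      refine (hcoord ℓ i fun hc => hm ?_) ▸ rfl
      have h1 : ℓ = ℓ0 := (Prod.ext_iff.1 hc).1
      exact h1 ▸ hℓ
    rw [this]
    simp



lemma FL_mean (hz : 0 < z) (hw : 0 < w) (hq : 0 < q) {n : ℕ}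
    (L : Finset (Fin z)) (hn : L.card = n) (θ s : ℝ) (hs : 0 < s) :
    ∑ x : Fin z × Fin w → Fin q, FL L θ x
      ≤ (q:ℝ) ^ (Fintype.card (Fin z × Fin w)) *
          (((w:ℝ)*n)/(2*s) + ((w:ℝ)*q)*(s/2) + ((w:ℝ)*q) * max ((n:ℝ)/q - θ) 0) := by
  classical
  have hqr : (0:ℝ) < (q:ℝ) := by exact_mod_cast hq
  set cK := Fintype.card (Fin z × Fin w) with hcK
  have hcK1 : 1 ≤ cK := by
    rw [hcK, Fintype.card_prod, Fintype.card_fin, Fintype.card_fin]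
    exact Nat.one_le_iff_ne_zero.2 (by positivity)
  set Q := (q:ℝ) ^ cK with hQ
  have hQpos : (0:ℝ) < Q := by positivity
  have hcard : ((Fintype.card (Fin z × Fin w → Fin q)) : ℝ) = Q := by
    rw [Fintype.card_fun, Fintype.card_fin]
    push_cast
    rfl
  have hswap : ∑ x : Fin z × Fin w → Fin q, FL L θ x
      = ∑ i : Fin w, ∑ b : Fin q, ∑ x : Fin z × Fin w → Fin q,
          max ((∑ ℓ ∈ L, (if x (ℓ, i) = b then (1:ℝ) else 0)) - θ) 0 := by
    simp only [FL]
    rw [Finset.sum_comm]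
    exact Finset.sum_congr rfl (fun i _ => Finset.sum_comm)
  rw [hswap]
  -- per-bin bound
  have hbin : ∀ (i : Fin w) (b : Fin q),
      ∑ x : Fin z × Fin w → Fin q,
          max ((∑ ℓ ∈ L, (if x (ℓ, i) = b then (1:ℝ) else 0)) - θ) 0
        ≤ ((n:ℝ) * (q:ℝ) ^ (cK - 1)) / (2*s) + Q * (s/2 + max ((n:ℝ)/q - θ) 0) := by
    intro i b
    have hpoint : ∀ x : Fin z × Fin w → Fin q,
        max ((∑ ℓ ∈ L, (if x (ℓ, i) = b then (1:ℝ) else 0)) - θ) 0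
          ≤ (∑ ℓ ∈ L, ((if x (ℓ, i) = b then (1:ℝ) else 0) - 1/q)) ^ 2 / (2*s)
            + (s/2 + max ((n:ℝ)/q - θ) 0) := by
      intro x
      set N : ℝ := ∑ ℓ ∈ L, (if x (ℓ, i) = b then (1:ℝ) else 0) with hNdef
      have hNsub : ∑ ℓ ∈ L, ((if x (ℓ, i) = b then (1:ℝ) else 0) - 1/q) = N - (n:ℝ)/q := by
        rw [Finset.sum_sub_distrib, Finset.sum_const, hn, nsmul_eq_mul]
        rw [hNdef]
        ring
      rw [hNsub]
      have h1 : max (N - (n:ℝ)/q) 0 ≤ (N - (n:ℝ)/q)^2/(2*s) + s/2 := by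
        have h2s : (0:ℝ) < 2*s := by linarith
        have ha : N - (n:ℝ)/q ≤ ((N - (n:ℝ)/q)^2 + s*s)/(2*s) := by
          rw [le_div_iff₀ h2s]
          nlinarith [sq_nonneg (N - (n:ℝ)/q - s)]
        have hb : ((N - (n:ℝ)/q)^2 + s*s)/(2*s) = (N - (n:ℝ)/q)^2/(2*s) + s/2 := by
          field_simp
        apply max_le
        · rw [hb] at ha; exact ha
        · positivity
      have h2 : max (N - θ) 0 ≤ max (N - (n:ℝ)/q) 0 + max ((n:ℝ)/q - θ) 0 := by
        apply max_le
        · have := le_max_left (N - (n:ℝ)/q) 0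
          have := le_max_left ((n:ℝ)/q - θ) 0
          linarith
        · have := le_max_right (N - (n:ℝ)/q) 0
          have := le_max_right ((n:ℝ)/q - θ) 0
          linarith
      linarith
    calc ∑ x : Fin z × Fin w → Fin q,
          max ((∑ ℓ ∈ L, (if x (ℓ, i) = b then (1:ℝ) else 0)) - θ) 0
        ≤ ∑ x : Fin z × Fin w → Fin q,
            ((∑ ℓ ∈ L, ((if x (ℓ, i) = b then (1:ℝ) else 0) - 1/q)) ^ 2 / (2*s)
              + (s/2 + max ((n:ℝ)/q - θ) 0)) := Finset.sum_le_sum (fun x _ => hpoint x)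
      _ = (∑ x : Fin z × Fin w → Fin q,
            (∑ ℓ ∈ L, ((if x (ℓ, i) = b then (1:ℝ) else 0) - 1/q)) ^ 2) / (2*s)
          + Q * (s/2 + max ((n:ℝ)/q - θ) 0) := by
          rw [Finset.sum_add_distrib, Finset.sum_const, Finset.card_univ, nsmul_eq_mul, hcard]
          rw [Finset.sum_div]
      _ ≤ ((n:ℝ) * (q:ℝ) ^ (cK - 1)) / (2*s) + Q * (s/2 + max ((n:ℝ)/q - θ) 0) := by
          have hvar := variance_bin hq L (fun ℓ => (ℓ, i)) (fun u _ v _ h => by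
            exact (Prod.ext_iff.1 h).1) b
          rw [hn] at hvar
          have : (0:ℝ) < 2*s := by linarith
          gcongr
  calc ∑ i : Fin w, ∑ b : Fin q, ∑ x : Fin z × Fin w → Fin q,
        max ((∑ ℓ ∈ L, (if x (ℓ, i) = b then (1:ℝ) else 0)) - θ) 0
      ≤ ∑ _i : Fin w, ∑ _b : Fin q,
          (((n:ℝ) * (q:ℝ) ^ (cK - 1)) / (2*s) + Q * (s/2 + max ((n:ℝ)/q - θ) 0)) := by
        apply Finset.sum_le_sum
        intro i _
        exact Finset.sum_le_sum (fun b _ => hbin i b)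
    _ = (w:ℝ) * ((q:ℝ) * (((n:ℝ) * (q:ℝ) ^ (cK - 1)) / (2*s) + Q * (s/2 + max ((n:ℝ)/q - θ) 0))) := by
        simp only [Finset.sum_const, Finset.card_univ, Fintype.card_fin, nsmul_eq_mul]
    _ = Q * (((w:ℝ)*n)/(2*s) + ((w:ℝ)*q)*(s/2) + ((w:ℝ)*q) * max ((n:ℝ)/q - θ) 0) := by
        have hqq : (q:ℝ) * (q:ℝ) ^ (cK - 1) = Q := by
          rw [hQ, ← pow_succ']
          congr 1
          omega
        rw [← hqq]
        field_simp
        ring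



lemma exists_good {n : ℕ} (hz : 0 < z) (hw : 0 < w) (hq : 0 < q)
    (θ B lam s μbar : ℝ) (hlam0 : 0 ≤ lam) (hlam1 : lam ≤ 1) (hs : 0 < s)
    (hμbar : ((w:ℝ)*n)/(2*s) + ((w:ℝ)*q)*(s/2) + ((w:ℝ)*q) * max ((n:ℝ)/q - θ) 0 ≤ μbar)
    (hfinal : (z.choose n : ℝ) * Real.exp (lam * μbar + lam ^ 2 * ((n:ℝ)*(w:ℝ)) - lam * B) < 1) :
    ∃ x : Fin z × Fin w → Fin q, ∀ L : Finset (Fin z), L.card = n → FL L θ x ≤ B := by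
  classical
  haveI : Nonempty (Fin q) := ⟨⟨0, hq⟩⟩
  set K := Fin z × Fin w
  set Q : ℝ := (q:ℝ) ^ (Fintype.card K) with hQ
  have hQpos : (0:ℝ) < Q := by positivity
  have hEnn : (0:ℝ) ≤ Real.exp (lam * μbar + lam ^ 2 * ((n:ℝ)*(w:ℝ)) - lam * B) :=
    le_of_lt (Real.exp_pos _)
  have hcardΩ : ((Fintype.card (K → Fin q)) : ℝ) = Q := by
    rw [Fintype.card_fun, Fintype.card_fin]
    push_cast
    rfl
  -- per L bound
  have hperL : ∀ L : Finset (Fin z), L.card = n →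
      ((univ.filter fun x : K → Fin q => B ≤ FL L θ x).card : ℝ)
        ≤ Q * Real.exp (lam * μbar + lam ^ 2 * ((n:ℝ)*(w:ℝ)) - lam * B) := by
    intro L hn
    set cs : K → ℝ := fun k => if k.1 ∈ L then (1:ℝ) else 0 with hcs
    have hcs1 : ∀ k, 0 ≤ cs k ∧ lam * cs k ≤ 1 := by
      intro k
      by_cases h : k.1 ∈ L
      · refine ⟨by simp [hcs, h], ?_⟩
        simp only [hcs, h, if_true]
        linarith
      · refine ⟨by simp [hcs, h], ?_⟩
        simp only [hcs, h, if_false]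
        linarith
    have hcssum : ∑ k : K, cs k ^ 2 = (n:ℝ) * (w:ℝ) := by
      have hsq : ∀ k : K, cs k ^ 2 = cs k := by
        intro k; rw [hcs]; by_cases h : k.1 ∈ L <;> simp [h]
      rw [Finset.sum_congr rfl (fun k _ => hsq k), hcs]
      rw [Fintype.sum_prod_type]
      have : ∀ ℓ : Fin z, (∑ _i : Fin w, (if ℓ ∈ L then (1:ℝ) else 0))
          = (w:ℝ) * (if ℓ ∈ L then (1:ℝ) else 0) := by
        intro ℓ
        rw [Finset.sum_const, Finset.card_univ, Fintype.card_fin, nsmul_eq_mul]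
      rw [Finset.sum_congr rfl (fun ℓ _ => this ℓ), ← Finset.mul_sum]
      rw [Finset.sum_boole]
      simp only [Finset.filter_mem_eq_inter, Finset.univ_inter]
      rw [hn]
      ring
    have hcher := chernoff_count (K := K) (A := Fin q) lam B hlam0 (FL L θ) cs hcs1 (fun x k a => FL_bdd L θ x k a)
    have hmean := FL_mean hz hw hq L hn θ s hs
    have hmean2 : (∑ x : K → Fin q, FL L θ x) / Q ≤ μbar := by
      rw [div_le_iff₀ hQpos]
      calc ∑ x : K → Fin q, FL L θ x
          ≤ Q * (((w:ℝ)*n)/(2*s) + ((w:ℝ)*q)*(s/2) + ((w:ℝ)*q) * max ((n:ℝ)/q - θ) 0) := hmean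
        _ ≤ Q * μbar := by
            apply mul_le_mul_of_nonneg_left hμbar (le_of_lt hQpos)
        _ = μbar * Q := mul_comm _ _
    calc ((univ.filter fun x : K → Fin q => B ≤ FL L θ x).card : ℝ)
        ≤ (Fintype.card (Fin q) : ℝ) ^ (Fintype.card K) *
            Real.exp (lam * ((∑ x : K → Fin q, FL L θ x) / (Fintype.card (Fin q) : ℝ) ^ (Fintype.card K))
              + lam ^ 2 * (∑ k : K, cs k ^ 2) - lam * B) := hcher
      _ ≤ Q * Real.exp (lam * μbar + lam ^ 2 * ((n:ℝ)*(w:ℝ)) - lam * B) := by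
          rw [Fintype.card_fin, hcssum]
          apply mul_le_mul_of_nonneg_left _ (le_of_lt hQpos)
          apply Real.exp_le_exp.2
          have := mul_le_mul_of_nonneg_left hmean2 hlam0
          simp only [← hQ]
          linarith [mul_le_mul_of_nonneg_left hmean2 hlam0]
  -- union bound
  set bad : Finset (K → Fin q) :=
    (Finset.powersetCard n (univ : Finset (Fin z))).biUnion
      (fun L => univ.filter fun x : K → Fin q => B ≤ FL L θ x) with hbad
  have hbadcard : (bad.card : ℝ) < Q := by
    calc (bad.card : ℝ)
        ≤ ∑ L ∈ Finset.powersetCard n (univ : Finset (Fin z)),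
            ((univ.filter fun x : K → Fin q => B ≤ FL L θ x).card : ℝ) := by
          rw [hbad]
          exact_mod_cast Nat.cast_le.2 (Finset.card_biUnion_le)
      _ ≤ ∑ _L ∈ Finset.powersetCard n (univ : Finset (Fin z)),
            Q * Real.exp (lam * μbar + lam ^ 2 * ((n:ℝ)*(w:ℝ)) - lam * B) := by
          apply Finset.sum_le_sum
          intro L hL
          exact hperL L (Finset.mem_powersetCard_univ.1 hL)
      _ = (z.choose n : ℝ) * (Q * Real.exp (lam * μbar + lam ^ 2 * ((n:ℝ)*(w:ℝ)) - lam * B)) := by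
          rw [Finset.sum_const, nsmul_eq_mul, Finset.card_powersetCard, Finset.card_univ,
            Fintype.card_fin]
      _ < Q := by
          have := mul_lt_mul_of_pos_right hfinal hQpos
          rw [one_mul] at this
          calc (z.choose n : ℝ) * (Q * Real.exp (lam * μbar + lam ^ 2 * ((n:ℝ)*(w:ℝ)) - lam * B))
              = (z.choose n : ℝ) * Real.exp (lam * μbar + lam ^ 2 * ((n:ℝ)*(w:ℝ)) - lam * B) * Q := by
                ring
            _ < Q := this
  have hne : ¬ ((univ : Finset (K → Fin q)) ⊆ bad) := by
    intro hsub
    have h1 := Finset.card_le_card hsub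
    have h2 : ((univ : Finset (K → Fin q)).card : ℝ) = Q := by
      rw [Finset.card_univ]; exact hcardΩ
    have := Nat.cast_le (α := ℝ) |>.2 h1
    rw [h2] at this
    linarith
  obtain ⟨x, _, hxbad⟩ := Finset.not_subset.1 hne
  refine ⟨x, fun L hL => ?_⟩
  by_contra hcon
  apply hxbad
  rw [hbad, Finset.mem_biUnion]
  exact ⟨L, Finset.mem_powersetCard_univ.2 hL,
    Finset.mem_filter.2 ⟨Finset.mem_univ x, le_of_lt (lt_of_not_ge hcon)⟩⟩



lemma construct {n c : ℕ} (hc : 0 < c) (hq : 0 < q) (hwq : w * q ≤ c)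
    (θ B : ℝ) (hθ : 0 ≤ θ)
    (x : Fin z × Fin w → Fin q)
    (hx : ∀ L : Finset (Fin z), L.card = n → FL L θ x ≤ B) :
    ∃ S : Fin z → Finset (Fin c),
      (∀ ℓ, (S ℓ).card = w) ∧
      ∀ (T : Finset (Fin c)) (L : Finset (Fin z)), L.card = n →
        (∑ ℓ ∈ L, ((T ∩ S ℓ).card : ℝ)) ≤ θ * T.card + B := by
  classical
  have hemb : ∀ (i : Fin w) (b : Fin q), i.1 * q + b.1 < c := by
    intro i b
    calc i.1 * q + b.1 < i.1 * q + q := Nat.add_lt_add_left b.2 _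
      _ = (i.1 + 1) * q := by ring
      _ ≤ w * q := Nat.mul_le_mul_right q i.2
      _ ≤ c := hwq
  set emb : Fin w → Fin q → Fin c := fun i b => ⟨i.1 * q + b.1, hemb i b⟩ with hembdef
  have hembinj : ∀ (i i' : Fin w) (b b' : Fin q), emb i b = emb i' b' → i = i' ∧ b = b' := by
    intro i i' b b' h
    have hval : i.1 * q + b.1 = i'.1 * q + b'.1 := congrArg Fin.val h
    have hdiv : i.1 = i'.1 := by
      have h1 : (b.1 + i.1 * q) / q = (b'.1 + i'.1 * q) / q := by
        rw [Nat.add_comm b.1, Nat.add_comm b'.1, hval]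
      rwa [Nat.add_mul_div_right _ _ hq, Nat.add_mul_div_right _ _ hq,
        Nat.div_eq_of_lt b.2, Nat.div_eq_of_lt b'.2, Nat.zero_add, Nat.zero_add] at h1
    have hb : b.1 = b'.1 := by
      rw [hdiv] at hval
      omega
    exact ⟨Fin.ext hdiv, Fin.ext hb⟩
  set S : Fin z → Finset (Fin c) := fun ℓ => Finset.image (fun i => emb i (x (ℓ, i))) univ
    with hS
  refine ⟨S, ?_, ?_⟩
  · intro ℓ
    rw [hS]
    rw [Finset.card_image_of_injective _ (fun i i' h => (hembinj _ _ _ _ h).1)]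
    rw [Finset.card_univ, Fintype.card_fin]
  · intro T L hL
    -- step A
    have hA : ∀ ℓ : Fin z, ((T ∩ S ℓ).card : ℝ)
        ≤ ∑ i : Fin w, (if emb i (x (ℓ, i)) ∈ T then (1:ℝ) else 0) := by
      intro ℓ
      have hsurj : ((T ∩ S ℓ).card : ℕ)
          ≤ (univ.filter fun i : Fin w => emb i (x (ℓ, i)) ∈ T).card := by
        apply Finset.card_le_card_of_surjOn (fun i => emb i (x (ℓ, i)))
        intro u hu
        rw [Finset.coe_inter] at hu
        obtain ⟨huT, huS⟩ := hu
        rw [hS] at huS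
        simp only [Finset.coe_image, Set.mem_image, Finset.coe_univ, Set.image_univ,
          Set.mem_range] at huS
        obtain ⟨i, hi⟩ := huS
        refine ⟨i, ?_, hi⟩
        simp only [Finset.coe_filter, Set.mem_setOf_eq, Finset.mem_univ, true_and]
        rw [hi]
        exact huT
      calc ((T ∩ S ℓ).card : ℝ)
          ≤ ((univ.filter fun i : Fin w => emb i (x (ℓ, i)) ∈ T).card : ℝ) := by
            exact_mod_cast hsurj
        _ = ∑ i : Fin w, (if emb i (x (ℓ, i)) ∈ T then (1:ℝ) else 0) := by
            rw [Finset.sum_boole]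
    -- step B: expand over b
    have hB : ∀ (ℓ : Fin z) (i : Fin w),
        (if emb i (x (ℓ, i)) ∈ T then (1:ℝ) else 0)
          = ∑ b : Fin q, (if x (ℓ, i) = b then (1:ℝ) else 0)
              * (if emb i b ∈ T then (1:ℝ) else 0) := by
      intro ℓ i
      rw [Finset.sum_congr rfl (fun b _ => by
        rw [ite_mul, one_mul, zero_mul] :
          ∀ b ∈ univ, (if x (ℓ, i) = b then (1:ℝ) else 0) * (if emb i b ∈ T then (1:ℝ) else 0)
            = if x (ℓ, i) = b then (if emb i b ∈ T then (1:ℝ) else 0) else 0)]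
      rw [Finset.sum_ite_eq univ (x (ℓ, i)) (fun b => if emb i b ∈ T then (1:ℝ) else 0)]
      rw [if_pos (Finset.mem_univ _)]
    -- combine
    have hcount : ∑ i : Fin w, ∑ b : Fin q, (if emb i b ∈ T then (1:ℝ) else 0)
        ≤ (T.card : ℝ) := by
      have h1 : ∑ i : Fin w, ∑ b : Fin q, (if emb i b ∈ T then (1:ℝ) else 0)
          = ∑ p : Fin w × Fin q, (if emb p.1 p.2 ∈ T then (1:ℝ) else 0) := by
        rw [Fintype.sum_prod_type]
      rw [h1, Finset.sum_boole]
      have h2 : (univ.filter fun p : Fin w × Fin q => emb p.1 p.2 ∈ T).card ≤ T.card := by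
        apply Finset.card_le_card_of_injOn (fun p => emb p.1 p.2)
        · intro p hp
          simp only [Finset.mem_coe, Finset.mem_filter] at hp
          exact hp.2
        · intro p _ p' _ h
          obtain ⟨h1', h2'⟩ := hembinj _ _ _ _ h
          exact Prod.ext h1' h2'
      exact_mod_cast h2
    calc ∑ ℓ ∈ L, ((T ∩ S ℓ).card : ℝ)
        ≤ ∑ ℓ ∈ L, ∑ i : Fin w, (if emb i (x (ℓ, i)) ∈ T then (1:ℝ) else 0) :=
          Finset.sum_le_sum (fun ℓ _ => hA ℓ)
      _ = ∑ i : Fin w, ∑ b : Fin q, (∑ ℓ ∈ L, (if x (ℓ, i) = b then (1:ℝ) else 0))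
            * (if emb i b ∈ T then (1:ℝ) else 0) := by
          rw [Finset.sum_congr rfl (fun ℓ _ => Finset.sum_congr rfl (fun i _ => hB ℓ i))]
          rw [Finset.sum_comm]
          apply Finset.sum_congr rfl
          intro i _
          rw [Finset.sum_comm]
          apply Finset.sum_congr rfl
          intro b _
          rw [Finset.sum_mul]
      _ ≤ ∑ i : Fin w, ∑ b : Fin q,
            (θ * (if emb i b ∈ T then (1:ℝ) else 0)
              + max ((∑ ℓ ∈ L, (if x (ℓ, i) = b then (1:ℝ) else 0)) - θ) 0) := by
          apply Finset.sum_le_sum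
          intro i _
          apply Finset.sum_le_sum
          intro b _
          set N := ∑ ℓ ∈ L, (if x (ℓ, i) = b then (1:ℝ) else 0) with hN
          have hNle : N ≤ θ + max (N - θ) 0 := by
            have := le_max_left (N - θ) 0
            linarith
          have hNnn : (0:ℝ) ≤ N := by
            apply Finset.sum_nonneg
            intro ℓ _
            by_cases h : x (ℓ, i) = b <;> simp [h]
          by_cases h : emb i b ∈ T
          · rw [if_pos h]
            have := le_max_right (N - θ) 0
            linarith
          · rw [if_neg h]
            have := le_max_right (N - θ) 0
            linarith
      _ = θ * (∑ i : Fin w, ∑ b : Fin q, (if emb i b ∈ T then (1:ℝ) else 0)) + FL L θ x := by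
          rw [FL]
          rw [Finset.mul_sum]
          rw [← Finset.sum_add_distrib]
          apply Finset.sum_congr rfl
          intro i _
          rw [Finset.mul_sum, ← Finset.sum_add_distrib]
      _ ≤ θ * (T.card : ℝ) + B := by
          have h1 := hx L hL
          have h2 := mul_le_mul_of_nonneg_left hcount hθ
          linarith




/-- There are universal constants `κ > 0` and `C > 0` such that for all positive integers
`n`, `c` with `c ≥ C·n`, setting `ε = n^{-1/3}`, for every `z` with `n ≤ z ≤ 2^{κ·c/n}`
there exist subsets `S_1, …, S_z` of `[c]`, each of size `⌊εc⌋`, such that for every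
`S ⊆ [c]` and every `L ⊆ [z]` of size `n`,
`Σ_{ℓ∈L} |S ∩ S_ℓ| ≤ (|S|/c + 3ε) · εnc`. -/
theorem exists_hard_column_sets :
    ∃ κ : ℝ, 0 < κ ∧ ∃ C : ℝ, 0 < C ∧
      ∀ n c : ℕ, 0 < n → 0 < c → C * n ≤ (c : ℝ) →
        ∀ z : ℕ, n ≤ z → (z : ℝ) ≤ 2 ^ (κ * c / n) →
          ∃ S : Fin z → Finset (Fin c),
            (∀ ℓ, (S ℓ).card = ⌊(n : ℝ) ^ (-(1/3) : ℝ) * c⌋₊) ∧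
            ∀ (T : Finset (Fin c)) (L : Finset (Fin z)), L.card = n →
              (∑ ℓ ∈ L, ((T ∩ S ℓ).card : ℝ)) ≤
                ((T.card : ℝ) / c + 3 * (n : ℝ) ^ (-(1/3) : ℝ)) *
                  ((n : ℝ) ^ (-(1/3) : ℝ) * n * c) := by
  refine ⟨1/4, by norm_num, 100, by norm_num, ?_⟩
  intro n c hn hc hcn z hnz hz2
  set ε : ℝ := (n:ℝ) ^ (-(1/3) : ℝ) with hε
  have hnr : (0:ℝ) < n := by exact_mod_cast hn
  have hn1 : (1:ℝ) ≤ n := by exact_mod_cast hn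
  have hcr : (0:ℝ) < c := by exact_mod_cast hc
  have hzpos : 0 < z := lt_of_lt_of_le hn hnz
  have hεpos : 0 < ε := Real.rpow_pos_of_pos hnr _
  have hεle1 : ε ≤ 1 := Real.rpow_le_one_of_one_le_of_nonpos hn1 (by norm_num)
  have hε3 : ε ^ 3 * n = 1 := by
    rw [hε, ← Real.rpow_natCast ((n:ℝ) ^ (-(1/3):ℝ)) 3, ← Real.rpow_mul (le_of_lt hnr)]
    norm_num
    rw [Real.rpow_neg_one]
    field_simp
  have hεn1 : (1:ℝ) ≤ ε * n := by
    nlinarith [sq_nonneg ε, sq_nonneg (ε - 1), mul_pos hεpos hnr]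
  have hεc1 : (1:ℝ) ≤ ε * c := by
    calc (1:ℝ) ≤ ε * n := hεn1
      _ ≤ ε * (100 * n) := by nlinarith
      _ ≤ ε * c := by nlinarith
  set w := ⌊ε * (c:ℝ)⌋₊ with hw
  have hw1 : 1 ≤ w := by
    rw [hw]
    exact Nat.le_floor (by exact_mod_cast hεc1)
  have hwr : (0:ℝ) < w := by exact_mod_cast hw1
  have hwle : (w:ℝ) ≤ ε * c := Nat.floor_le (by positivity)
  have hwc : w ≤ c := by
    have : (w:ℝ) ≤ (c:ℝ) := le_trans hwle (by nlinarith)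
    exact_mod_cast this
  set q := c / w with hq
  have hq1 : 1 ≤ q := (Nat.one_le_div_iff hw1).2 hwc
  have hqr : (0:ℝ) < q := by exact_mod_cast hq1
  have hwq : w * q ≤ c := by
    rw [hq, mul_comm]
    exact Nat.div_mul_le_self c w
  have hwqr : (w:ℝ) * q ≤ c := by exact_mod_cast hwq
  have hqlb : 1/ε ≤ (q:ℝ) + 1 := by
    have hmod : c < w * q + w := by
      rw [hq]
      have := Nat.div_add_mod c w
      have hmlt := Nat.mod_lt c (show 0 < w from hw1)
      omega
    have hmodr : (c:ℝ) < w * ((q:ℝ) + 1) := by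
      have : (c:ℝ) < (w:ℝ) * q + w := by exact_mod_cast hmod
      linarith [this]
    have h1 : 1/ε ≤ (c:ℝ)/w := by
      rw [div_le_div_iff₀ hεpos hwr]
      linarith [hwle]
    have h2 : (c:ℝ)/w < (q:ℝ) + 1 := by
      rw [div_lt_iff₀ hwr]
      linarith [hmodr]
    linarith
  -- parameters
  set θ : ℝ := ε * n with hθdef
  set B : ℝ := 3 * ε^2 * n * c with hBdef
  set lam : ℝ := ε / 2 with hlamdef
  set s : ℝ := Real.sqrt ((n:ℝ)/q) with hsdef
  set μbar : ℝ := 2 * ε^2 * n * c with hμdef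
  have hspos : 0 < s := Real.sqrt_pos.2 (by positivity)
  -- sqrt facts
  set sn : ℝ := Real.sqrt n with hsn
  set sq2 : ℝ := Real.sqrt q with hsq2
  have hsnpos : 0 < sn := Real.sqrt_pos.2 hnr
  have hsqpos : 0 < sq2 := Real.sqrt_pos.2 hqr
  have hsn2 : sn ^ 2 = n := Real.sq_sqrt (le_of_lt hnr)
  have hsq22 : sq2 ^ 2 = q := Real.sq_sqrt (le_of_lt hqr)
  have hsval : s = sn / sq2 := by
    rw [hsdef, Real.sqrt_div (le_of_lt hnr)]
  -- the mean bound
  have hμbar : ((w:ℝ)*n)/(2*s) + ((w:ℝ)*q)*(s/2) + ((w:ℝ)*q) * max ((n:ℝ)/q - θ) 0 ≤ μbar := by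
    have ht12 : ((w:ℝ)*n)/(2*s) + ((w:ℝ)*q)*(s/2) = (w:ℝ) * sn * sq2 := by
      rw [hsval, ← hsn2, ← hsq22]
      field_simp
      ring
    have hsq : ((w:ℝ) * sn * sq2)^2 ≤ (ε^2 * n * c)^2 := by
      have e1 : ((w:ℝ) * sn * sq2)^2 = (w:ℝ) * ((w:ℝ)*q) * n := by
        rw [mul_pow, mul_pow, hsn2, hsq22]
        ring
      have e2 : (ε^2 * n * c)^2 = (ε^3 * n) * (ε * n * c^2) := by ring
      rw [e1, e2, hε3, one_mul]
      calc (w:ℝ) * ((w:ℝ)*q) * n ≤ (ε * c) * c * n := by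
            apply mul_le_mul_of_nonneg_right _ (le_of_lt hnr)
            apply mul_le_mul hwle hwqr (by positivity) (by positivity)
        _ = ε * n * c^2 := by ring
    have ht12b : (w:ℝ) * sn * sq2 ≤ ε^2 * n * c := by
      have h1 := Real.sqrt_le_sqrt hsq
      rwa [Real.sqrt_sq (by positivity), Real.sqrt_sq (by positivity)] at h1
    have ht3 : ((w:ℝ)*q) * max ((n:ℝ)/q - θ) 0 ≤ ε^2 * n * c := by
      have hmaxle : max ((n:ℝ)/q - θ) 0 ≤ ε * n / q := by
        have hkey : (n:ℝ) ≤ ε * n * ((q:ℝ) + 1) := by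
          have h4 := mul_le_mul_of_nonneg_left hqlb (le_of_lt (mul_pos hεpos hnr))
          calc (n:ℝ) = ε * n * (1/ε) := by field_simp
            _ ≤ ε * n * ((q:ℝ) + 1) := h4
        have h5 : (n:ℝ)/q ≤ ε * n * ((q:ℝ)+1) / q := by gcongr
        have h6 : ε * n * ((q:ℝ)+1) / q = ε * n / q + ε * n := by
          field_simp
          ring
        apply max_le
        · rw [hθdef]
          rw [h6] at h5
          linarith
        · positivity
      calc ((w:ℝ)*q) * max ((n:ℝ)/q - θ) 0 ≤ ((w:ℝ)*q) * (ε * n / q) := by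
            apply mul_le_mul_of_nonneg_left hmaxle (by positivity)
        _ = (w:ℝ) * (ε * n) := by field_simp
        _ ≤ (ε * c) * (ε * n) := by nlinarith
        _ = ε^2 * n * c := by ring
    rw [ht12, hμdef]
    linarith
  -- the final counting inequality
  have hfinal : (z.choose n : ℝ) *
      Real.exp (lam * μbar + lam ^ 2 * ((n:ℝ)*(w:ℝ)) - lam * B) < 1 := by
    have hexpo : lam * μbar + lam ^ 2 * ((n:ℝ)*(w:ℝ)) - lam * B ≤ -(c/4) := by
      rw [hlamdef, hμdef, hBdef]
      have h1 : (ε/2) * (2 * ε^2 * n * c) = (ε^3 * n) * c := by ring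
      have h2 : (ε/2) * (3 * ε^2 * n * c) = (3/2) * ((ε^3 * n) * c) := by ring
      have h3 : (ε/2)^2 * ((n:ℝ)*(w:ℝ)) ≤ c/4 := by
        calc (ε/2)^2 * ((n:ℝ)*(w:ℝ)) ≤ (ε/2)^2 * ((n:ℝ)*(ε*c)) := by nlinarith
          _ = (ε^3 * n) * c / 4 := by ring
          _ = c / 4 := by rw [hε3]; ring
      rw [h1, h2, hε3]
      linarith
    have hchoose : (z.choose n : ℝ) ≤ (z:ℝ)^n := by
      calc (z.choose n : ℝ) ≤ ((z^n : ℕ) : ℝ) := by exact_mod_cast Nat.choose_le_pow z n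
        _ = (z:ℝ)^n := by push_cast; rfl
    have hzn : (z:ℝ)^n ≤ (2:ℝ) ^ ((c:ℝ)/4) := by
      have hnne : (n:ℝ) ≠ 0 := ne_of_gt hnr
      calc (z:ℝ)^n ≤ ((2:ℝ) ^ ((1/4 : ℝ) * (c:ℝ) / (n:ℝ)))^n := by
            apply pow_le_pow_left₀ (by positivity) hz2
        _ = (2:ℝ) ^ (((1/4 : ℝ) * (c:ℝ) / (n:ℝ)) * (n:ℕ)) := by
            rw [← Real.rpow_natCast ((2:ℝ) ^ ((1/4 : ℝ) * (c:ℝ) / (n:ℝ))) n,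
              ← Real.rpow_mul (by norm_num : (0:ℝ) ≤ 2)]
        _ = (2:ℝ) ^ ((c:ℝ)/4) := by
            congr 1
            field_simp
    have h2c : (2:ℝ) ^ ((c:ℝ)/4) = Real.exp (Real.log 2 * (c/4)) := by
      rw [Real.rpow_def_of_pos (by norm_num)]
    calc (z.choose n : ℝ) * Real.exp (lam * μbar + lam ^ 2 * ((n:ℝ)*(w:ℝ)) - lam * B)
        ≤ (2:ℝ) ^ ((c:ℝ)/4) * Real.exp (-(c/4)) := by
          apply mul_le_mul (le_trans hchoose hzn) (Real.exp_le_exp.2 hexpo)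
            (le_of_lt (Real.exp_pos _)) (by positivity)
      _ = Real.exp (Real.log 2 * (c/4) - c/4) := by
          rw [h2c, ← Real.exp_add, sub_eq_add_neg]
      _ < 1 := by
          rw [Real.exp_lt_one_iff]
          have hlog : Real.log 2 < 1 := by
            have := Real.log_two_lt_d9
            linarith
          nlinarith
  -- apply
  obtain ⟨x, hx⟩ := exists_good hzpos (by exact_mod_cast hw1) (by exact_mod_cast hq1)
    θ B lam s μbar (by positivity) (by rw [hlamdef]; linarith) hspos hμbar hfinal
  obtain ⟨S, hScard, hSbound⟩ := construct hc (by exact_mod_cast hq1) hwq θ B (by positivity) x hx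
  refine ⟨S, fun ℓ => hScard ℓ, ?_⟩
  intro T L hL
  have hRHS : θ * (T.card:ℝ) + B = ((T.card : ℝ) / c + 3 * ε) * (ε * n * c) := by
    rw [hθdef, hBdef]
    field_simp
  calc ∑ ℓ ∈ L, ((T ∩ S ℓ).card : ℝ) ≤ θ * T.card + B := hSbound T L hL
    _ = ((T.card : ℝ) / c + 3 * ε) * (ε * n * c) := hRHS
end

section
/- For every positive integer n and all reals p, δ ∈ (0,1) there exist constants κ > 0 and c₀ (depending only on n, p, δ) such that for every integer c ≥ c₀ and every integer z with n ≤ z ≤ 2^{κc} there exist subsets S_1, …, S_z ⊆ [c] with (1−δ)pc ≤ |S_ℓ| ≤ (1+δ)pc for every ℓ ∈ [z], and such that for every pair of disjoint sets K, L ⊆ [z] with |K| + |L| = n, |(∩_{ℓ∈K} ([c] ∖ S_ℓ)) ∩ (∩_{ℓ∈L} S_ℓ)| ≤ (1+δ)·(1−p)^{|K|}·p^{|L|}·c. -/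
open Finset Real

lemma sum_exp_count {c : ℕ} {α : Type*} [Fintype α] [DecidableEq α]
    (P : α → Prop) [DecidablePred P] (t : ℝ) :
    ∑ ω : Fin c → α, Real.exp (t * ((Finset.univ.filter fun j => P (ω j)).card : ℝ)) =
      (∑ x : α, (if P x then Real.exp t else 1)) ^ c := by
  rw [Fintype.sum_pow]
  apply Finset.sum_congr rfl
  intro ω _
  rw [mul_comm, Real.exp_nat_mul]
  rw [← Finset.prod_const, Finset.prod_filter]

lemma count_tail_le {c : ℕ} {α : Type*} [Fintype α] [DecidableEq α]
    (P : α → Prop) [DecidablePred P] (t a : ℝ)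
    (Q : ℕ → Prop) [DecidablePred Q]
    (hQ : ∀ m : ℕ, Q m → a ≤ t * m) :
    ((Finset.univ.filter fun ω : Fin c → α =>
        Q ((Finset.univ.filter fun j => P (ω j)).card)).card : ℝ) ≤
      Real.exp (-a) * (∑ x : α, (if P x then Real.exp t else 1)) ^ c := by
  rw [← sum_exp_count P t, Finset.mul_sum]
  calc ((Finset.univ.filter fun ω : Fin c → α =>
        Q ((Finset.univ.filter fun j => P (ω j)).card)).card : ℝ)
      = ∑ ω ∈ (Finset.univ.filter fun ω : Fin c → α =>
        Q ((Finset.univ.filter fun j => P (ω j)).card)), (1:ℝ) := by simp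
    _ ≤ ∑ ω ∈ (Finset.univ.filter fun ω : Fin c → α =>
        Q ((Finset.univ.filter fun j => P (ω j)).card)),
          Real.exp (-a) * Real.exp (t * ((Finset.univ.filter fun j => P (ω j)).card : ℝ)) := by
        apply Finset.sum_le_sum
        intro ω hω
        rw [Finset.mem_filter] at hω
        rw [← Real.exp_add]
        have := hQ _ hω.2
        nlinarith [Real.add_one_le_exp (-a + t * ((Finset.univ.filter fun j => P (ω j)).card : ℝ))]
    _ ≤ ∑ ω : Fin c → α,
          Real.exp (-a) * Real.exp (t * ((Finset.univ.filter fun j => P (ω j)).card : ℝ)) := by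
        apply Finset.sum_le_sum_of_subset_of_nonneg (Finset.filter_subset _ _)
        intros; positivity

lemma sum_ite_exp {α : Type*} [Fintype α] [DecidableEq α]
    (P : α → Prop) [DecidablePred P] (t r : ℝ)
    (hr : ((Finset.univ.filter P).card : ℝ) = r * Fintype.card α) :
    ∑ x : α, (if P x then Real.exp t else 1) =
      (Fintype.card α : ℝ) * (1 - r + r * Real.exp t) := by
  classical
  rw [Finset.sum_ite, Finset.sum_const, Finset.sum_const, nsmul_eq_mul, nsmul_eq_mul]
  have hc := Finset.card_filter_add_card_filter_not
    (s := (Finset.univ : Finset α)) (p := P)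
  rw [Finset.card_univ] at hc
  have hc' : ((Finset.univ.filter P).card : ℝ)
      + ((Finset.univ.filter fun x => ¬ P x).card : ℝ) = (Fintype.card α : ℝ) := by
    exact_mod_cast congrArg (Nat.cast (R := ℝ)) hc
  have h2 : ((Finset.univ.filter fun x => ¬ P x).card : ℝ)
      = (Fintype.card α : ℝ) - r * Fintype.card α := by linarith
  rw [hr, h2]; ring

/-- Upper Chernoff tail. -/
lemma event_bound_upper {c : ℕ} {α : Type*} [Fintype α] [DecidableEq α]
    (P : α → Prop) [DecidablePred P] (r ε a : ℝ)
    (hr : ((Finset.univ.filter P).card : ℝ) = r * Fintype.card α)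
    (hr0 : 0 ≤ r) (hε : 0 < ε) (ha : (1 + ε) * r * c ≤ a) :
    ((Finset.univ.filter fun ω : Fin c → α =>
        a ≤ (((Finset.univ.filter fun j => P (ω j)).card : ℝ))).card : ℝ) ≤
      (Fintype.card α : ℝ) ^ c *
        Real.exp (-(c * r * ((1 + ε) * Real.log (1 + ε) - ε))) := by
  classical
  set t := Real.log (1 + ε) with ht
  have ht0 : 0 ≤ t := Real.log_nonneg (by linarith)
  have het : Real.exp t = 1 + ε := Real.exp_log (by linarith)
  have key := count_tail_le (c := c) P t (t * a) (fun m => a ≤ (m : ℝ))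
    (fun m hm => by nlinarith)
  rw [sum_ite_exp P t r hr, het] at key
  refine key.trans ?_
  have h1 : (1 - r + r * (1 + ε)) = 1 + r * ε := by ring
  rw [h1, mul_pow]
  have e1 : (1 + r * ε) ^ c ≤ Real.exp ((c : ℝ) * (r * ε)) := by
    rw [Real.exp_nat_mul]
    exact pow_le_pow_left₀ (by positivity)
      (by linarith [Real.add_one_le_exp (r * ε)]) c
  have e2 : Real.exp (-(t * a)) ≤ Real.exp (-(t * ((1 + ε) * r * c))) := by
    apply Real.exp_le_exp.mpr
    nlinarith
  calc Real.exp (-(t * a)) * ((Fintype.card α : ℝ) ^ c * (1 + r * ε) ^ c)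
      ≤ Real.exp (-(t * ((1 + ε) * r * c))) * ((Fintype.card α : ℝ) ^ c
          * Real.exp ((c : ℝ) * (r * ε))) := by
        apply mul_le_mul e2 (by apply mul_le_mul_of_nonneg_left e1 (by positivity))
          (by positivity) (Real.exp_nonneg _)
    _ = (Fintype.card α : ℝ) ^ c *
        Real.exp (-(c * r * ((1 + ε) * t - ε))) := by
        rw [mul_left_comm, ← Real.exp_add]
        congr 1
        ring

/-- Lower Chernoff tail. -/
lemma event_bound_lower {c : ℕ} {α : Type*} [Fintype α] [DecidableEq α]
    (P : α → Prop) [DecidablePred P] (r ε a : ℝ)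
    (hr : ((Finset.univ.filter P).card : ℝ) = r * Fintype.card α)
    (hr0 : 0 ≤ r) (hε : 0 < ε) (hε1 : ε < 1) (hrε : r * ε ≤ 1)
    (ha : a ≤ (1 - ε) * r * c) :
    ((Finset.univ.filter fun ω : Fin c → α =>
        (((Finset.univ.filter fun j => P (ω j)).card : ℝ)) ≤ a).card : ℝ) ≤
      (Fintype.card α : ℝ) ^ c *
        Real.exp (-(c * r * (ε + (1 - ε) * Real.log (1 - ε)))) := by
  classical
  set t := Real.log (1 - ε) with ht
  have ht0 : t ≤ 0 := Real.log_nonpos (by linarith) (by linarith)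
  have het : Real.exp t = 1 - ε := Real.exp_log (by linarith)
  have key := count_tail_le (c := c) P t (t * a) (fun m => (m : ℝ) ≤ a)
    (fun m hm => by nlinarith)
  rw [sum_ite_exp P t r hr, het] at key
  refine key.trans ?_
  have h1 : (1 - r + r * (1 - ε)) = 1 - r * ε := by ring
  rw [h1, mul_pow]
  have e1 : (1 - r * ε) ^ c ≤ Real.exp ((c : ℝ) * (-(r * ε))) := by
    rw [Real.exp_nat_mul]
    apply pow_le_pow_left₀ (by linarith)
      (by linarith [Real.add_one_le_exp (-(r * ε))]) c
  have e2 : Real.exp (-(t * a)) ≤ Real.exp (-(t * ((1 - ε) * r * c))) := by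
    apply Real.exp_le_exp.mpr
    nlinarith
  calc Real.exp (-(t * a)) * ((Fintype.card α : ℝ) ^ c * (1 - r * ε) ^ c)
      ≤ Real.exp (-(t * ((1 - ε) * r * c))) * ((Fintype.card α : ℝ) ^ c
          * Real.exp ((c : ℝ) * (-(r * ε)))) := by
        apply mul_le_mul e2 (by apply mul_le_mul_of_nonneg_left e1 (by positivity))
          (mul_nonneg (by positivity) (pow_nonneg (by linarith) c)) (Real.exp_nonneg _)
    _ = (Fintype.card α : ℝ) ^ c *
        Real.exp (-(c * r * (ε + (1 - ε) * t))) := by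
        rw [mul_left_comm, ← Real.exp_add]
        congr 1
        ring

lemma card_lt_filter {M k : ℕ} (hk : k ≤ M) :
    ((Finset.univ.filter fun v : Fin M => (v : ℕ) < k).card) = k := by
  have : (Finset.univ.filter fun v : Fin M => (v : ℕ) < k)
      = Finset.map (Fin.castLEEmb hk) Finset.univ := by
    ext v
    simp only [Finset.mem_filter, Finset.mem_univ, true_and, Finset.mem_map]
    constructor
    · intro h; exact ⟨⟨v, h⟩, rfl⟩
    · rintro ⟨a, -, rfl⟩; exact a.2
  rw [this, Finset.card_map, Finset.card_univ, Fintype.card_fin]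

lemma card_pattern {z M k : ℕ} (hM : 0 < M) (hk : k ≤ M)
    (K L : Finset (Fin z)) (hd : Disjoint K L) :
    ((Finset.univ.filter fun x : Fin z → Fin M =>
        (∀ ℓ ∈ K, ¬ ((x ℓ : ℕ) < k)) ∧ (∀ ℓ ∈ L, (x ℓ : ℕ) < k)).card : ℝ) =
      ((1 - (k : ℝ) / M) ^ K.card * ((k : ℝ) / M) ^ L.card)
        * (Fintype.card (Fin z → Fin M)) := by
  classical
  set G : Fin z → Finset (Fin M) := fun ℓ =>
    if ℓ ∈ K then Finset.univ.filter (fun v : Fin M => ¬ (v : ℕ) < k)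
    else if ℓ ∈ L then Finset.univ.filter (fun v : Fin M => (v : ℕ) < k)
    else Finset.univ with hG
  have hfil : (Finset.univ.filter fun x : Fin z → Fin M =>
      (∀ ℓ ∈ K, ¬ ((x ℓ : ℕ) < k)) ∧ (∀ ℓ ∈ L, (x ℓ : ℕ) < k))
      = Fintype.piFinset G := by
    ext x
    simp only [Finset.mem_filter, Finset.mem_univ, true_and, Fintype.mem_piFinset]
    constructor
    · rintro ⟨h1, h2⟩ ℓ
      by_cases hK : ℓ ∈ K
      · simp only [hG, hK, if_true, Finset.mem_filter, Finset.mem_univ, true_and]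
        exact h1 ℓ hK
      · by_cases hL : ℓ ∈ L
        · simp only [hG, hK, hL, if_false, if_true, Finset.mem_filter, Finset.mem_univ, true_and]
          exact h2 ℓ hL
        · simp [hG, hK, hL]
    · intro h
      constructor
      · intro ℓ hℓ
        have := h ℓ
        simp only [hG, hℓ, if_true, Finset.mem_filter, Finset.mem_univ, true_and] at this
        exact this
      · intro ℓ hℓ
        have hK : ℓ ∉ K := fun hK => (Finset.disjoint_left.mp hd hK) hℓ
        have := h ℓ
        simp only [hG, hK, hℓ, if_false, if_true, Finset.mem_filter, Finset.mem_univ,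
          true_and] at this
        exact this
  rw [hfil, Fintype.card_piFinset]
  have hcard : ∀ ℓ, ((G ℓ).card : ℝ) =
      if ℓ ∈ K then ((M : ℝ) - k) else if ℓ ∈ L then (k : ℝ) else (M : ℝ) := by
    intro ℓ
    by_cases hK : ℓ ∈ K
    · simp only [hG, hK, if_true]
      have h1 := Finset.card_filter_add_card_filter_not
        (s := (Finset.univ : Finset (Fin M))) (p := fun v : Fin M => (v : ℕ) < k)
      rw [card_lt_filter hk, Finset.card_univ, Fintype.card_fin] at h1
      have h2 : (Finset.univ.filter fun v : Fin M => ¬ (v : ℕ) < k).card = M - k := by omega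
      rw [h2, Nat.cast_sub hk]
    · by_cases hL : ℓ ∈ L
      · simp only [hG, hK, hL, if_false, if_true, card_lt_filter hk]
      · simp [hG, hK, hL]
  push_cast
  rw [Finset.prod_congr rfl (fun ℓ _ => hcard ℓ)]
  -- split the product
  have hLsub : L ⊆ Finset.univ \ K := by
    intro ℓ hℓ
    simp only [Finset.mem_sdiff, Finset.mem_univ, true_and]
    exact fun hK => (Finset.disjoint_left.mp hd hK) hℓ
  rw [← Finset.prod_sdiff (Finset.subset_univ K), ← Finset.prod_sdiff hLsub]
  have e1 : ∏ ℓ ∈ K, (if ℓ ∈ K then ((M : ℝ) - k) else if ℓ ∈ L then (k : ℝ) else (M : ℝ))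
      = ((M : ℝ) - k) ^ K.card :=
    (Finset.prod_congr rfl (fun ℓ hℓ => by simp [hℓ])).trans (Finset.prod_const _)
  have e2 : ∏ ℓ ∈ L, (if ℓ ∈ K then ((M : ℝ) - k) else if ℓ ∈ L then (k : ℝ) else (M : ℝ))
      = (k : ℝ) ^ L.card :=
    (Finset.prod_congr rfl (fun ℓ hℓ => by
      have hK : ℓ ∉ K := fun hK => (Finset.disjoint_left.mp hd hK) hℓ
      simp [hK, hℓ])).trans (Finset.prod_const _)
  have e3 : ∏ ℓ ∈ (Finset.univ \ K) \ L,
      (if ℓ ∈ K then ((M : ℝ) - k) else if ℓ ∈ L then (k : ℝ) else (M : ℝ))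
      = (M : ℝ) ^ (z - K.card - L.card) := by
    have e3' : ∀ ℓ ∈ (Finset.univ \ K) \ L,
        (if ℓ ∈ K then ((M : ℝ) - k) else if ℓ ∈ L then (k : ℝ) else (M : ℝ))
          = (fun _ : Fin z => (M : ℝ)) ℓ := by
      intro ℓ hℓ
      simp only [Finset.mem_sdiff, Finset.mem_univ, true_and] at hℓ
      simp [hℓ.1, hℓ.2]
    rw [(Finset.prod_congr rfl e3').trans (Finset.prod_const _)]
    congr 1
    rw [Finset.card_sdiff_of_subset hLsub, Finset.card_sdiff_of_subset (Finset.subset_univ K),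
      Finset.card_univ, Fintype.card_fin]
  rw [e1, e2, e3]
  have hab : K.card + L.card ≤ z := by
    have := Finset.card_le_card (Finset.subset_univ (K ∪ L))
    rw [Finset.card_union_of_disjoint hd, Finset.card_univ, Fintype.card_fin] at this
    exact this
  have hMne : (M : ℝ) ≠ 0 := Nat.cast_ne_zero.mpr hM.ne'
  have hcardfun : (Fintype.card (Fin z → Fin M) : ℝ) = (M : ℝ) ^ z := by
    rw [Fintype.card_fun, Fintype.card_fin, Fintype.card_fin]; push_cast; ring
  rw [hcardfun]
  have hMz : (M : ℝ) ^ z = (M : ℝ) ^ (K.card) * (M : ℝ) ^ (L.card)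
      * (M : ℝ) ^ (z - K.card - L.card) := by
    rw [← pow_add, ← pow_add]; congr 1; omega
  rw [hMz]
  rw [one_sub_div hMne, div_pow, div_pow]
  field_simp

lemma phi_pos {ε : ℝ} (hε : 0 < ε) : 0 < (1 + ε) * Real.log (1 + ε) - ε := by
  have h := Real.log_lt_sub_one_of_pos (x := (1 + ε)⁻¹) (by positivity)
    (by intro h; rw [inv_eq_one] at h; linarith)
  rw [Real.log_inv] at h
  have h1 : (1 + ε)⁻¹ = 1 / (1 + ε) := by ring
  rw [h1] at h
  have h2 : (0:ℝ) < 1 + ε := by linarith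
  have h3 : Real.log (1 + ε) > 1 - 1 / (1 + ε) := by linarith
  have h4 : (1 + ε) * (1 - 1 / (1 + ε)) = ε := by field_simp; ring
  nlinarith [mul_lt_mul_of_pos_left h3 h2]

lemma psi_pos {ε : ℝ} (hε : 0 < ε) (hε1 : ε < 1) :
    0 < ε + (1 - ε) * Real.log (1 - ε) := by
  have h := Real.log_lt_sub_one_of_pos (x := (1 - ε)⁻¹) (inv_pos.mpr (by linarith))
    (by intro h; rw [inv_eq_one] at h; linarith)
  rw [Real.log_inv] at h
  have h1 : (1 - ε)⁻¹ = 1 / (1 - ε) := by ring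
  rw [h1] at h
  have h2 : (0:ℝ) < 1 - ε := by linarith
  have h3 : Real.log (1 - ε) > 1 - 1 / (1 - ε) := by linarith
  have h4 : (1 - ε) * (1 - 1 / (1 - ε)) = -ε := by field_simp; ring
  nlinarith [mul_lt_mul_of_pos_left h3 h2]

lemma pair_card_bound (z n : ℕ) :
    (((Finset.univ ×ˢ Finset.univ : Finset (Finset (Fin z) × Finset (Fin z))).filter
        fun q => Disjoint q.1 q.2 ∧ q.1.card + q.2.card = n).card : ℝ)
      ≤ (n + 1) * (z : ℝ) ^ n := by
  have hnat : ((Finset.univ ×ˢ Finset.univ : Finset (Finset (Fin z) × Finset (Fin z))).filter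
        fun q => Disjoint q.1 q.2 ∧ q.1.card + q.2.card = n).card ≤ (n + 1) * z ^ n := by
    set F : ℕ → Finset (Finset (Fin z) × Finset (Fin z)) := fun i =>
      (Finset.univ.powersetCard i) ×ˢ (Finset.univ.powersetCard (n - i)) with hF
    have hsub : ((Finset.univ ×ˢ Finset.univ : Finset (Finset (Fin z) × Finset (Fin z))).filter
          fun q => Disjoint q.1 q.2 ∧ q.1.card + q.2.card = n)
        ⊆ (Finset.range (n + 1)).biUnion F := by
      intro q hq
      simp only [Finset.mem_filter] at hq
      obtain ⟨-, -, hcard⟩ := hq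
      refine Finset.mem_biUnion.mpr ⟨q.1.card, ?_, ?_⟩
      · simp only [Finset.mem_range]; omega
      · rw [hF]; rw [Finset.mem_product]
        exact ⟨Finset.mem_powersetCard_univ.mpr rfl,
          Finset.mem_powersetCard_univ.mpr (by omega)⟩
    refine (Finset.card_le_card hsub).trans
      ((Finset.card_biUnion_le (s := Finset.range (n + 1)) (t := F)).trans ?_)
    have hterm : ∀ i ∈ Finset.range (n + 1), (F i).card ≤ z ^ n := by
      intro i hi
      rw [Finset.mem_range] at hi
      rw [hF]
      rw [Finset.card_product, Finset.card_powersetCard, Finset.card_powersetCard,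
        Finset.card_univ, Fintype.card_fin]
      have h1 : z.choose i * z.choose (n - i) ≤ z ^ i * z ^ (n - i) :=
        Nat.mul_le_mul (Nat.choose_le_pow z i) (Nat.choose_le_pow z (n - i))
      have h2 : z ^ i * z ^ (n - i) = z ^ n := by
        rw [← pow_add]; congr 1; omega
      omega
    calc ∑ i ∈ Finset.range (n + 1), (F i).card
        ≤ ∑ _i ∈ Finset.range (n + 1), z ^ n := Finset.sum_le_sum hterm
      _ = (n + 1) * z ^ n := by rw [Finset.sum_const, Finset.card_range, smul_eq_mul]
  calc (((Finset.univ ×ˢ Finset.univ : Finset (Finset (Fin z) × Finset (Fin z))).filter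
        fun q => Disjoint q.1 q.2 ∧ q.1.card + q.2.card = n).card : ℝ)
      ≤ (((n + 1) * z ^ n : ℕ) : ℝ) := by exact_mod_cast hnat
    _ = (n + 1) * (z : ℝ) ^ n := by push_cast; ring

lemma key1_aux {p δ u p' : ℝ} (hp0 : 0 < p) (hδ0 : 0 < δ) (hδ1 : δ < 1)
    (hu : u ≤ 1 + δ/3) (hu1 : 1 < u) (hp'u : p' ≤ p * u) :
    (1 + δ/3) * p' ≤ (1 + δ) * p := by
  nlinarith [mul_le_mul_of_nonneg_left hp'u (by linarith : (0:ℝ) ≤ 1 + δ/3),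
    mul_le_mul_of_nonneg_left hu (by positivity : (0:ℝ) ≤ p * (1 + δ/3)),
    mul_nonneg (mul_nonneg hp0.le hδ0.le) (by linarith : (0:ℝ) ≤ 3 - δ)]

lemma key3_aux {p' δ : ℝ} (h1 : p' < 1) (h2 : 0 < p') (hδ0 : 0 < δ) (hδ1 : δ < 1) :
    p' * δ ≤ 1 := by nlinarith

lemma sq_third_aux {X δ : ℝ} (hX : 0 ≤ X) (hδ0 : 0 < δ) (hδ1 : δ < 1) :
    (1 + δ/3) * (X * (1 + δ/3)) ≤ (1 + δ) * X := by
  nlinarith [mul_nonneg (mul_nonneg hX hδ0.le) (by linarith : (0:ℝ) ≤ 3 - δ)]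

set_option maxHeartbeats 2000000 in
/-- For every positive `n` and reals `p, δ ∈ (0,1)` there are constants `κ > 0` and `c₀`
such that for every `c ≥ c₀` and every `z` with `n ≤ z ≤ 2^{κc}` there exist subsets
`S_1, …, S_z ⊆ [c]` of size between `(1−δ)pc` and `(1+δ)pc` such that for all disjoint
`K, L ⊆ [z]` with `|K| + |L| = n`, the number of `j ∈ [c]` lying outside every `S_ℓ`
for `ℓ ∈ K` and inside every `S_ℓ` for `ℓ ∈ L` is at most
`(1+δ)·(1−p)^{|K|}·p^{|L|}·c`. -/
theorem exists_balanced_column_sets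
    (n : ℕ) (hn : 0 < n) (p δ : ℝ)
    (hp : p ∈ Set.Ioo (0 : ℝ) 1) (hδ : δ ∈ Set.Ioo (0 : ℝ) 1) :
    ∃ κ : ℝ, 0 < κ ∧ ∃ c₀ : ℕ, ∀ c : ℕ, c₀ ≤ c →
      ∀ z : ℕ, n ≤ z → (z : ℝ) ≤ 2 ^ (κ * c) →
        ∃ S : Fin z → Finset (Fin c),
          (∀ ℓ, (1 - δ) * p * c ≤ ((S ℓ).card : ℝ) ∧ ((S ℓ).card : ℝ) ≤ (1 + δ) * p * c) ∧
          ∀ K L : Finset (Fin z), Disjoint K L → K.card + L.card = n →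
            ((Finset.univ.filter (fun j : Fin c =>
                (∀ ℓ ∈ K, j ∉ S ℓ) ∧ (∀ ℓ ∈ L, j ∈ S ℓ))).card : ℝ) ≤
              (1 + δ) * (1 - p) ^ K.card * p ^ L.card * c := by
  classical
  obtain ⟨hp0, hp1⟩ := hp
  obtain ⟨hδ0, hδ1⟩ := hδ
  have hn' : (0:ℝ) < n := by exact_mod_cast hn
  obtain ⟨u, hu⟩ : ∃ x : ℝ, x = (1 + δ/3) ^ ((n:ℝ)⁻¹) := ⟨_, rfl⟩
  have hu1 : 1 < u := by
    rw [hu, Real.one_lt_rpow_iff_of_pos (by linarith)]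
    exact Or.inl ⟨by linarith, by positivity⟩
  have hun : u ^ n = 1 + δ/3 := by
    rw [hu, ← Real.rpow_natCast ((1 + δ/3) ^ ((n:ℝ)⁻¹)) n, ← Real.rpow_mul (by linarith),
      inv_mul_cancel₀ (by positivity : (n:ℝ) ≠ 0), Real.rpow_one]
  have hun1 : u ≤ 1 + δ/3 := by
    calc u ≤ u ^ n := le_self_pow₀ hu1.le hn.ne'
      _ = 1 + δ/3 := hun
  -- choose the discretisation M and threshold k
  obtain ⟨M, hM⟩ := exists_nat_gt (max (1/(p*(u-1))) (1/(1-p)))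
  have hM1 : 1/(p*(u-1)) < M := lt_of_le_of_lt (le_max_left _ _) hM
  have hM2 : 1/(1-p) < M := lt_of_le_of_lt (le_max_right _ _) hM
  have hup : (0:ℝ) < u - 1 := by linarith
  have hMpos : (0:ℝ) < M := lt_trans (div_pos one_pos (by linarith)) hM2
  have hM0 : 0 < M := by exact_mod_cast hMpos
  obtain ⟨k, hk1, hk2⟩ : ∃ k : ℕ, p * M ≤ k ∧ (k:ℝ) < p * M + 1 :=
    ⟨⌈p * M⌉₊, Nat.le_ceil _, Nat.ceil_lt_add_one (by positivity)⟩
  have hMa : 1 < p * (u-1) * M := by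
    have := (div_lt_iff₀ (by positivity : (0:ℝ) < p * (u-1))).mp hM1
    nlinarith
  have hMb : 1 < (1-p) * M := by
    have := (div_lt_iff₀ (by linarith : (0:ℝ) < 1-p)).mp hM2
    nlinarith
  have hkM : (k:ℝ) < M := by nlinarith
  have hkMnat : k ≤ M := by
    have : (k:ℝ) ≤ M := hkM.le
    exact_mod_cast this
  obtain ⟨p', hp'def⟩ : ∃ x : ℝ, x = k / M := ⟨_, rfl⟩
  have hp'1 : p ≤ p' := by rw [hp'def, le_div_iff₀ hMpos]; exact hk1
  have hp'u : p' ≤ p * u := by rw [hp'def, div_le_iff₀ hMpos]; nlinarith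
  have hp'lt1 : p' < 1 := by rw [hp'def, div_lt_one hMpos]; exact hkM
  have hp'0 : 0 < p' := lt_of_lt_of_le hp0 hp'1
  have key1 : (1 + δ/3) * p' ≤ (1+δ) * p := key1_aux hp0 hδ0 hδ1 hun1 hu1 hp'u
  have key2 : (1-δ) * p ≤ (1-δ) * p' := mul_le_mul_of_nonneg_left hp'1 (by linarith)
  have key3 : p' * δ ≤ 1 := key3_aux hp'lt1 hp'0 hδ0 hδ1
  obtain ⟨m, hmdef⟩ : ∃ x : ℝ, x = min p' (1 - p') := ⟨_, rfl⟩
  have hm0 : 0 < m := by rw [hmdef]; exact lt_min hp'0 (by linarith)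
  have hm1 : m ≤ 1 := by rw [hmdef]; exact le_trans (min_le_left _ _) hp'lt1.le
  obtain ⟨Φ, hΦdef⟩ : ∃ x : ℝ, x = (1 + δ/3) * Real.log (1 + δ/3) - δ/3 := ⟨_, rfl⟩
  obtain ⟨Ψ, hΨdef⟩ : ∃ x : ℝ, x = δ + (1 - δ) * Real.log (1 - δ) := ⟨_, rfl⟩
  have hΦ0 : 0 < Φ := by rw [hΦdef]; exact phi_pos (by linarith)
  have hΨ0 : 0 < Ψ := by rw [hΨdef]; exact psi_pos hδ0 hδ1
  obtain ⟨γ, hγdef⟩ : ∃ x : ℝ, x = m ^ n * min Φ Ψ := ⟨_, rfl⟩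
  have hγ0 : 0 < γ := by rw [hγdef]; exact mul_pos (pow_pos hm0 n) (lt_min hΦ0 hΨ0)
  have hlog2 : (0:ℝ) < Real.log 2 := Real.log_pos one_lt_two
  obtain ⟨κ, hκdef⟩ : ∃ x : ℝ, x = γ / (2 * n * Real.log 2) := ⟨_, rfl⟩
  have hκ0 : 0 < κ := by rw [hκdef]; exact div_pos hγ0 (by positivity)
  obtain ⟨c₀, hc₀⟩ := exists_nat_gt (2 * Real.log (n+3) / γ)
  refine ⟨κ, hκ0, c₀, ?_⟩
  intro c hc z hzn hzu
  have hz1 : 1 ≤ z := le_trans hn hzn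
  have hcR : 2 * Real.log (n+3) / γ < c := by
    calc 2 * Real.log (n+3) / γ < (c₀ : ℝ) := hc₀
      _ ≤ c := by exact_mod_cast hc
  have hc0 : (0:ℝ) ≤ c := Nat.cast_nonneg c
  -- γ lower bounds for the three kinds of events
  have hmn_le : m ^ n ≤ m := pow_le_of_le_one hm0.le hm1 hn.ne'
  have hm_le_p' : m ≤ p' := by rw [hmdef]; exact min_le_left _ _
  have hγΦup : γ ≤ p' * Φ := by
    have h1 : m ^ n * min Φ Ψ ≤ m * Φ :=
      mul_le_mul hmn_le (min_le_left _ _) (le_min hΦ0.le hΨ0.le) hm0.le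
    have h2 : m * Φ ≤ p' * Φ :=
      mul_le_mul_of_nonneg_right hm_le_p' hΦ0.le
    rw [hγdef]; linarith
  have hγΨ : γ ≤ p' * Ψ := by
    have h1 : m ^ n * min Φ Ψ ≤ m * Ψ :=
      mul_le_mul hmn_le (min_le_right _ _) (le_min hΦ0.le hΨ0.le) hm0.le
    have h2 : m * Ψ ≤ p' * Ψ :=
      mul_le_mul_of_nonneg_right hm_le_p' hΨ0.le
    rw [hγdef]; linarith
  -- the sample space
  have hNE : Nonempty (Fin M) := ⟨⟨0, hM0⟩⟩
  have hApos : 0 < Fintype.card (Fin z → Fin M) :=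
    Fintype.card_pos_iff.mpr ⟨fun _ => Classical.choice hNE⟩
  obtain ⟨A, hAdef⟩ : ∃ x : ℝ, x = (Fintype.card (Fin z → Fin M) : ℝ) := ⟨_, rfl⟩
  have hA0 : (0:ℝ) < A := by rw [hAdef]; exact_mod_cast hApos
  -- event bounds
  have hEup : ∀ ℓ : Fin z,
      ((Finset.univ.filter fun ω : Fin c → Fin z → Fin M =>
        (1+δ)*p*c ≤ (((Finset.univ.filter fun j => ((ω j ℓ : ℕ) < k)).card : ℝ))).card : ℝ)
        ≤ A ^ c * Real.exp (-(γ * c)) := by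
    intro ℓ
    have hr : ((Finset.univ.filter fun x : Fin z → Fin M => (x ℓ : ℕ) < k).card : ℝ)
        = p' * Fintype.card (Fin z → Fin M) := by
      have e : (Finset.univ.filter fun x : Fin z → Fin M => (x ℓ : ℕ) < k)
          = Finset.univ.filter fun x : Fin z → Fin M =>
              (∀ i ∈ (∅ : Finset (Fin z)), ¬ ((x i : ℕ) < k))
                ∧ (∀ i ∈ ({ℓ} : Finset (Fin z)), (x i : ℕ) < k) := by
        ext x; simp
      rw [e, card_pattern hM0 hkMnat ∅ {ℓ} (Finset.disjoint_left.mpr (by simp))]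
      simp [hp'def]
    have hb := event_bound_upper (c := c) (fun x : Fin z → Fin M => (x ℓ : ℕ) < k)
      p' (δ/3) ((1+δ)*p*c) hr hp'0.le (by linarith)
      (mul_le_mul_of_nonneg_right key1 hc0)
    refine hb.trans ?_
    rw [← hAdef]
    apply mul_le_mul_of_nonneg_left _ (pow_nonneg hA0.le c)
    apply Real.exp_le_exp.mpr
    rw [← hΦdef]
    have : γ * c ≤ (p' * Φ) * c := mul_le_mul_of_nonneg_right hγΦup hc0
    linarith
  have hElow : ∀ ℓ : Fin z,
      ((Finset.univ.filter fun ω : Fin c → Fin z → Fin M =>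
        (((Finset.univ.filter fun j => ((ω j ℓ : ℕ) < k)).card : ℝ)) ≤ (1-δ)*p*c).card : ℝ)
        ≤ A ^ c * Real.exp (-(γ * c)) := by
    intro ℓ
    have hr : ((Finset.univ.filter fun x : Fin z → Fin M => (x ℓ : ℕ) < k).card : ℝ)
        = p' * Fintype.card (Fin z → Fin M) := by
      have e : (Finset.univ.filter fun x : Fin z → Fin M => (x ℓ : ℕ) < k)
          = Finset.univ.filter fun x : Fin z → Fin M =>
              (∀ i ∈ (∅ : Finset (Fin z)), ¬ ((x i : ℕ) < k))
                ∧ (∀ i ∈ ({ℓ} : Finset (Fin z)), (x i : ℕ) < k) := by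
        ext x; simp
      rw [e, card_pattern hM0 hkMnat ∅ {ℓ} (Finset.disjoint_left.mpr (by simp))]
      simp [hp'def]
    have hb := event_bound_lower (c := c) (fun x : Fin z → Fin M => (x ℓ : ℕ) < k)
      p' δ ((1-δ)*p*c) hr hp'0.le hδ0 hδ1 key3
      (mul_le_mul_of_nonneg_right key2 hc0)
    refine hb.trans ?_
    rw [← hAdef]
    apply mul_le_mul_of_nonneg_left _ (pow_nonneg hA0.le c)
    apply Real.exp_le_exp.mpr
    rw [← hΨdef]
    have : γ * c ≤ (p' * Ψ) * c := mul_le_mul_of_nonneg_right hγΨ hc0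
    linarith
  have hEpair : ∀ K L : Finset (Fin z), Disjoint K L → K.card + L.card = n →
      ((Finset.univ.filter fun ω : Fin c → Fin z → Fin M =>
        (1+δ)*(1-p)^K.card*p^L.card*c ≤
          (((Finset.univ.filter fun j =>
            (∀ i ∈ K, ¬ ((ω j i : ℕ) < k)) ∧ (∀ i ∈ L, (ω j i : ℕ) < k)).card : ℝ))).card : ℝ)
        ≤ A ^ c * Real.exp (-(γ * c)) := by
    intro K L hd hcard
    obtain ⟨r, hrdef⟩ : ∃ x : ℝ, x = (1 - p')^K.card * p'^L.card := ⟨_, rfl⟩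
    have hr : ((Finset.univ.filter fun x : Fin z → Fin M =>
        (∀ i ∈ K, ¬ ((x i : ℕ) < k)) ∧ (∀ i ∈ L, (x i : ℕ) < k)).card : ℝ)
        = r * Fintype.card (Fin z → Fin M) := by
      rw [card_pattern hM0 hkMnat K L hd, hrdef, hp'def]
    have hr0 : (0:ℝ) ≤ r := by
      rw [hrdef]; apply mul_nonneg <;> apply pow_nonneg <;> linarith
    have hrle : r ≤ (1-p)^K.card * p^L.card * (1 + δ/3) := by
      have s1 : (1 - p')^K.card ≤ (1-p)^K.card :=
        pow_le_pow_left₀ (by linarith) (by linarith) _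
      have s2 : p'^L.card ≤ (p*u)^L.card :=
        pow_le_pow_left₀ hp'0.le hp'u _
      have s3 : (p*u)^L.card = p^L.card * u^L.card := mul_pow _ _ _
      have s4 : u^L.card ≤ u^n := pow_le_pow_right₀ hu1.le (by omega)
      have s5 : p'^L.card ≤ p^L.card * (1 + δ/3) := by
        rw [← hun]
        calc p'^L.card ≤ (p*u)^L.card := s2
          _ = p^L.card * u^L.card := s3
          _ ≤ p^L.card * u^n :=
            mul_le_mul_of_nonneg_left s4 (pow_nonneg hp0.le _)
      calc r = (1 - p')^K.card * p'^L.card := hrdef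
        _ ≤ (1-p)^K.card * (p^L.card * (1 + δ/3)) := by
          apply mul_le_mul s1 s5 (pow_nonneg hp'0.le _) (pow_nonneg (by linarith) _)
        _ = (1-p)^K.card * p^L.card * (1 + δ/3) := by ring
    have hthr : (1 + δ/3) * r * c ≤ (1+δ)*(1-p)^K.card*p^L.card*c := by
      have hpos : (0:ℝ) ≤ (1-p)^K.card * p^L.card :=
        mul_nonneg (pow_nonneg (by linarith) _) (pow_nonneg hp0.le _)
      have h1 : (1 + δ/3) * r ≤ (1 + δ/3) * ((1-p)^K.card * p^L.card * (1 + δ/3)) :=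
        mul_le_mul_of_nonneg_left hrle (by linarith)
      have h2 : (1 + δ/3) * ((1-p)^K.card * p^L.card * (1 + δ/3))
          ≤ (1+δ) * ((1-p)^K.card * p^L.card) := sq_third_aux hpos hδ0 hδ1
      have := mul_le_mul_of_nonneg_right (h1.trans h2) hc0
      calc (1 + δ/3) * r * c ≤ (1+δ) * ((1-p)^K.card * p^L.card) * c := this
        _ = (1+δ)*(1-p)^K.card*p^L.card*c := by ring
    have hb := event_bound_upper (c := c)
      (fun x : Fin z → Fin M => (∀ i ∈ K, ¬ ((x i : ℕ) < k)) ∧ (∀ i ∈ L, (x i : ℕ) < k))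
      r (δ/3) ((1+δ)*(1-p)^K.card*p^L.card*c) hr hr0 (by linarith) hthr
    refine hb.trans ?_
    rw [← hAdef]
    apply mul_le_mul_of_nonneg_left _ (pow_nonneg hA0.le c)
    apply Real.exp_le_exp.mpr
    rw [← hΦdef]
    have hrm : m ^ n ≤ r := by
      rw [hrdef, ← hcard, pow_add, hmdef]
      apply mul_le_mul
      · exact pow_le_pow_left₀ (le_min hp'0.le (by linarith)) (min_le_right _ _) _
      · exact pow_le_pow_left₀ (le_min hp'0.le (by linarith)) (min_le_left _ _) _
      · exact pow_nonneg (le_min hp'0.le (by linarith)) _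
      · exact pow_nonneg (by linarith) _
    have hγr : γ ≤ r * Φ := by
      have : m ^ n * min Φ Ψ ≤ r * Φ :=
        mul_le_mul hrm (min_le_left _ _) (le_min hΦ0.le hΨ0.le) hr0
      rw [hγdef]; linarith
    have : γ * c ≤ (r * Φ) * c := mul_le_mul_of_nonneg_right hγr hc0
    linarith
  -- assemble the bad-event set
  set E1 : Fin z → Finset (Fin c → Fin z → Fin M) := fun ℓ =>
    Finset.univ.filter fun ω : Fin c → Fin z → Fin M =>
      (((Finset.univ.filter fun j => ((ω j ℓ : ℕ) < k)).card : ℝ)) ≤ (1-δ)*p*c with hE1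
  set E2 : Fin z → Finset (Fin c → Fin z → Fin M) := fun ℓ =>
    Finset.univ.filter fun ω : Fin c → Fin z → Fin M =>
      (1+δ)*p*c ≤ (((Finset.univ.filter fun j => ((ω j ℓ : ℕ) < k)).card : ℝ)) with hE2
  set E3 : Finset (Fin z) × Finset (Fin z) → Finset (Fin c → Fin z → Fin M) := fun q =>
    Finset.univ.filter fun ω : Fin c → Fin z → Fin M =>
      (1+δ)*(1-p)^q.1.card*p^q.2.card*c ≤
        (((Finset.univ.filter fun j =>
          (∀ i ∈ q.1, ¬ ((ω j i : ℕ) < k)) ∧ (∀ i ∈ q.2, (ω j i : ℕ) < k)).card : ℝ)) with hE3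
  set Pairs : Finset (Finset (Fin z) × Finset (Fin z)) :=
    (Finset.univ ×ˢ Finset.univ).filter
      (fun q => Disjoint q.1 q.2 ∧ q.1.card + q.2.card = n) with hPairs
  set B : ℝ := A ^ c * Real.exp (-(γ * c)) with hBdef
  have hB0 : 0 ≤ B := by
    rw [hBdef]; exact mul_nonneg (pow_nonneg hA0.le c) (Real.exp_nonneg _)
  have hE1' : ∀ ℓ, ((E1 ℓ).card : ℝ) ≤ B := by
    intro ℓ; simp only [hE1]; rw [hBdef]; exact hElow ℓ
  have hE2' : ∀ ℓ, ((E2 ℓ).card : ℝ) ≤ B := by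
    intro ℓ; simp only [hE2]; rw [hBdef]; exact hEup ℓ
  have hE3' : ∀ q ∈ Pairs, ((E3 q).card : ℝ) ≤ B := by
    intro q hq
    rw [hPairs, Finset.mem_filter] at hq
    obtain ⟨-, hqd, hqc⟩ := hq
    simp only [hE3]; rw [hBdef]
    exact hEpair q.1 q.2 hqd hqc
  set Bad : Finset (Fin c → Fin z → Fin M) :=
    ((Finset.univ : Finset (Fin z)).biUnion fun ℓ => E1 ℓ ∪ E2 ℓ)
      ∪ Pairs.biUnion E3 with hBad
  -- union bound
  have hcount : (Bad.card : ℝ) ≤ (2 * z + (n+1) * (z:ℝ)^n) * B := by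
    have n1 : Bad.card ≤ (((Finset.univ : Finset (Fin z)).biUnion fun ℓ => E1 ℓ ∪ E2 ℓ).card)
        + (Pairs.biUnion E3).card := by rw [hBad]; exact Finset.card_union_le _ _
    have n2 : (((Finset.univ : Finset (Fin z)).biUnion fun ℓ => E1 ℓ ∪ E2 ℓ).card)
        ≤ ∑ ℓ : Fin z, ((E1 ℓ).card + (E2 ℓ).card) :=
      Finset.card_biUnion_le.trans (Finset.sum_le_sum fun ℓ _ => Finset.card_union_le _ _)
    have n3 : (Pairs.biUnion E3).card ≤ ∑ q ∈ Pairs, (E3 q).card := Finset.card_biUnion_le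
    have r1 : ((∑ ℓ : Fin z, ((E1 ℓ).card + (E2 ℓ).card) : ℕ) : ℝ) ≤ (2 * z) * B := by
      push_cast
      calc ∑ ℓ : Fin z, (((E1 ℓ).card : ℝ) + ((E2 ℓ).card : ℝ))
          ≤ ∑ _ℓ : Fin z, (B + B) :=
            Finset.sum_le_sum fun ℓ _ => add_le_add (hE1' ℓ) (hE2' ℓ)
        _ = (2 * z) * B := by
            rw [Finset.sum_const, Finset.card_univ, Fintype.card_fin, nsmul_eq_mul]; ring
    have r2 : ((∑ q ∈ Pairs, (E3 q).card : ℕ) : ℝ) ≤ ((n+1) * (z:ℝ)^n) * B := by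
      push_cast
      calc ∑ q ∈ Pairs, ((E3 q).card : ℝ)
          ≤ ∑ _q ∈ Pairs, B := Finset.sum_le_sum hE3'
        _ = (Pairs.card : ℝ) * B := by rw [Finset.sum_const, nsmul_eq_mul]
        _ ≤ ((n+1) * (z:ℝ)^n) * B := by
            apply mul_le_mul_of_nonneg_right _ hB0
            rw [hPairs]
            exact pair_card_bound z n
    have hcast : (Bad.card : ℝ) ≤
        ((∑ ℓ : Fin z, ((E1 ℓ).card + (E2 ℓ).card) : ℕ) : ℝ)
          + ((∑ q ∈ Pairs, (E3 q).card : ℕ) : ℝ) := by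
      exact_mod_cast Nat.cast_le.mpr (n1.trans (Nat.add_le_add n2 n3))
    calc (Bad.card : ℝ) ≤ _ := hcast
      _ ≤ (2 * z) * B + ((n+1) * (z:ℝ)^n) * B := add_le_add r1 r2
      _ = (2 * z + (n+1) * (z:ℝ)^n) * B := by ring
  have hzzn : (z : ℝ) ≤ (z:ℝ)^n := by
    have : z ≤ z ^ n := Nat.le_self_pow hn.ne' z
    calc (z:ℝ) ≤ ((z ^ n : ℕ) : ℝ) := by exact_mod_cast this
      _ = (z:ℝ)^n := by push_cast; ring
  have hcount2 : (Bad.card : ℝ) ≤ ((n:ℝ)+3) * (z:ℝ)^n * B := by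
    refine hcount.trans ?_
    apply mul_le_mul_of_nonneg_right _ hB0
    calc 2 * (z:ℝ) + ((n:ℝ)+1) * (z:ℝ)^n
        ≤ 2 * (z:ℝ)^n + ((n:ℝ)+1) * (z:ℝ)^n := by linarith only [hzzn]
      _ = ((n:ℝ)+3) * (z:ℝ)^n := by ring
  -- smallness of the bound
  have hzn_exp : (z:ℝ)^n ≤ Real.exp (γ * c / 2) := by
    have h1 : (z:ℝ)^n ≤ ((2:ℝ) ^ (κ * c)) ^ n :=
      pow_le_pow_left₀ (Nat.cast_nonneg z) hzu n
    have h2 : ((2:ℝ) ^ (κ * c)) ^ n = (2:ℝ) ^ (κ * c * n) := by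
      rw [← Real.rpow_natCast ((2:ℝ) ^ (κ * c)) n, ← Real.rpow_mul (by norm_num)]
    have h3 : (2:ℝ) ^ (κ * c * n) = Real.exp (Real.log 2 * (κ * c * n)) :=
      Real.rpow_def_of_pos (by norm_num) _
    have h4 : Real.log 2 * (κ * c * n) = γ * c / 2 := by
      rw [hκdef]
      field_simp
    rw [h2, h3, h4] at h1
    exact h1
  have hsmall : ((n:ℝ)+3) * (z:ℝ)^n * Real.exp (-(γ * c)) < 1 := by
    have e1 : (z:ℝ)^n * Real.exp (-(γ * c)) ≤ Real.exp (-(γ * c / 2)) := by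
      calc (z:ℝ)^n * Real.exp (-(γ * c))
          ≤ Real.exp (γ * c / 2) * Real.exp (-(γ * c)) :=
            mul_le_mul_of_nonneg_right hzn_exp (Real.exp_nonneg _)
        _ = Real.exp (-(γ * c / 2)) := by rw [← Real.exp_add]; congr 1; ring
    have e2 : ((n:ℝ)+3) < Real.exp (γ * c / 2) := by
      have hlogs : Real.log ((n:ℝ)+3) < γ * c / 2 := by
        rw [div_lt_iff₀ hγ0] at hcR
        linarith only [hcR]
      calc ((n:ℝ)+3) = Real.exp (Real.log ((n:ℝ)+3)) := (Real.exp_log (by positivity)).symm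
        _ < Real.exp (γ * c / 2) := Real.exp_lt_exp.mpr hlogs
    calc ((n:ℝ)+3) * (z:ℝ)^n * Real.exp (-(γ * c))
        = ((n:ℝ)+3) * ((z:ℝ)^n * Real.exp (-(γ * c))) := by ring
      _ ≤ ((n:ℝ)+3) * Real.exp (-(γ * c / 2)) :=
          mul_le_mul_of_nonneg_left e1 (by positivity)
      _ < Real.exp (γ * c / 2) * Real.exp (-(γ * c / 2)) :=
          mul_lt_mul_of_pos_right e2 (Real.exp_pos _)
      _ = 1 := by rw [← Real.exp_add]; simp
  have hltA : (Bad.card : ℝ) < A ^ c := by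
    have : ((n:ℝ)+3) * (z:ℝ)^n * B < A ^ c := by
      rw [hBdef]
      calc ((n:ℝ)+3) * (z:ℝ)^n * (A ^ c * Real.exp (-(γ * c)))
          = (((n:ℝ)+3) * ((z:ℝ)^n * Real.exp (-(γ * c)))) * A ^ c := by ring
        _ < 1 * A ^ c := by
            apply mul_lt_mul_of_pos_right _ (pow_pos hA0 c)
            calc ((n:ℝ)+3) * ((z:ℝ)^n * Real.exp (-(γ * c)))
                = ((n:ℝ)+3) * (z:ℝ)^n * Real.exp (-(γ * c)) := by ring
              _ < 1 := hsmall
        _ = A ^ c := one_mul _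
    exact lt_of_le_of_lt hcount2 this
  have hcardΩ : (Fintype.card (Fin c → Fin z → Fin M) : ℝ) = A ^ c := by
    rw [hAdef, Fintype.card_fun, Fintype.card_fin]
    push_cast
    ring
  have hlt : Bad.card < Fintype.card (Fin c → Fin z → Fin M) := by
    have := hltA
    rw [← hcardΩ] at this
    exact_mod_cast this
  have hne : Bad ≠ Finset.univ := by
    intro h
    rw [h, Finset.card_univ] at hlt
    exact lt_irrefl _ hlt
  obtain ⟨ω, hω⟩ : ∃ ω, ω ∉ Bad := by
    by_contra hcon
    push_neg at hcon
    exact hne (Finset.eq_univ_iff_forall.mpr hcon)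
  refine ⟨fun ℓ => Finset.univ.filter (fun j => ((ω j ℓ : ℕ) < k)), ?_, ?_⟩
  · intro ℓ
    have h1 : ω ∉ E1 ℓ := fun h => hω (by
      rw [hBad]
      exact Finset.mem_union_left _ (Finset.mem_biUnion.mpr
        ⟨ℓ, Finset.mem_univ _, Finset.mem_union_left _ h⟩))
    have h2 : ω ∉ E2 ℓ := fun h => hω (by
      rw [hBad]
      exact Finset.mem_union_left _ (Finset.mem_biUnion.mpr
        ⟨ℓ, Finset.mem_univ _, Finset.mem_union_right _ h⟩))
    simp only [hE1, Finset.mem_filter, Finset.mem_univ, true_and, not_le] at h1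
    simp only [hE2, Finset.mem_filter, Finset.mem_univ, true_and, not_le] at h2
    exact ⟨h1.le, h2.le⟩
  · intro K L hd hcard
    have hqmem : (K, L) ∈ Pairs := by
      rw [hPairs, Finset.mem_filter]
      exact ⟨Finset.mem_product.mpr ⟨Finset.mem_univ _, Finset.mem_univ _⟩, hd, hcard⟩
    have h3 : ω ∉ E3 (K, L) := fun h => hω (by
      rw [hBad]
      exact Finset.mem_union_right _ (Finset.mem_biUnion.mpr ⟨(K, L), hqmem, h⟩))
    simp only [hE3, Finset.mem_filter, Finset.mem_univ, true_and, not_le] at h3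
    have heq : (Finset.univ.filter (fun j : Fin c =>
        (∀ ℓ ∈ K, j ∉ Finset.univ.filter (fun j' => ((ω j' ℓ : ℕ) < k)))
          ∧ (∀ ℓ ∈ L, j ∈ Finset.univ.filter (fun j' => ((ω j' ℓ : ℕ) < k)))))
        = Finset.univ.filter (fun j =>
            (∀ i ∈ K, ¬ ((ω j i : ℕ) < k)) ∧ (∀ i ∈ L, (ω j i : ℕ) < k)) := by
      ext j
      simp [Finset.mem_filter]
    rw [heq]
    exact h3.le
end

section
/- For every integer n ≥ 2 there exist constants κ > 0 and m₀ (depending only on n) such that for every integer m ≥ m₀ and every integer z with 1 ≤ z ≤ 2^{κ√m} there exist z ordered partitions A_1, …, A_z of [m], each into n labeled (possibly empty) parts A_{ℓ,1}, …, A_{ℓ,n}, such that for every subset T ⊆ [n] and every injective map ℓ : T → [z], |∪_{i∈T} A_{ℓ(i),i}| ≤ (1 − (1 − 1/n)^{|T|})·m + m^{3/4}. -/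
open Finset Real




lemma count_avoid (n z : ℕ) (T : Finset (Fin n)) (f : Fin n → Fin z)
    (hf : Set.InjOn f ↑T) :
    (Finset.univ.filter (fun c : Fin z → Fin n => ∀ i ∈ T, c (f i) ≠ i)).card
      = (n-1)^T.card * n^(z - T.card) := by
  classical
  have himg : (T.image f).card = T.card := Finset.card_image_of_injOn hf
  have hset : Finset.univ.filter (fun c : Fin z → Fin n => ∀ i ∈ T, c (f i) ≠ i)
      = Fintype.piFinset (fun ℓ => Finset.univ.filter
          (fun v : Fin n => ∀ i ∈ T, f i = ℓ → v ≠ i)) := by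
    ext c
    simp only [Finset.mem_filter, Finset.mem_univ, true_and, Fintype.mem_piFinset]
    constructor
    · intro h ℓ i hi hℓ; subst hℓ; exact h i hi
    · intro h i hi; exact h (f i) i hi rfl
  rw [hset, Fintype.card_piFinset]
  have hcard : ∀ ℓ : Fin z,
      (Finset.univ.filter (fun v : Fin n => ∀ i ∈ T, f i = ℓ → v ≠ i)).card
        = if ℓ ∈ T.image f then n - 1 else n := by
    intro ℓ
    by_cases h : ℓ ∈ T.image f
    · obtain ⟨i₀, hi₀, hfi₀⟩ := Finset.mem_image.mp h
      rw [if_pos h]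
      have heq : Finset.univ.filter (fun v : Fin n => ∀ i ∈ T, f i = ℓ → v ≠ i)
          = Finset.univ.erase i₀ := by
        ext v
        simp only [Finset.mem_filter, Finset.mem_univ, true_and, Finset.mem_erase, and_true]
        constructor
        · intro h'; exact h' i₀ hi₀ hfi₀
        · intro hv i hi hfi hvi
          subst hvi
          exact hv (hf hi hi₀ (hfi.trans hfi₀.symm))
      rw [heq, Finset.card_erase_of_mem (Finset.mem_univ _), Finset.card_univ, Fintype.card_fin]
    · rw [if_neg h]
      have heq : Finset.univ.filter (fun v : Fin n => ∀ i ∈ T, f i = ℓ → v ≠ i)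
          = Finset.univ := by
        ext v
        simp only [Finset.mem_filter, Finset.mem_univ, true_and, iff_true]
        intro i hi hfi
        exact ((h (Finset.mem_image.mpr ⟨i, hi, hfi⟩)).elim : v ≠ i)
      rw [heq, Finset.card_univ, Fintype.card_fin]
  simp_rw [hcard]
  rw [Finset.prod_ite, Finset.prod_const, Finset.prod_const]
  rw [Finset.filter_mem_eq_inter, Finset.univ_inter]
  have hcompl : Finset.univ.filter (fun x => x ∉ T.image f) = (T.image f)ᶜ := by
    ext x; simp [Finset.mem_compl]
  rw [hcompl, Finset.card_compl, Fintype.card_fin, himg]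


set_option maxHeartbeats 1000000 in
lemma chernoff_core (n z m : ℕ) (hn : 2 ≤ n) (hm : 1 ≤ m)
    (T : Finset (Fin n)) (f : Fin n → Fin z) (hf : Set.InjOn f ↑T)
    (B : Finset (Fin m → Fin z → Fin n))
    (hB : ∀ ω ∈ B, (1 - (1 - 1/(n:ℝ))^T.card) * m + (m:ℝ)^((3:ℝ)/4)
        < ((T.biUnion fun i => Finset.univ.filter (fun x => ω x (f i) = i)).card : ℝ)) :
    (B.card : ℝ) ≤ ((n:ℝ)^(z*m)) * Real.exp (-(Real.sqrt m)/4) := by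
  classical
  have hm0 : (0:ℝ) < m := by exact_mod_cast hm
  have hn0 : (0:ℝ) < n := by positivity
  set t := T.card with ht_def
  have ht : t ≤ z := by
    simpa using Finset.card_le_card_of_injOn f (fun a _ => Finset.mem_univ (f a)) hf
  set q : ℝ := (1 - 1/(n:ℝ))^t with hq_def
  set r : ℝ := (m:ℝ)^((1:ℝ)/4) with hr_def
  have hr1 : 1 ≤ r := Real.one_le_rpow (by exact_mod_cast hm) (by norm_num)
  have hr0 : 0 < r := lt_of_lt_of_le one_pos hr1
  have hr4 : r^(4:ℕ) = m := by
    rw [hr_def, ← Real.rpow_natCast ((m:ℝ)^((1:ℝ)/4)) 4, ← Real.rpow_mul hm0.le]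
    norm_num
  have hr3 : (m:ℝ)^((3:ℝ)/4) = r^(3:ℕ) := by
    rw [hr_def, ← Real.rpow_natCast ((m:ℝ)^((1:ℝ)/4)) 3, ← Real.rpow_mul hm0.le]
    norm_num
  have hr2 : Real.sqrt m = r^(2:ℕ) := by
    rw [Real.sqrt_eq_rpow, hr_def, ← Real.rpow_natCast ((m:ℝ)^((1:ℝ)/4)) 2,
      ← Real.rpow_mul hm0.le]
    norm_num
  set lam : ℝ := 1/(2*r) with hlam_def
  have hlam0 : 0 < lam := by positivity
  have hlam1 : lam ≤ 1 := by
    rw [hlam_def, div_le_one (by positivity)]; linarith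
  have hq0 : 0 ≤ q := by
    apply pow_nonneg
    have : 1/(n:ℝ) ≤ 1 := by
      rw [div_le_one hn0]; exact_mod_cast le_trans one_le_two hn
    linarith
  have hq1 : q ≤ 1 := by
    apply pow_le_one₀
    · have : 1/(n:ℝ) ≤ 1 := by
        rw [div_le_one hn0]; exact_mod_cast le_trans one_le_two hn
      linarith
    · have : 0 < 1/(n:ℝ) := by positivity
      linarith
  set K : ℝ := (1 - q) * m + (m:ℝ)^((3:ℝ)/4) with hK_def
  set F : (Fin z → Fin n) → ℝ := fun c => if ∃ i ∈ T, c (f i) = i then Real.exp lam else 1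
    with hF_def
  have hFnonneg : ∀ c, 0 ≤ F c := by
    intro c; rw [hF_def]; dsimp only; split_ifs
    · exact (Real.exp_pos _).le
    · norm_num
  set X : (Fin m → Fin z → Fin n) → ℕ :=
    fun ω => (T.biUnion fun i => Finset.univ.filter (fun x => ω x (f i) = i)).card with hX_def
  -- Step A
  have stepA : ∀ ω : Fin m → Fin z → Fin n, ∏ x : Fin m, F (ω x) = Real.exp lam ^ (X ω) := by
    intro ω
    have hbu : (T.biUnion fun i => Finset.univ.filter (fun x => ω x (f i) = i))
        = Finset.univ.filter (fun x => ∃ i ∈ T, ω x (f i) = i) := by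
      ext x; simp [Finset.mem_biUnion]
    rw [hX_def]; dsimp only
    rw [hbu, hF_def]; dsimp only
    rw [Finset.prod_ite, Finset.prod_const, Finset.prod_const, one_pow, mul_one]
  -- the count of avoiding columns
  set N : ℕ := (Finset.univ.filter (fun c : Fin z → Fin n => ∀ i ∈ T, c (f i) ≠ i)).card
    with hN_def
  have hNval : N = (n-1)^t * n^(z-t) := count_avoid n z T f hf
  have hNle : N ≤ n^z := by
    calc N ≤ Fintype.card (Fin z → Fin n) := Finset.card_filter_le _ _
    _ = n^z := by simp [Fintype.card_fun]
  have hNreal : (N:ℝ) = q * (n:ℝ)^z := by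
    have h1 : ((N:ℕ):ℝ) = ((n:ℝ)-1)^t * (n:ℝ)^(z-t) := by
      rw [hNval]
      push_cast [Nat.cast_sub (le_trans one_le_two hn)]
      ring
    have h2 : (n:ℝ)^z = (n:ℝ)^t * (n:ℝ)^(z-t) := by
      rw [← pow_add, Nat.add_sub_cancel' ht]
    have h3 : (1 - 1/(n:ℝ)) = ((n:ℝ)-1)/n := by field_simp
    rw [h1, hq_def, h3, div_pow, h2]
    field_simp
  -- Step B : column sum
  set colSum : ℝ := ∑ c : Fin z → Fin n, F c with hcol_def
  have hcolval : colSum = ((n^z - N : ℕ) : ℝ) * Real.exp lam + N := by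
    rw [hcol_def, hF_def]
    dsimp only
    rw [Finset.sum_ite, Finset.sum_const, Finset.sum_const, nsmul_eq_mul, nsmul_eq_mul, mul_one]
    have hfn : Finset.univ.filter (fun c : Fin z → Fin n => ¬ ∃ i ∈ T, c (f i) = i)
        = Finset.univ.filter (fun c : Fin z → Fin n => ∀ i ∈ T, c (f i) ≠ i) := by
      apply Finset.filter_congr
      intro c _
      push_neg
      rfl
    have hcards : (Finset.univ.filter (fun c : Fin z → Fin n => ∃ i ∈ T, c (f i) = i)).card
        = n^z - N := by
      have hsum : (Finset.univ.filter (fun c : Fin z → Fin n => ∃ i ∈ T, c (f i) = i)).card + N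
          = n^z := by
        rw [hN_def, ← hfn]
        rw [Finset.card_filter_add_card_filter_not, Finset.card_univ]
        simp [Fintype.card_fun]
      exact Nat.eq_sub_of_add_eq hsum
    rw [hcards, hfn]
  have hcolnonneg : 0 ≤ colSum := Finset.sum_nonneg fun c _ => hFnonneg c
  have stepB : colSum ≤ (n:ℝ)^z * Real.exp ((1-q) * (Real.exp lam - 1)) := by
    have hcast : ((n^z - N : ℕ) : ℝ) = (n:ℝ)^z - N := by
      push_cast [Nat.cast_sub hNle]; ring
    have heq : colSum = (n:ℝ)^z * (1 + (1-q) * (Real.exp lam - 1)) := by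
      rw [hcolval, hcast, hNreal]; ring
    rw [heq]
    apply mul_le_mul_of_nonneg_left _ (by positivity)
    have := Real.add_one_le_exp ((1-q) * (Real.exp lam - 1))
    linarith
  -- Step C : Chernoff sum bound
  have stepC : (B.card : ℝ) * Real.exp (lam * K) ≤ colSum ^ m := by
    have h1 : (B.card : ℝ) * Real.exp (lam * K) = ∑ _ω ∈ B, Real.exp (lam * K) := by
      rw [Finset.sum_const, nsmul_eq_mul]
    have h2 : ∑ _ω ∈ B, Real.exp (lam * K) ≤ ∑ ω ∈ B, ∏ x : Fin m, F (ω x) := by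
      apply Finset.sum_le_sum
      intro ω hω
      rw [stepA ω]
      calc Real.exp (lam * K) ≤ Real.exp (lam * (X ω)) := by
            apply Real.exp_le_exp.mpr
            exact mul_le_mul_of_nonneg_left (hB ω hω).le hlam0.le
        _ = Real.exp ((X ω) * lam) := by ring_nf
        _ = Real.exp lam ^ (X ω) := Real.exp_nat_mul lam (X ω)
    have h3 : ∑ ω ∈ B, ∏ x : Fin m, F (ω x)
        ≤ ∑ ω : Fin m → Fin z → Fin n, ∏ x : Fin m, F (ω x) := by
      apply Finset.sum_le_sum_of_subset_of_nonneg (Finset.subset_univ B)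
      intro ω _ _
      exact Finset.prod_nonneg fun x _ => hFnonneg _
    have h4 : ∑ ω : Fin m → Fin z → Fin n, ∏ x : Fin m, F (ω x) = colSum ^ m := by
      rw [← Fintype.piFinset_univ (β := fun _ : Fin m => Fin z → Fin n)]
      rw [Finset.sum_prod_piFinset]
      rw [Finset.prod_const, Finset.card_univ, Fintype.card_fin]
    linarith
  -- final exponent computation
  have hml : (m:ℝ) * lam^2 = r^2/4 := by
    rw [← hr4, hlam_def]; field_simp; ring
  have hlr : lam * r^3 = r^2/2 := by
    rw [hlam_def]; field_simp
  have hexp2 : Real.exp lam ≤ 1 + lam + lam^2 := by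
    have h := Real.exp_bound' hlam0.le hlam1 (n := 2) (by norm_num)
    simp only [Finset.sum_range_succ, Finset.sum_range_zero, Nat.factorial] at h
    norm_num at h
    nlinarith [sq_nonneg lam]
  have hexponent : (m:ℝ) * ((1-q) * (Real.exp lam - 1)) - lam * K ≤ -(r^2)/4 := by
    rw [hK_def, hr3]
    set a : ℝ := (1 - q) * m with ha_def
    have ha0 : 0 ≤ a := mul_nonneg (by linarith) hm0.le
    have ham : a ≤ m := by nlinarith [mul_nonneg hq0 hm0.le]
    have h5 : a * (Real.exp lam - 1) ≤ a * lam + a * lam^2 := by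
      calc a * (Real.exp lam - 1) ≤ a * (lam + lam^2) :=
            mul_le_mul_of_nonneg_left (by linarith) ha0
        _ = a * lam + a * lam^2 := by ring
    have h6 : a * lam^2 ≤ (m:ℝ) * lam^2 := mul_le_mul_of_nonneg_right ham (sq_nonneg lam)
    have hge : (m:ℝ) * ((1-q)*(Real.exp lam - 1)) - lam*((1-q)*(m:ℝ) + r^3)
        = (a*(Real.exp lam - 1) - a*lam) - lam*r^3 := by rw [ha_def]; ring
    rw [hge]
    linarith
  -- put together
  have hfinal : (B.card : ℝ) ≤ colSum ^ m * Real.exp (-(lam * K)) := by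
    rw [Real.exp_neg]
    rw [← le_div_iff₀ (Real.exp_pos (lam*K))] at stepC
    rwa [div_eq_mul_inv] at stepC
  calc (B.card : ℝ) ≤ colSum ^ m * Real.exp (-(lam * K)) := hfinal
    _ ≤ ((n:ℝ)^z * Real.exp ((1-q) * (Real.exp lam - 1))) ^ m * Real.exp (-(lam * K)) := by
        apply mul_le_mul_of_nonneg_right _ (Real.exp_pos _).le
        exact pow_le_pow_left₀ hcolnonneg stepB m
    _ = (n:ℝ)^(z*m) * Real.exp ((m:ℝ) * ((1-q) * (Real.exp lam - 1)) - lam * K) := by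
        rw [mul_pow, ← Real.exp_nat_mul, mul_assoc, ← Real.exp_add, ← pow_mul]
        ring_nf
    _ ≤ (n:ℝ)^(z*m) * Real.exp (-(Real.sqrt m)/4) := by
        apply mul_le_mul_of_nonneg_left _ (by positivity)
        apply Real.exp_le_exp.mpr
        rw [hr2]
        exact hexponent

set_option maxHeartbeats 1000000 in
/-- For every `n ≥ 2` there exist constants `κ > 0` and `m₀` such that for every `m ≥ m₀`
and every `z` with `1 ≤ z ≤ 2^{κ√m}` there exist `z` ordered partitions of `[m]` into `n`
labeled parts such that for every `T ⊆ [n]` and every map `ℓ` injective on `T`,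
`|∪_{i∈T} A_{ℓ(i),i}| ≤ (1 − (1 − 1/n)^{|T|})·m + m^{3/4}`. -/
theorem exists_partitions_small_unions (n : ℕ) (hn : 2 ≤ n) :
    ∃ κ : ℝ, 0 < κ ∧ ∃ m₀ : ℕ, ∀ m : ℕ, m₀ ≤ m →
      ∀ z : ℕ, 1 ≤ z → (z : ℝ) ≤ 2 ^ (κ * Real.sqrt m) →
        ∃ A : Fin z → Fin n → Finset (Fin m),
          (∀ ℓ, (∀ i j, i ≠ j → Disjoint (A ℓ i) (A ℓ j)) ∧
            Finset.univ.biUnion (A ℓ) = Finset.univ) ∧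
          ∀ (T : Finset (Fin n)) (f : Fin n → Fin z), Set.InjOn f ↑T →
            ((T.biUnion (fun i => A (f i) i)).card : ℝ) ≤
              (1 - (1 - 1 / (n : ℝ)) ^ T.card) * m + (m : ℝ) ^ ((3 : ℝ) / 4) := by
  classical
  have hn0 : (0:ℝ) < n := by positivity
  refine ⟨1/(8*(n:ℝ)), by positivity, 64*n^2+1, fun m hm z hz hzle => ?_⟩
  have hm1 : 1 ≤ m := le_trans (by nlinarith) hm
  have hm0 : (0:ℝ) < m := by exact_mod_cast hm1
  set Bad : Finset (Fin m → Fin z → Fin n) := Finset.univ.filter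
    (fun ω => ∃ T : Finset (Fin n), ∃ f : Fin n → Fin z, Set.InjOn f ↑T ∧
      (1 - (1 - 1/(n:ℝ))^T.card) * m + (m:ℝ)^((3:ℝ)/4)
        < ((T.biUnion fun i => Finset.univ.filter (fun x => ω x (f i) = i)).card : ℝ))
    with hBad
  set BTf : Finset (Fin n) → (Fin n → Fin z) → Finset (Fin m → Fin z → Fin n) :=
    fun T f => Finset.univ.filter (fun ω => Set.InjOn f ↑T ∧
      (1 - (1 - 1/(n:ℝ))^T.card) * m + (m:ℝ)^((3:ℝ)/4)
        < ((T.biUnion fun i => Finset.univ.filter (fun x => ω x (f i) = i)).card : ℝ))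
    with hBTf
  -- each BTf is small
  have hBTfcard : ∀ (T : Finset (Fin n)) (f : Fin n → Fin z),
      ((BTf T f).card : ℝ) ≤ ((n:ℝ)^(z*m)) * Real.exp (-(Real.sqrt m)/4) := by
    intro T f
    by_cases hf : Set.InjOn f ↑T
    · apply chernoff_core n z m hn hm1 T f hf
      intro ω hω
      exact (Finset.mem_filter.mp hω).2.2
    · have hempty : BTf T f = ∅ := by
        rw [hBTf, Finset.filter_eq_empty_iff]
        intro ω _
        rintro ⟨h1, -⟩
        exact hf h1
      rw [hempty]
      simp only [Finset.card_empty, Nat.cast_zero]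
      positivity
  -- union bound
  have hsub : Bad ⊆ Finset.univ.biUnion (fun T : Finset (Fin n) =>
      Finset.univ.biUnion (fun f : Fin n → Fin z => BTf T f)) := by
    intro ω hω
    obtain ⟨T, f, hf, hlt⟩ := (Finset.mem_filter.mp hω).2
    refine Finset.mem_biUnion.mpr ⟨T, Finset.mem_univ _, Finset.mem_biUnion.mpr
      ⟨f, Finset.mem_univ _, ?_⟩⟩
    exact Finset.mem_filter.mpr ⟨Finset.mem_univ _, hf, hlt⟩
  have hBadcard : (Bad.card : ℝ) ≤
      ((2:ℝ)^n * (z:ℝ)^n) * (((n:ℝ)^(z*m)) * Real.exp (-(Real.sqrt m)/4)) := by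
    have h1 : Bad.card ≤ ∑ T : Finset (Fin n), ∑ f : Fin n → Fin z, (BTf T f).card := by
      calc Bad.card ≤ (Finset.univ.biUnion (fun T : Finset (Fin n) =>
            Finset.univ.biUnion (fun f : Fin n → Fin z => BTf T f))).card :=
          Finset.card_le_card hsub
        _ ≤ ∑ T : Finset (Fin n), (Finset.univ.biUnion (fun f : Fin n → Fin z => BTf T f)).card :=
          Finset.card_biUnion_le
        _ ≤ ∑ T : Finset (Fin n), ∑ f : Fin n → Fin z, (BTf T f).card :=
          Finset.sum_le_sum fun T _ => Finset.card_biUnion_le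
    have h2 : (Bad.card : ℝ) ≤ ∑ T : Finset (Fin n), ∑ f : Fin n → Fin z,
        ((BTf T f).card : ℝ) := by exact_mod_cast h1
    calc (Bad.card : ℝ) ≤ ∑ T : Finset (Fin n), ∑ f : Fin n → Fin z, ((BTf T f).card : ℝ) := h2
      _ ≤ ∑ _T : Finset (Fin n), ∑ _f : Fin n → Fin z,
            (((n:ℝ)^(z*m)) * Real.exp (-(Real.sqrt m)/4)) :=
        Finset.sum_le_sum fun T _ => Finset.sum_le_sum fun f _ => hBTfcard T f
      _ = ((2:ℝ)^n * (z:ℝ)^n) * (((n:ℝ)^(z*m)) * Real.exp (-(Real.sqrt m)/4)) := by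
        rw [Finset.sum_const, Finset.sum_const, Finset.card_univ, Finset.card_univ]
        simp only [Fintype.card_finset, Fintype.card_fun, Fintype.card_fin, smul_smul,
          nsmul_eq_mul]
        push_cast
        ring
  -- the key numeric inequality : 2^n * z^n * exp(-√m/4) < 1
  have hs2 : 8*(n:ℝ) ≤ Real.sqrt m := by
    rw [show (8*(n:ℝ)) = Real.sqrt ((8*n)^2) by rw [Real.sqrt_sq (by positivity)]]
    apply Real.sqrt_le_sqrt
    have : ((64 * n^2 + 1 : ℕ) : ℝ) ≤ m := by exact_mod_cast hm
    push_cast at this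
    nlinarith
  have hnum : ((2:ℝ)^n * (z:ℝ)^n) * Real.exp (-(Real.sqrt m)/4) < 1 := by
    set s2 := Real.sqrt m with hs2def
    have hs2pos : 0 < s2 := lt_of_lt_of_le (by positivity) hs2
    have hzn : (z:ℝ)^n ≤ ((2:ℝ) ^ ((1/(8*(n:ℝ))) * s2))^n :=
      pow_le_pow_left₀ (Nat.cast_nonneg z) hzle n
    have hzn2 : ((2:ℝ) ^ ((1/(8*(n:ℝ))) * s2))^n = (2:ℝ) ^ ((1/(8*(n:ℝ))) * s2 * n) := by
      rw [← Real.rpow_natCast ((2:ℝ) ^ ((1/(8*(n:ℝ))) * s2)) n,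
        ← Real.rpow_mul (by norm_num : (0:ℝ) ≤ 2)]
    have hkn : (1/(8*(n:ℝ))) * s2 * n = s2/8 := by
      field_simp
    have h2n : (2:ℝ)^n = (2:ℝ) ^ ((n:ℕ):ℝ) := (Real.rpow_natCast 2 n).symm
    have hprod : (2:ℝ)^n * (z:ℝ)^n ≤ (2:ℝ) ^ ((n:ℝ) + s2/8) := by
      rw [Real.rpow_add (by norm_num : (0:ℝ) < 2), ← hkn, ← hzn2, h2n]
      apply mul_le_mul_of_nonneg_left hzn (by positivity)
    have hexplt : (2:ℝ) ^ ((n:ℝ) + s2/8) < Real.exp (s2/4) := by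
      rw [Real.rpow_def_of_pos (by norm_num : (0:ℝ) < 2)]
      apply Real.exp_lt_exp.mpr
      have hlog2 : Real.log 2 < 0.6931471808 := Real.log_two_lt_d9
      have hlogpos : 0 < Real.log 2 := Real.log_pos (by norm_num)
      have hn2 : (2:ℝ) ≤ n := by exact_mod_cast hn
      nlinarith
    have hlt : (2:ℝ)^n * (z:ℝ)^n < Real.exp (s2/4) := lt_of_le_of_lt hprod hexplt
    rw [show -(s2)/4 = -(s2/4) by ring, Real.exp_neg]
    rw [mul_inv_lt_iff₀ (Real.exp_pos _)]
    linarith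
  -- conclude : Bad is not everything
  have hcardlt : (Bad.card : ℝ) < (Fintype.card (Fin m → Fin z → Fin n) : ℝ) := by
    have hC : ((Fintype.card (Fin m → Fin z → Fin n) : ℕ) : ℝ) = (n:ℝ)^(z*m) := by
      simp only [Fintype.card_fun, Fintype.card_fin]
      push_cast
      rw [← pow_mul]
    rw [hC]
    calc (Bad.card : ℝ)
        ≤ ((2:ℝ)^n * (z:ℝ)^n) * (((n:ℝ)^(z*m)) * Real.exp (-(Real.sqrt m)/4)) := hBadcard
      _ = ((n:ℝ)^(z*m)) * (((2:ℝ)^n * (z:ℝ)^n) * Real.exp (-(Real.sqrt m)/4)) := by ring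
      _ < ((n:ℝ)^(z*m)) * 1 := by
          apply mul_lt_mul_of_pos_left hnum (by positivity)
      _ = (n:ℝ)^(z*m) := by ring
  obtain ⟨ω, hω⟩ : ∃ ω, ω ∉ Bad := by
    by_contra h
    push_neg at h
    have : Bad = Finset.univ := Finset.eq_univ_iff_forall.mpr h
    rw [this, Finset.card_univ] at hcardlt
    exact lt_irrefl _ hcardlt
  refine ⟨fun ℓ i => Finset.univ.filter (fun x => ω x ℓ = i), ?_, ?_⟩
  · intro ℓ
    constructor
    · intro i j hij
      simp only [Finset.disjoint_left, Finset.mem_filter, Finset.mem_univ, true_and]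
      rintro x h1 h2
      exact hij (h1.symm.trans h2)
    · ext x
      simp
  · intro T f hf
    by_contra hcon
    push_neg at hcon
    apply hω
    rw [hBad]
    exact Finset.mem_filter.mpr ⟨Finset.mem_univ _, T, f, hf, hcon⟩
end

section
/- Let n ≥ 2, m, and z be positive integers satisfying n²·z²·(1 − 1/n²)^m < 1. Then there exist z ordered partitions A_1, …, A_z of [m], each into n labeled parts A_{ℓ,1}, …, A_{ℓ,n}, satisfying the Intersecting Property: for all distinct i, j ∈ [n] and all distinct k, ℓ ∈ [z], A_{k,i} ∩ A_{ℓ,j} ≠ ∅. -/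
open Finset
set_option maxHeartbeats 1000000

/-- If `n ≥ 2`, `m, z ≥ 1` and `n²·z²·(1 − 1/n²)^m < 1`, then there exist `z` ordered
partitions of `[m]` into `n` labeled parts satisfying the Intersecting Property:
`A_{k,i} ∩ A_{ℓ,j} ≠ ∅` for all distinct `i, j ∈ [n]` and distinct `k, ℓ ∈ [z]`. -/
theorem exists_intersecting_partitions
    (n m z : ℕ) (hn : 2 ≤ n) (hm : 0 < m) (hz : 0 < z)
    (h : (n : ℝ) ^ 2 * (z : ℝ) ^ 2 * (1 - 1 / (n : ℝ) ^ 2) ^ m < 1) :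
    ∃ A : Fin z → Fin n → Finset (Fin m),
      (∀ ℓ, (∀ i j, i ≠ j → Disjoint (A ℓ i) (A ℓ j)) ∧
        Finset.univ.biUnion (A ℓ) = Finset.univ) ∧
      ∀ i j : Fin n, i ≠ j → ∀ k ℓ : Fin z, k ≠ ℓ → (A k i ∩ A ℓ j).Nonempty := by
  classical
  suffices hg : ∃ g : Fin m → Fin z → Fin n,
      ∀ i j : Fin n, i ≠ j → ∀ k ℓ : Fin z, k ≠ ℓ → ∃ x, g x k = i ∧ g x ℓ = j by
    obtain ⟨g, hgood⟩ := hg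
    refine ⟨fun ℓ i => univ.filter (fun x => g x ℓ = i), fun ℓ => ⟨?_, ?_⟩, ?_⟩
    · intro i j hij
      rw [Finset.disjoint_left]
      intro x hx hx'
      simp only [mem_filter] at hx hx'
      exact hij (hx.2.symm.trans hx'.2)
    · ext x
      simp [mem_biUnion]
    · intro i j hij k ℓ hkl
      obtain ⟨x, hx1, hx2⟩ := hgood i j hij k ℓ hkl
      exact ⟨x, by simp [mem_inter, mem_filter, hx1, hx2]⟩
  by_cases hz2 : 2 ≤ z
  case neg =>
    refine ⟨fun _ _ => ⟨0, by omega⟩, ?_⟩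
    intro i j hij k ℓ hkl
    have hk := k.isLt
    have hl := ℓ.isLt
    exact absurd (Fin.ext (by omega)) hkl
  -- main case z ≥ 2
  have hle : n ^ (z - 2) ≤ n ^ z := Nat.pow_le_pow_right (by omega) (by omega)
  -- single coordinate counts
  have cardS : ∀ (i j : Fin n) (k ℓ : Fin z), k ≠ ℓ →
      (univ.filter (fun h : Fin z → Fin n => h k = i ∧ h ℓ = j)).card = n ^ (z - 2) := by
    intro i j k ℓ hkl
    have heq : univ.filter (fun h : Fin z → Fin n => h k = i ∧ h ℓ = j)
        = Fintype.piFinset (fun x => if x = k then {i} else if x = ℓ then {j} else univ) := by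
      ext f
      simp only [mem_filter, mem_univ, true_and, Fintype.mem_piFinset]
      constructor
      · rintro ⟨h1, h2⟩ x
        split_ifs with e1 e2
        · subst e1; simp [h1]
        · subst e2; simp [h2]
        · simp
      · intro hx
        have h1 := hx k
        have h2 := hx ℓ
        rw [if_pos rfl] at h1
        rw [if_neg (Ne.symm hkl), if_pos rfl] at h2
        simp only [mem_singleton] at h1 h2
        exact ⟨h1, h2⟩
    rw [heq, Fintype.card_piFinset]
    have hone : ∀ x ∈ (univ : Finset (Fin z)) \ ({k, ℓ}ᶜ),
        ((if x = k then ({i} : Finset (Fin n)) else if x = ℓ then {j} else univ)).card = 1 := by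
      intro x hx
      simp only [mem_sdiff, mem_compl, not_not, mem_insert, mem_singleton] at hx
      rcases hx.2 with rfl | rfl
      · rw [if_pos rfl]; simp
      · rw [if_neg (Ne.symm hkl), if_pos rfl]; simp
    rw [← Finset.prod_subset (subset_univ ({k, ℓ}ᶜ : Finset (Fin z)))
        (fun x hx hx' => hone x (mem_sdiff.2 ⟨hx, hx'⟩))]
    have hn' : ∀ x ∈ ({k, ℓ}ᶜ : Finset (Fin z)),
        ((if x = k then ({i} : Finset (Fin n)) else if x = ℓ then {j} else univ)).card = n := by
      intro x hx
      simp only [mem_compl, mem_insert, mem_singleton, not_or] at hx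
      rw [if_neg hx.1, if_neg hx.2]
      simp
    rw [Finset.prod_congr rfl hn', Finset.prod_const]
    congr 1
    rw [Finset.card_compl, Finset.card_pair hkl, Fintype.card_fin]
  have cardT : ∀ (i j : Fin n) (k ℓ : Fin z), k ≠ ℓ →
      (univ.filter (fun h : Fin z → Fin n => ¬(h k = i ∧ h ℓ = j))).card
        = n ^ z - n ^ (z - 2) := by
    intro i j k ℓ hkl
    rw [Finset.filter_not, Finset.card_sdiff_of_subset (filter_subset _ _), cardS i j k ℓ hkl]
    congr 1
    simp [Finset.card_univ, Fintype.card_fun]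
  have cardB : ∀ (i j : Fin n) (k ℓ : Fin z), k ≠ ℓ →
      (univ.filter (fun g : Fin m → Fin z → Fin n => ∀ x, ¬(g x k = i ∧ g x ℓ = j))).card
        = (n ^ z - n ^ (z - 2)) ^ m := by
    intro i j k ℓ hkl
    have heq : univ.filter (fun g : Fin m → Fin z → Fin n => ∀ x, ¬(g x k = i ∧ g x ℓ = j))
        = Fintype.piFinset (fun _ : Fin m =>
            univ.filter (fun h : Fin z → Fin n => ¬(h k = i ∧ h ℓ = j))) := by
      ext g
      simp [Fintype.mem_piFinset]
    rw [heq, Fintype.card_piFinset, Finset.prod_const, cardT i j k ℓ hkl,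
      Finset.card_univ, Fintype.card_fin]
  -- the key numeric inequality
  have hn0 : (0 : ℝ) < (n : ℝ) := by exact_mod_cast (by omega : 0 < n)
  have hn2 : ((n : ℝ)) ^ 2 ≠ 0 := by positivity
  have hzz : z - 2 + 2 = z := by omega
  have hsplit : (n : ℝ) ^ z = (n : ℝ) ^ (z - 2) * (n : ℝ) ^ 2 := by
    rw [← pow_add, hzz]
  have hfact : (n : ℝ) ^ z - (n : ℝ) ^ (z - 2) = (1 - 1 / (n : ℝ) ^ 2) * (n : ℝ) ^ z := by
    rw [sub_mul, one_mul]
    congr 1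
    rw [hsplit]
    field_simp
  have keyR : (n : ℝ) ^ 2 * (z : ℝ) ^ 2 * ((n : ℝ) ^ z - (n : ℝ) ^ (z - 2)) ^ m
      < ((n : ℝ) ^ z) ^ m := by
    calc (n : ℝ) ^ 2 * (z : ℝ) ^ 2 * ((n : ℝ) ^ z - (n : ℝ) ^ (z - 2)) ^ m
        = ((n : ℝ) ^ 2 * (z : ℝ) ^ 2 * (1 - 1 / (n : ℝ) ^ 2) ^ m) * ((n : ℝ) ^ z) ^ m := by
          rw [hfact, mul_pow]; ring
      _ < 1 * ((n : ℝ) ^ z) ^ m := by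
          apply mul_lt_mul_of_pos_right h (by positivity)
      _ = ((n : ℝ) ^ z) ^ m := one_mul _
  have key : n ^ 2 * z ^ 2 * (n ^ z - n ^ (z - 2)) ^ m < (n ^ z) ^ m := by
    rw [← Nat.cast_lt (α := ℝ)]
    push_cast [hle]
    exact keyR
  -- counting argument
  by_contra hcon
  push_neg at hcon
  set Qf : Finset ((Fin n × Fin n) × Fin z × Fin z) :=
    univ.filter (fun q => q.1.1 ≠ q.1.2 ∧ q.2.1 ≠ q.2.2) with hQf
  set B : ((Fin n × Fin n) × Fin z × Fin z) → Finset (Fin m → Fin z → Fin n) :=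
    fun q => univ.filter (fun g => ∀ x, ¬(g x q.2.1 = q.1.1 ∧ g x q.2.2 = q.1.2)) with hB
  have hsub : (univ : Finset (Fin m → Fin z → Fin n)) ⊆ Qf.biUnion B := by
    intro g _
    obtain ⟨i, j, hij, k, ℓ, hkl, hbad⟩ := hcon g
    refine mem_biUnion.2 ⟨((i, j), (k, ℓ)), ?_, ?_⟩
    · simp [hQf, hij, hkl]
    · simp only [hB, mem_filter, mem_univ, true_and]
      exact fun x hc => hbad x hc.1 hc.2
  have htot : (univ : Finset (Fin m → Fin z → Fin n)).card = (n ^ z) ^ m := by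
    simp [Finset.card_univ, Fintype.card_fun]
  have hbound : (n ^ z) ^ m ≤ n ^ 2 * z ^ 2 * (n ^ z - n ^ (z - 2)) ^ m := by
    calc (n ^ z) ^ m = (univ : Finset (Fin m → Fin z → Fin n)).card := htot.symm
      _ ≤ (Qf.biUnion B).card := card_le_card hsub
      _ ≤ ∑ q ∈ Qf, (B q).card := card_biUnion_le
      _ = ∑ _q ∈ Qf, (n ^ z - n ^ (z - 2)) ^ m := by
          refine Finset.sum_congr rfl (fun q hq => ?_)
          simp only [hQf, mem_filter, mem_univ, true_and] at hq
          exact cardB q.1.1 q.1.2 q.2.1 q.2.2 hq.2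
      _ = Qf.card * (n ^ z - n ^ (z - 2)) ^ m := by rw [Finset.sum_const, smul_eq_mul]
      _ ≤ (n * n * (z * z)) * (n ^ z - n ^ (z - 2)) ^ m := by
          apply Nat.mul_le_mul_right
          calc Qf.card ≤ (univ : Finset ((Fin n × Fin n) × Fin z × Fin z)).card :=
                card_le_card (filter_subset _ _)
            _ = n * n * (z * z) := by
                simp [Finset.card_univ]
      _ = n ^ 2 * z ^ 2 * (n ^ z - n ^ (z - 2)) ^ m := by ring
  exact absurd key (not_lt.2 hbound)
end

section
/- Let M be a finite set and let A_1, …, A_z be ordered partitions of M into n labeled parts each, satisfying the Intersecting Property: for all distinct i, j ∈ [n] and all distinct k, ℓ ∈ [z], A_{k,i} ∩ A_{ℓ,j} ≠ ∅. Let X_1, …, X_n ⊆ [z] be pairwise disjoint, and for each i ∈ [n] define v_i : 2^M → ℝ by v_i(S) = 1[S ≠ ∅] + max_{ℓ∈X_i} 1[S ⊇ A_{ℓ,i}], where a maximum over an empty index set is 0. Then for every n-tuple (B_1, …, B_n) of pairwise disjoint subsets of M and all distinct i, j ∈ [n], v_i(B_i) + v_j(B_j) ≤ 3. -/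
/-- Given partitions `A_1, …, A_z` of `M` into `n` labeled parts satisfying the
Intersecting Property, pairwise disjoint sets `X_1, …, X_n ⊆ [z]`, and the valuations
`v_i(S) = 1[S ≠ ∅] + max_{ℓ∈X_i} 1[S ⊇ A_{ℓ,i}]`, for every allocation `(B_1, …, B_n)`
of pairwise disjoint subsets of `M` and all distinct `i, j`,
`v_i(B_i) + v_j(B_j) ≤ 3`. -/
theorem kinda_additive
    {M : Type*} [Fintype M] [DecidableEq M] (n z : ℕ)
    (A : Fin z → Fin n → Finset M)
    (hpart : ∀ ℓ, (∀ i j, i ≠ j → Disjoint (A ℓ i) (A ℓ j)) ∧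
      Finset.univ.biUnion (A ℓ) = Finset.univ)
    (hint : ∀ i j : Fin n, i ≠ j → ∀ k ℓ : Fin z, k ≠ ℓ → (A k i ∩ A ℓ j).Nonempty)
    (X : Fin n → Finset (Fin z)) (hX : ∀ i j, i ≠ j → Disjoint (X i) (X j))
    (B : Fin n → Finset M) (hB : ∀ i j, i ≠ j → Disjoint (B i) (B j))
    (i j : Fin n) (hij : i ≠ j) :
    (((if (B i).Nonempty then 1 else 0) + (if ∃ ℓ ∈ X i, A ℓ i ⊆ B i then 1 else 0)) +
      ((if (B j).Nonempty then 1 else 0) + (if ∃ ℓ ∈ X j, A ℓ j ⊆ B j then 1 else 0)) : ℝ)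
      ≤ 3 := by
  have key : ¬ ((∃ ℓ ∈ X i, A ℓ i ⊆ B i) ∧ (∃ ℓ ∈ X j, A ℓ j ⊆ B j)) := by
    rintro ⟨⟨k, hk, hki⟩, ⟨l, hl, hlj⟩⟩
    have hkl : k ≠ l := by
      rintro rfl
      exact Finset.disjoint_left.mp (hX i j hij) hk hl
    obtain ⟨x, hx⟩ := hint i j hij k l hkl
    simp only [Finset.mem_inter] at hx
    exact Finset.disjoint_left.mp (hB i j hij) (hki hx.1) (hlj hx.2)
  by_cases h1 : ∃ ℓ ∈ X i, A ℓ i ⊆ B i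
  · have h2 : ¬ ∃ ℓ ∈ X j, A ℓ j ⊆ B j := fun h2 => key ⟨h1, h2⟩
    simp only [h1, h2, if_true, if_false]
    split_ifs <;> norm_num
  · simp only [h1, if_false]
    split_ifs <;> norm_num
end

section
/- Let n ≥ 2 divide m, let k = m/n, let M = [m], and let λ ≥ 4 be an even integer. For each i ∈ [n] let X_i = (X_{i,1}, …, X_{i,z}) be a list of subsets of M satisfying: (a) |X_{i,ℓ}| = k for all i ∈ [n] and ℓ ∈ [z]; (b) for every ℓ ∈ [z], |X_{1,ℓ} ∩ ⋯ ∩ X_{n,ℓ}| = k − n; (c) each complement family X̄_i = (M∖X_{i,1}, …, M∖X_{i,z}) covers M and is λ-sparse, i.e. φ_{X̄_i}(M) > λ; (d) for every i ∈ [n] and every S ⊆ M with |S| ≤ nλ there exists ℓ ∈ [z] such that S ⊆ M∖X_{i,ℓ}. Let v_i = f_{X_i}. Then for every n-tuple (A_1, …, A_n) of pairwise disjoint subsets of M and all i, j ∈ [n] with i ≠ j, v_i(A_i) + v_j(A_j) ≤ λ + 2. -/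
/-- `coverNum Y T` is the minimum number of sets from the family `Y` needed to cover `T`. -/
noncomputable def coverNum {α : Type*} [DecidableEq α] {z : ℕ}
    (Y : Fin z → Finset α) (T : Finset α) : ℕ :=
  sInf {k | ∃ L : Finset (Fin z), L.card = k ∧ T ⊆ L.biUnion Y}


lemma coverNum_le_card {α : Type*} [DecidableEq α] {z : ℕ} (Y : Fin z → Finset α)
    (T : Finset α) (L : Finset (Fin z)) (h : T ⊆ L.biUnion Y) :
    coverNum Y T ≤ L.card :=
  Nat.sInf_le ⟨L, rfl, h⟩

lemma coverNum_spec {α : Type*} [DecidableEq α] {z : ℕ} (Y : Fin z → Finset α)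
    (T : Finset α) (h : T ⊆ Finset.univ.biUnion Y) :
    ∃ L : Finset (Fin z), L.card = coverNum Y T ∧ T ⊆ L.biUnion Y := by
  have hmem : (coverNum Y T) ∈ {k | ∃ L : Finset (Fin z), L.card = k ∧ T ⊆ L.biUnion Y} :=
    Nat.sInf_mem ⟨(Finset.univ : Finset (Fin z)).card, Finset.univ, rfl, h⟩
  obtain ⟨L, hL1, hL2⟩ := hmem
  exact ⟨L, hL1, hL2⟩

lemma coverNum_mono {α : Type*} [DecidableEq α] {z : ℕ} (Y : Fin z → Finset α)
    {S T : Finset α} (hST : S ⊆ T) (h : T ⊆ Finset.univ.biUnion Y) :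
    coverNum Y S ≤ coverNum Y T := by
  obtain ⟨L, hL1, hL2⟩ := coverNum_spec Y T h
  exact hL1 ▸ coverNum_le_card Y S L (hST.trans hL2)

lemma coverNum_union_le {α : Type*} [DecidableEq α] {z : ℕ} (Y : Fin z → Finset α)
    {S T : Finset α} (hS : S ⊆ Finset.univ.biUnion Y) (hT : T ⊆ Finset.univ.biUnion Y) :
    coverNum Y (S ∪ T) ≤ coverNum Y S + coverNum Y T := by
  obtain ⟨L1, h11, h12⟩ := coverNum_spec Y S hS
  obtain ⟨L2, h21, h22⟩ := coverNum_spec Y T hT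
  calc coverNum Y (S ∪ T) ≤ (L1 ∪ L2).card := by
        apply coverNum_le_card
        intro x hx
        rcases Finset.mem_union.mp hx with h | h
        · exact Finset.biUnion_subset_biUnion_of_subset_left Y Finset.subset_union_left (h12 h)
        · exact Finset.biUnion_subset_biUnion_of_subset_left Y Finset.subset_union_right (h22 h)
    _ ≤ L1.card + L2.card := Finset.card_union_le _ _
    _ = _ := by rw [h11, h21]

/-- The subadditive function `f_X` built from a list `X` of subsets of `[m]`; the
condition `φ(S) < λ/2` (for even `λ`) is expressed as `2·φ(S) < λ`. -/
noncomputable def fX {m z : ℕ} (X : Fin z → Finset (Fin m)) (lam : ℕ)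
    (S : Finset (Fin m)) : ℝ :=
  if 2 * coverNum (fun ℓ => (X ℓ)ᶜ) S < lam then
    (coverNum (fun ℓ => (X ℓ)ᶜ) S : ℝ)
  else if 2 * coverNum (fun ℓ => (X ℓ)ᶜ) Sᶜ < lam then
    (lam : ℝ) - coverNum (fun ℓ => (X ℓ)ᶜ) Sᶜ
  else (lam : ℝ) / 2

/-- Under the promises of the `∃FarSets` problem in a 0-instance (all `X_{i,ℓ}` of size
`k = m/n`, all intersections `X_{1,ℓ} ∩ ⋯ ∩ X_{n,ℓ}` of size `k − n`, each complement
family covering `[m]` and `λ`-sparse, and every set of size at most `nλ` contained in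
some complement), for every allocation of pairwise disjoint sets and all distinct
bidders `i ≠ j`, `f_{X_i}(A_i) + f_{X_j}(A_j) ≤ λ + 2`. -/
theorem almost_perfectly_additive
    (n m z : ℕ) (hn : 2 ≤ n) (hnm : n ∣ m) (k : ℕ) (hk : k = m / n)
    (lam : ℕ) (hlam : 4 ≤ lam) (hEven : Even lam)
    (X : Fin n → Fin z → Finset (Fin m))
    (ha : ∀ i ℓ, (X i ℓ).card = k)
    (hb : ∀ ℓ : Fin z, ((Finset.univ.inf (fun i : Fin n => X i ℓ)).card : ℤ) = (k : ℤ) - n)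
    (hc : ∀ i : Fin n,
      Finset.univ.biUnion (fun ℓ => (X i ℓ)ᶜ) = (Finset.univ : Finset (Fin m)) ∧
      lam < coverNum (fun ℓ => (X i ℓ)ᶜ) Finset.univ)
    (hd : ∀ i : Fin n, ∀ S : Finset (Fin m), S.card ≤ n * lam →
      ∃ ℓ : Fin z, S ⊆ (X i ℓ)ᶜ)
    (A : Fin n → Finset (Fin m)) (hA : ∀ i j, i ≠ j → Disjoint (A i) (A j))
    (i j : Fin n) (hij : i ≠ j) :
    fX (X i) lam (A i) + fX (X j) lam (A j) ≤ (lam : ℝ) + 2 := by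
  -- every set is covered by each complement family
  have hsub : ∀ (t : Fin n) (S : Finset (Fin m)),
      S ⊆ Finset.univ.biUnion (fun ℓ => (X t ℓ)ᶜ) := by
    intro t S
    rw [(hc t).1]
    exact Finset.subset_univ S
  -- transfer lemma: covers by family b translate to covers by family a with one extra set
  have htrans : ∀ (a b : Fin n) (T : Finset (Fin m)),
      coverNum (fun ℓ => (X b ℓ)ᶜ) T ≤ lam →
      coverNum (fun ℓ => (X a ℓ)ᶜ) T ≤ coverNum (fun ℓ => (X b ℓ)ᶜ) T + 1 := by
    intro a b T hq
    obtain ⟨L, hL1, hL2⟩ := coverNum_spec (fun ℓ => (X b ℓ)ᶜ) T (hsub b T)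
    set R := L.biUnion (fun ℓ => X a ℓ \ X b ℓ) with hRdef
    have hcard : ∀ ℓ ∈ L, (X a ℓ \ X b ℓ).card ≤ n := by
      intro ℓ _
      have hinf_a : (Finset.univ.inf fun t : Fin n => X t ℓ) ⊆ X a ℓ :=
        Finset.inf_le (Finset.mem_univ a)
      have hinf_b : (Finset.univ.inf fun t : Fin n => X t ℓ) ⊆ X b ℓ :=
        Finset.inf_le (Finset.mem_univ b)
      have h1 : X a ℓ \ X b ℓ ⊆ X a ℓ \ (Finset.univ.inf fun t : Fin n => X t ℓ) :=
        Finset.sdiff_subset_sdiff (Finset.Subset.refl _) hinf_b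
      have h2 := Finset.card_le_card h1
      have h3 : (X a ℓ \ (Finset.univ.inf fun t : Fin n => X t ℓ)).card =
          (X a ℓ).card - (Finset.univ.inf fun t : Fin n => X t ℓ).card :=
        Finset.card_sdiff_of_subset hinf_a
      have h4 : (X a ℓ).card = k := ha a ℓ
      have h5 := hb ℓ
      omega
    have hRcard : R.card ≤ n * lam := by
      have h1 : R.card ≤ L.card * n := Finset.card_biUnion_le_card_mul L _ n hcard
      have h2 : L.card ≤ lam := by rw [hL1]; exact hq
      calc R.card ≤ L.card * n := h1
        _ ≤ lam * n := Nat.mul_le_mul_right n h2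
        _ = n * lam := Nat.mul_comm _ _
    obtain ⟨ℓ₀, hℓ₀⟩ := hd a R hRcard
    have hcover : T ⊆ (insert ℓ₀ L).biUnion (fun ℓ => (X a ℓ)ᶜ) := by
      intro x hx
      obtain ⟨ℓ, hℓL, hxℓ⟩ := Finset.mem_biUnion.mp (hL2 hx)
      by_cases hxa : x ∈ X a ℓ
      · have hxR : x ∈ R := Finset.mem_biUnion.mpr
          ⟨ℓ, hℓL, Finset.mem_sdiff.mpr ⟨hxa, Finset.mem_compl.mp hxℓ⟩⟩
        exact Finset.mem_biUnion.mpr ⟨ℓ₀, Finset.mem_insert_self _ _, hℓ₀ hxR⟩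
      · exact Finset.mem_biUnion.mpr ⟨ℓ, Finset.mem_insert_of_mem hℓL,
          Finset.mem_compl.mpr hxa⟩
    calc coverNum (fun ℓ => (X a ℓ)ᶜ) T ≤ (insert ℓ₀ L).card :=
          coverNum_le_card _ _ _ hcover
      _ ≤ L.card + 1 := Finset.card_insert_le _ _
      _ = coverNum (fun ℓ => (X b ℓ)ᶜ) T + 1 := by rw [hL1]
  -- notation
  set p1 := coverNum (fun ℓ => (X i ℓ)ᶜ) (A i) with hp1
  set p2 := coverNum (fun ℓ => (X i ℓ)ᶜ) (A i)ᶜ with hp2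
  set q1 := coverNum (fun ℓ => (X j ℓ)ᶜ) (A j) with hq1
  set q2 := coverNum (fun ℓ => (X j ℓ)ᶜ) (A j)ᶜ with hq2
  have hAiC : A i ⊆ (A j)ᶜ := by
    intro x hx
    exact Finset.mem_compl.mpr (Finset.disjoint_left.mp (hA i j hij) hx)
  have hAjC : A j ⊆ (A i)ᶜ := by
    intro x hx
    exact Finset.mem_compl.mpr (Finset.disjoint_left.mp (hA j i hij.symm) hx)
  have hU : (Finset.univ : Finset (Fin m)) ⊆ (A i)ᶜ ∪ (A j)ᶜ := by
    intro x _
    by_cases hx : x ∈ A i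
    · exact Finset.mem_union_right _ (hAiC hx)
    · exact Finset.mem_union_left _ (Finset.mem_compl.mpr hx)
  -- F1 : j in branch 2 implies p1 ≤ q2 + 1
  have F1 : 2 * q2 < lam → p1 ≤ q2 + 1 := by
    intro h
    have h1 : p1 ≤ coverNum (fun ℓ => (X i ℓ)ᶜ) (A j)ᶜ :=
      coverNum_mono _ hAiC (hsub i _)
    have h2 : coverNum (fun ℓ => (X i ℓ)ᶜ) (A j)ᶜ ≤ q2 + 1 :=
      htrans i j (A j)ᶜ (by omega)
    omega
  -- F2 : i in branch 2 implies q1 ≤ p2 + 1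
  have F2 : 2 * p2 < lam → q1 ≤ p2 + 1 := by
    intro h
    have h1 : q1 ≤ coverNum (fun ℓ => (X j ℓ)ᶜ) (A i)ᶜ :=
      coverNum_mono _ hAjC (hsub j _)
    have h2 : coverNum (fun ℓ => (X j ℓ)ᶜ) (A i)ᶜ ≤ p2 + 1 :=
      htrans j i (A i)ᶜ (by omega)
    omega
  -- F3 : both in branch 2 implies lam ≤ p2 + q2
  have F3 : 2 * p2 < lam → 2 * q2 < lam → lam ≤ p2 + q2 := by
    intro h h'
    have h0 : lam < coverNum (fun ℓ => (X i ℓ)ᶜ) Finset.univ := (hc i).2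
    have h1 : coverNum (fun ℓ => (X i ℓ)ᶜ) Finset.univ ≤
        coverNum (fun ℓ => (X i ℓ)ᶜ) ((A i)ᶜ ∪ (A j)ᶜ) :=
      coverNum_mono _ hU (hsub i _)
    have h2 : coverNum (fun ℓ => (X i ℓ)ᶜ) ((A i)ᶜ ∪ (A j)ᶜ) ≤
        p2 + coverNum (fun ℓ => (X i ℓ)ᶜ) (A j)ᶜ :=
      coverNum_union_le _ (hsub i _) (hsub i _)
    have h3 : coverNum (fun ℓ => (X i ℓ)ᶜ) (A j)ᶜ ≤ q2 + 1 :=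
      htrans i j (A j)ᶜ (by omega)
    omega
  simp only [fX, ← hp1, ← hp2, ← hq1, ← hq2]
  split_ifs with c1 c3 c4 c2 c3' c4' c3'' c4''
  · -- c1, c3
    have h : p1 + q1 ≤ lam + 2 := by omega
    exact_mod_cast h
  · -- c1, ¬c3, c4
    have h := F1 c4
    have h' : (p1 : ℝ) ≤ (q2 : ℝ) + 1 := by exact_mod_cast h
    linarith
  · -- c1, ¬c3, ¬c4
    have h : (2 * p1 + 1 : ℝ) ≤ lam := by exact_mod_cast Nat.succ_le_of_lt c1
    linarith
  · -- ¬c1, c2, c3'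
    have h := F2 c2
    have h' : (q1 : ℝ) ≤ (p2 : ℝ) + 1 := by exact_mod_cast h
    linarith
  · -- ¬c1, c2, ¬c3', c4'
    have h := F3 c2 c4'
    have h' : (lam : ℝ) ≤ (p2 : ℝ) + q2 := by exact_mod_cast h
    linarith
  · -- ¬c1, c2, ¬c3', ¬c4'
    have h : lam ≤ 2 * p2 + 2 := by have := F2 c2; omega
    have h' : (lam : ℝ) ≤ 2 * (p2 : ℝ) + 2 := by exact_mod_cast h
    linarith
  · -- ¬c1, ¬c2, c3''
    have h : (2 * q1 + 1 : ℝ) ≤ lam := by exact_mod_cast Nat.succ_le_of_lt c3''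
    linarith
  · -- ¬c1, ¬c2, ¬c3'', c4''
    have h : lam ≤ 2 * q2 + 2 := by have := F1 c4''; omega
    have h' : (lam : ℝ) ≤ 2 * (q2 : ℝ) + 2 := by exact_mod_cast h
    linarith
  · -- ¬c1, ¬c2, ¬c3'', ¬c4''
    linarith
end

section
/- Let n ≥ 2 and k ≥ n + 1 be integers with k ≡ 1 (mod n), let m = kn, and let p_1, …, p_{k(n−1)+1} be nonnegative reals. Define s = Σ_{j=1}^{(k−1)(n−1)} |(p_j − p_{j+n}) · Π_{i=1}^{n−1} p_{j+i}|. Then for all integers i with 2 ≤ i ≤ n and j with 1 ≤ j ≤ k−1 such that jn + i ≤ k(n−1) + 1, (p_i − p_{jn+i}) · Π_{ℓ∈[n], ℓ≠i} p_ℓ ≤ m·n·s. -/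
/-- For `n ≥ 2`, `k ≥ n+1` with `k ≡ 1 (mod n)`, `m = kn`, nonnegative reals
`p_1, …, p_{k(n−1)+1}`, and
`s = Σ_{j=1}^{(k−1)(n−1)} |(p_j − p_{j+n}) · Π_{i=1}^{n−1} p_{j+i}|`,
for all `2 ≤ i ≤ n` and `1 ≤ j ≤ k−1` with `jn + i ≤ k(n−1)+1`,
`(p_i − p_{jn+i}) · Π_{ℓ∈[n], ℓ≠i} p_ℓ ≤ m·n·s`. -/
theorem chaining_inequality
    (n k : ℕ) (hn : 2 ≤ n) (hk : n + 1 ≤ k) (hmod : k % n = 1)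
    (p : ℕ → ℝ) (hp : ∀ j, 1 ≤ j → j ≤ k * (n - 1) + 1 → 0 ≤ p j)
    (s : ℝ)
    (hs : s = ∑ j ∈ Finset.Icc 1 ((k - 1) * (n - 1)),
      |(p j - p (j + n)) * ∏ i ∈ Finset.Icc 1 (n - 1), p (j + i)|)
    (i : ℕ) (hi2 : 2 ≤ i) (hin : i ≤ n)
    (j : ℕ) (hj1 : 1 ≤ j) (hjk : j ≤ k - 1) (hji : j * n + i ≤ k * (n - 1) + 1) :
    (p i - p (j * n + i)) * ∏ ℓ ∈ (Finset.Icc 1 n).erase i, p ℓ ≤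
      ((k * n : ℕ) : ℝ) * n * s := by
  obtain ⟨d, rfl, hd1⟩ : ∃ d, n = d + 1 ∧ 1 ≤ d := ⟨n - 1, by omega, by omega⟩
  simp only [Nat.add_sub_cancel] at hs hp hji ⊢
  have hkd : d ≤ k * d := Nat.le_mul_of_pos_left d (by omega)
  set q : ℕ → ℝ := fun a => ∏ r ∈ Finset.range (d + 1), p (a + r) with hqdef
  set M := (k - 1) * d with hM
  have hMkd : M + d = k * d := by
    rw [hM, Nat.sub_mul, Nat.one_mul]
    omega
  -- cofactor reindex
  have hIcc : ∀ a : ℕ, (∏ x ∈ Finset.Icc 1 d, p (a + x))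
      = ∏ r ∈ Finset.range d, p (a + 1 + r) := by
    intro a
    rw [← Finset.Ico_add_one_right_eq_Icc, Finset.prod_Ico_eq_prod_range]
    try simp only [Nat.add_sub_cancel]
    exact Finset.prod_congr rfl fun r _ => by rw [show a + (1 + r) = a + 1 + r by omega]
  have hqa : ∀ a : ℕ, q a = p a * ∏ r ∈ Finset.range d, p (a + 1 + r) := by
    intro a
    show (∏ r ∈ Finset.range (d + 1), p (a + r)) = _
    rw [Finset.prod_range_succ']
    rw [Nat.add_zero, mul_comm]
    exact congrArg _ (Finset.prod_congr rfl fun r _ => by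
      rw [show a + (r + 1) = a + 1 + r by omega])
  have hqa' : ∀ a : ℕ, q (a + 1) = (∏ r ∈ Finset.range d, p (a + 1 + r)) * p (a + (d + 1)) := by
    intro a
    show (∏ r ∈ Finset.range (d + 1), p (a + 1 + r)) = _
    rw [Finset.prod_range_succ]
    rw [show a + 1 + d = a + (d + 1) by omega]
  -- s as sum of window differences
  have hs' : s = ∑ c ∈ Finset.Icc 1 M, |q c - q (c + 1)| := by
    rw [hs]
    refine Finset.sum_congr rfl fun c _ => ?_
    rw [hqa c, hqa' c, hIcc c]
    congr 1
    ring
  have hs0 : 0 ≤ s := by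
    rw [hs']
    exact Finset.sum_nonneg fun c _ => abs_nonneg _
  -- telescoping
  have htel0 : ∀ t : ℕ, |q (1 + t) - q 1| ≤ ∑ c ∈ Finset.Ico 1 (1 + t), |q c - q (c + 1)| := by
    intro t
    induction t with
    | zero => simp
    | succ t ih =>
        have h1 : |q (1 + (t + 1)) - q 1| ≤ |q (1 + t) - q (1 + t + 1)| + |q (1 + t) - q 1| := by
          rw [show (1 + (t + 1)) = 1 + t + 1 by omega]
          calc |q (1 + t + 1) - q 1| ≤ |q (1 + t + 1) - q (1 + t)| + |q (1 + t) - q 1| :=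
                abs_sub_le _ _ _
            _ = |q (1 + t) - q (1 + t + 1)| + |q (1 + t) - q 1| := by rw [abs_sub_comm]
        have h2 : ∑ c ∈ Finset.Ico 1 (1 + (t + 1)), |q c - q (c + 1)|
            = (∑ c ∈ Finset.Ico 1 (1 + t), |q c - q (c + 1)|) + |q (1 + t) - q (1 + t + 1)| := by
          rw [show 1 + (t + 1) = (1 + t) + 1 by omega, Finset.sum_Ico_succ_top (by omega)]
        rw [h2]
        linarith
  have htel : ∀ a : ℕ, 1 ≤ a → a ≤ M + 1 → |q a - q 1| ≤ s := by
    intro a ha1 ha2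
    obtain ⟨t, rfl⟩ : ∃ t, a = 1 + t := ⟨a - 1, by omega⟩
    refine le_trans (htel0 t) ?_
    rw [hs']
    refine Finset.sum_le_sum_of_subset_of_nonneg ?_ fun c _ _ => abs_nonneg _
    intro c hc
    simp only [Finset.mem_Ico, Finset.mem_Icc] at hc ⊢
    omega
  -- basics
  set C := ∏ ℓ ∈ (Finset.Icc 1 (d + 1)).erase i, p ℓ with hC
  have hC0 : 0 ≤ C := by
    refine Finset.prod_nonneg fun ℓ hℓ => ?_
    have hℓ' := Finset.mem_of_mem_erase hℓ
    simp only [Finset.mem_Icc] at hℓ'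
    exact hp ℓ hℓ'.1 (by omega)
  have huC : q 1 = p i * C := by
    have h1 : q 1 = ∏ ℓ ∈ Finset.Icc 1 (d + 1), p ℓ := by
      show (∏ r ∈ Finset.range (d + 1), p (1 + r)) = _
      rw [← Finset.Ico_add_one_right_eq_Icc, Finset.prod_Ico_eq_prod_range]
      simp
    rw [h1, hC, Finset.mul_prod_erase _ _ (by simp only [Finset.mem_Icc]; omega)]
  set u := q 1 with hu
  have hgoal_eq : (p i - p (j * (d + 1) + i)) * C = u - p (j * (d + 1) + i) * C := by
    rw [huC]; ring
  have hpjC : 0 ≤ p (j * (d + 1) + i) * C :=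
    mul_nonneg (hp _ (by omega) hji) hC0
  have hu0 : 0 ≤ u := by rw [huC]; exact mul_nonneg (hp i (by omega) (by omega)) hC0
  -- the big constant
  have hT4nat : 4 ≤ k * (d + 1) * (d + 1) := by
    calc 4 ≤ 3 * (2 * 2) := by norm_num
      _ ≤ k * ((d + 1) * (d + 1)) :=
          Nat.mul_le_mul (by omega) (Nat.mul_le_mul (by omega) (by omega))
      _ = k * (d + 1) * (d + 1) := by ring
  have h2jnat : 2 * j ≤ k * (d + 1) * (d + 1) := by
    calc 2 * j ≤ k * 2 := by omega
      _ ≤ k * ((d + 1) * (d + 1)) := Nat.mul_le_mul_left k (by nlinarith)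
      _ = k * (d + 1) * (d + 1) := by ring
  set T : ℝ := ((k * (d + 1) : ℕ) : ℝ) * ((d + 1 : ℕ) : ℝ) with hT
  have hTeq : T = ((k * (d + 1) * (d + 1) : ℕ) : ℝ) := by rw [hT]; push_cast; ring
  have hT4 : (4 : ℝ) ≤ T := by rw [hTeq]; exact_mod_cast hT4nat
  have h2j : (2 : ℝ) * j ≤ T := by
    rw [hTeq]
    calc (2 : ℝ) * j = ((2 * j : ℕ) : ℝ) := by push_cast; ring
      _ ≤ _ := by exact_mod_cast h2jnat
  rw [hgoal_eq]
  show u - p (j * (d + 1) + i) * C ≤ T * s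
  by_cases hcase : u ≤ T * s
  · linarith
  push_neg at hcase
  have hsu : s ≤ u := by nlinarith
  have husnn : 0 ≤ u - s := by linarith
  -- main induction
  have main : ∀ t : ℕ, t ≤ j → u * (u - s) ^ t ≤ p (t * (d + 1) + i) * C * (u + s) ^ t := by
    intro t ht
    induction t with
    | zero => simpa using le_of_eq huC
    | succ t ih =>
        have ih' := ih (by omega)
        have e1 : (t + 1) * (d + 1) = t * (d + 1) + (d + 1) := by ring
        have hle : (t + 1) * (d + 1) + i ≤ j * (d + 1) + i :=
          Nat.add_le_add_right (Nat.mul_le_mul_right _ (by omega)) _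
        set a := t * (d + 1) + i with ha
        have hain : a + (d + 1) = (t + 1) * (d + 1) + i := by rw [ha]; ring
        have haM : a ≤ M := by omega
        have hq1 : q a ≤ u + s := by
          have := htel a (by omega) (by omega)
          rw [abs_le] at this; linarith
        have hq2 : u - s ≤ q (a + 1) := by
          have := htel (a + 1) (by omega) (by omega)
          rw [abs_le] at this; linarith
        have hkey : p a * q (a + 1) = p (a + (d + 1)) * q a := by
          rw [hqa a, hqa' a]; ring
        have hpa1 : 0 ≤ p (a + (d + 1)) := hp _ (by omega) (by omega)
        have hpaC : 0 ≤ p a * C * (u + s) ^ t :=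
          mul_nonneg (mul_nonneg (hp a (by omega) (by omega)) hC0) (by positivity)
        calc u * (u - s) ^ (t + 1) = u * (u - s) ^ t * (u - s) := by ring
          _ ≤ p a * C * (u + s) ^ t * (u - s) := mul_le_mul_of_nonneg_right ih' husnn
          _ ≤ p a * C * (u + s) ^ t * q (a + 1) := mul_le_mul_of_nonneg_left hq2 hpaC
          _ = p (a + (d + 1)) * C * (u + s) ^ t * q a := by
              linear_combination (C * (u + s) ^ t) * hkey
          _ ≤ p (a + (d + 1)) * C * (u + s) ^ t * (u + s) := by
              refine mul_le_mul_of_nonneg_left hq1 ?_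
              exact mul_nonneg (mul_nonneg hpa1 hC0) (by positivity)
          _ = p ((t + 1) * (d + 1) + i) * C * (u + s) ^ (t + 1) := by rw [hain]; ring
  -- growth lemma
  have grow : ∀ t : ℕ, u * (u + s) ^ t ≤ u * (u - s) ^ t + 2 * t * s * (u + s) ^ t := by
    intro t
    induction t with
    | zero => simp
    | succ t ih =>
        have hple : (u - s) ^ t ≤ (u + s) ^ t := pow_le_pow_left₀ husnn (by linarith) t
        have hA : u * (u + s) ^ t * (u + s) ≤ (u * (u - s) ^ t + 2 * t * s * (u + s) ^ t) * (u + s) :=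
          mul_le_mul_of_nonneg_right ih (by linarith)
        have hB0 : u * (u - s) ^ t ≤ (u + s) * (u + s) ^ t :=
          mul_le_mul (by linarith) hple (by positivity) (by linarith)
        have hB : u * (u - s) ^ t * (2 * s) ≤ (u + s) * (u + s) ^ t * (2 * s) :=
          mul_le_mul_of_nonneg_right hB0 (by linarith)
        have hE0 : u * (u + s) ^ (t + 1) = u * (u + s) ^ t * (u + s) := by ring
        have hE : (u * (u - s) ^ t + 2 * t * s * (u + s) ^ t) * (u + s)
            = u * (u - s) ^ (t + 1) + u * (u - s) ^ t * (2 * s) + 2 * t * s * (u + s) ^ (t + 1) := by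
          ring
        have hE2 : (u + s) * (u + s) ^ t * (2 * s) = 2 * s * (u + s) ^ (t + 1) := by ring
        have goal' : u * (u + s) ^ (t + 1)
            ≤ u * (u - s) ^ (t + 1) + 2 * ((t : ℝ) + 1) * s * (u + s) ^ (t + 1) := by
          linarith [hA, hB, hE, hE2, hE0]
        calc u * (u + s) ^ (t + 1)
            ≤ u * (u - s) ^ (t + 1) + 2 * ((t : ℝ) + 1) * s * (u + s) ^ (t + 1) := goal'
          _ = u * (u - s) ^ (t + 1) + 2 * ((t + 1 : ℕ) : ℝ) * s * (u + s) ^ (t + 1) := by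
              push_cast; ring
  -- finish
  have hmj := main j le_rfl
  have hgj := grow j
  have hup : (0 : ℝ) < u + s := by nlinarith
  have hpow : (0 : ℝ) < (u + s) ^ j := pow_pos hup j
  have hfin : u ≤ p (j * (d + 1) + i) * C + 2 * j * s := by
    have h1 : u * (u + s) ^ j ≤ (p (j * (d + 1) + i) * C + 2 * j * s) * (u + s) ^ j := by
      calc u * (u + s) ^ j ≤ u * (u - s) ^ j + 2 * j * s * (u + s) ^ j := hgj
        _ ≤ p (j * (d + 1) + i) * C * (u + s) ^ j + 2 * j * s * (u + s) ^ j := by linarith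
        _ = (p (j * (d + 1) + i) * C + 2 * j * s) * (u + s) ^ j := by ring
    exact le_of_mul_le_mul_right h1 hpow
  have h2 : (2 : ℝ) * j * s ≤ T * s := mul_le_mul_of_nonneg_right h2j hs0
  linarith
end

section
/- Let n ≥ 2 and k ≥ n + 1 be integers with k ≡ 1 (mod n), let m = kn, let p_1, …, p_{k(n−1)+1} be nonnegative reals, and set s = Σ_{j=1}^{(k−1)(n−1)} |(p_j − p_{j+n}) · Π_{i=1}^{n−1} p_{j+i}|. Assume s > 0 and Π_{ℓ=1}^{n} p_ℓ ≥ m·s. Define q_1, …, q_{k(n−1)+1} recursively by q_j = p_j for 1 ≤ j ≤ n and q_j = q_{j−n} − s / Π_{ℓ=1}^{n−1} q_{j−ℓ} for n < j ≤ k(n−1)+1. Then for all i ∈ {1, …, n} and all integers j ≥ 0 with jn + i ≤ k(n−1) + 1, (q_i − q_{jn+i}) · Π_{ℓ∈[n], ℓ≠i} q_ℓ ≤ j·n·s. -/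
set_option maxHeartbeats 1600000 in
/-- For `n ≥ 2`, `k ≥ n+1` with `k ≡ 1 (mod n)`, `m = kn`, nonnegative reals
`p_1, …, p_{k(n−1)+1}`, `s = Σ_j |(p_j − p_{j+n}) · Π_{i=1}^{n−1} p_{j+i}|` with `s > 0`
and `Π_{ℓ=1}^n p_ℓ ≥ m·s`, and `q` defined recursively by `q_j = p_j` for `j ≤ n` and
`q_j = q_{j−n} − s / Π_{ℓ=1}^{n−1} q_{j−ℓ}` for `n < j ≤ k(n−1)+1`: for all `i ∈ [n]`
and `j ≥ 0` with `jn + i ≤ k(n−1)+1`,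
`(q_i − q_{jn+i}) · Π_{ℓ∈[n], ℓ≠i} q_ℓ ≤ j·n·s`. -/
theorem what_the_inequality
    (n k : ℕ) (hn : 2 ≤ n) (hk : n + 1 ≤ k) (hmod : k % n = 1)
    (p : ℕ → ℝ) (hp : ∀ j, 1 ≤ j → j ≤ k * (n - 1) + 1 → 0 ≤ p j)
    (s : ℝ)
    (hs : s = ∑ j ∈ Finset.Icc 1 ((k - 1) * (n - 1)),
      |(p j - p (j + n)) * ∏ i ∈ Finset.Icc 1 (n - 1), p (j + i)|)
    (hspos : 0 < s)
    (hprod : ((k * n : ℕ) : ℝ) * s ≤ ∏ ℓ ∈ Finset.Icc 1 n, p ℓ)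
    (q : ℕ → ℝ)
    (hq1 : ∀ j, 1 ≤ j → j ≤ n → q j = p j)
    (hq2 : ∀ j, n < j → j ≤ k * (n - 1) + 1 →
      q j = q (j - n) - s / ∏ ℓ ∈ Finset.Icc 1 (n - 1), q (j - ℓ))
    (i : ℕ) (hi1 : 1 ≤ i) (hin : i ≤ n)
    (j : ℕ) (hji : j * n + i ≤ k * (n - 1) + 1) :
    (q i - q (j * n + i)) * ∏ ℓ ∈ (Finset.Icc 1 n).erase i, q ℓ ≤ (j : ℝ) * n * s := by
  -- arithmetic facts usable by omega
  have e1 : (k - 1) * (n - 1) = k * (n - 1) - (n - 1) := Nat.sub_one_mul k (n - 1)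
  have e2 : n - 1 ≤ k * (n - 1) := Nat.le_mul_of_pos_left _ (by omega)
  have e3 : k ≤ k * (n - 1) := Nat.le_mul_of_pos_right _ (by omega)
  -- W1 := product of the first n values of p
  set W1 : ℝ := ∏ ℓ ∈ Finset.Icc 1 n, p ℓ with hW1def
  have hW1pos : 0 < W1 := by
    have hkn : 0 < k * n := Nat.mul_pos (by omega) (by omega)
    have : (0:ℝ) < ((k * n : ℕ) : ℝ) * s := by
      apply mul_pos _ hspos
      exact_mod_cast hkn
    linarith
  -- reindexing the recursion denominator as a window product
  have reindex : ∀ r : ℕ, 1 ≤ r →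
      (∏ ℓ ∈ Finset.Icc 1 (n - 1), q (r + n - ℓ)) =
      ∏ m ∈ Finset.Icc (r + 1) (r + n - 1), q m := by
    intro r hr
    refine Finset.prod_nbij' (fun ℓ => r + n - ℓ) (fun m => r + n - m) ?_ ?_ ?_ ?_ ?_
    · intro a ha; simp only [Finset.mem_Icc] at *; omega
    · intro a ha; simp only [Finset.mem_Icc] at *; omega
    · intro a ha; simp only [Finset.mem_Icc] at ha; omega
    · intro a ha; simp only [Finset.mem_Icc] at ha; omega
    · intro a ha; rfl
  -- splitting off the bottom element of a window
  have split : ∀ r : ℕ, 1 ≤ r →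
      (∏ m ∈ Finset.Icc r (r + n - 1), q m) =
      q r * ∏ m ∈ Finset.Icc (r + 1) (r + n - 1), q m := by
    intro r hr
    have hins : Finset.Icc r (r + n - 1) = insert r (Finset.Icc (r + 1) (r + n - 1)) := by
      ext x; simp only [Finset.mem_Icc, Finset.mem_insert]; omega
    rw [hins, Finset.prod_insert (by simp)]
  -- the key invariant: window products and positivity
  have key : ∀ r : ℕ, 1 ≤ r → r ≤ (k - 1) * (n - 1) + 1 →
      ((∏ m ∈ Finset.Icc r (r + n - 1), q m) = W1 - ((r : ℝ) - 1) * s) ∧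
      (∀ m, 1 ≤ m → m ≤ r + n - 1 → 0 < q m) := by
    intro r hr
    induction r, hr using Nat.le_induction with
    | base =>
      intro _
      have hqp : (∏ m ∈ Finset.Icc 1 (1 + n - 1), q m) = W1 := by
        rw [show 1 + n - 1 = n from by omega]
        exact Finset.prod_congr rfl (fun m hm => by
          simp only [Finset.mem_Icc] at hm; exact hq1 m hm.1 hm.2)
      refine ⟨by rw [hqp]; push_cast; ring, ?_⟩
      intro m h1 h2
      have hmn : m ≤ n := by omega
      rw [hq1 m h1 hmn]
      rcases lt_or_eq_of_le (hp m h1 (by omega)) with h | h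
      · exact h
      · exfalso
        have : W1 = 0 :=
          Finset.prod_eq_zero (Finset.mem_Icc.mpr ⟨h1, hmn⟩) h.symm
        linarith
    | succ r hr ih =>
      intro hrle
      obtain ⟨ihW, ihpos⟩ := ih (by omega)
      have hrec : q (r + n) = q r - s / ∏ m ∈ Finset.Icc (r + 1) (r + n - 1), q m := by
        have := hq2 (r + n) (by omega) (by omega)
        rw [show r + n - n = r from by omega] at this
        rw [this, reindex r hr]
      have hDpos : 0 < ∏ m ∈ Finset.Icc (r + 1) (r + n - 1), q m := by
        apply Finset.prod_pos
        intro m hm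
        simp only [Finset.mem_Icc] at hm
        exact ihpos m (by omega) (by omega)
      have hWsucc : (∏ m ∈ Finset.Icc (r + 1) (r + 1 + n - 1), q m) = W1 - ((r:ℝ) + 1 - 1) * s := by
        rw [show r + 1 + n - 1 = (r + n - 1) + 1 from by omega,
          Finset.prod_Icc_succ_top (by omega), show (r + n - 1) + 1 = r + n from by omega,
          hrec]
        rw [split r hr] at ihW
        field_simp
        nlinarith [ihW]
      refine ⟨by rw [hWsucc]; push_cast; ring, ?_⟩
      have hWpos : 0 < W1 - ((r:ℝ) + 1 - 1) * s := by
        have hnat : r ≤ (k - 1) * (n - 1) := by omega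
        have hnat2 : (k - 1) * (n - 1) < k * n := by
          have h6 : k * (n - 1) + k = k * n := by
            rw [← Nat.mul_succ]; congr 1; omega
          have h7 : (k - 1) * (n - 1) ≤ k * (n - 1) := Nat.mul_le_mul_right _ (by omega)
          omega
        have hr' : (r : ℝ) ≤ ((k * n : ℕ) : ℝ) - 1 := by
          have : r + 1 ≤ k * n := by omega
          have := (Nat.cast_le (α := ℝ)).mpr this
          push_cast at this ⊢; linarith
        nlinarith [hprod, hspos]
      have hqrn : 0 < q (r + n) := by
        have : q (r + n) * ∏ m ∈ Finset.Icc (r + 1) (r + n - 1), q m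
            = W1 - ((r:ℝ) + 1 - 1) * s := by
          rw [← hWsucc, show r + 1 + n - 1 = (r + n - 1) + 1 from by omega,
            Finset.prod_Icc_succ_top (by omega), show (r + n - 1) + 1 = r + n from by omega]
          ring
        nlinarith [hDpos]
      intro m h1 h2
      rcases Nat.lt_or_ge m (r + n) with h | h
      · exact ihpos m h1 (by omega)
      · have : m = r + n := by omega
        rwa [this]
  -- positivity of all q's
  have pos : ∀ m, 1 ≤ m → m ≤ k * (n - 1) + 1 → 0 < q m := by
    intro m h1 h2
    by_cases hmn : m ≤ n
    · exact (key 1 le_rfl (by omega)).2 m h1 (by omega)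
    · exact (key (m - n + 1) (by omega) (by omega)).2 m h1 (by omega)
  -- monotonicity along residue classes
  have mono : ∀ t : ℕ, t * n + i ≤ k * (n - 1) + 1 → q (t * n + i) ≤ q i := by
    intro t
    induction t with
    | zero => simp
    | succ t ih =>
      intro h
      have e4 : (t + 1) * n = t * n + n := by ring
      have hq : q ((t + 1) * n + i) = q (t * n + i) -
          s / ∏ ℓ ∈ Finset.Icc 1 (n - 1), q ((t + 1) * n + i - ℓ) := by
        have := hq2 ((t + 1) * n + i) (by omega) h
        rwa [show (t + 1) * n + i - n = t * n + i from by omega] at this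
      have hDpos : 0 < ∏ ℓ ∈ Finset.Icc 1 (n - 1), q ((t + 1) * n + i - ℓ) := by
        apply Finset.prod_pos
        intro ℓ hℓ
        simp only [Finset.mem_Icc] at hℓ
        exact pos _ (by omega) (by omega)
      have := ih (by omega)
      have hdiv : 0 ≤ s / ∏ ℓ ∈ Finset.Icc 1 (n - 1), q ((t + 1) * n + i - ℓ) :=
        div_nonneg hspos.le hDpos.le
      rw [hq]; linarith
  -- q i * (product over erase) = W1
  have hiP : q i * ∏ ℓ ∈ (Finset.Icc 1 n).erase i, q ℓ = W1 := by
    rw [Finset.mul_prod_erase _ _ (Finset.mem_Icc.mpr ⟨hi1, hin⟩)]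
    exact Finset.prod_congr rfl (fun m hm => by
      simp only [Finset.mem_Icc] at hm; exact hq1 m hm.1 hm.2)
  have hPpos : 0 < ∏ ℓ ∈ (Finset.Icc 1 n).erase i, q ℓ := by
    apply Finset.prod_pos
    intro m hm
    have hm' := Finset.mem_of_mem_erase hm
    simp only [Finset.mem_Icc] at hm'
    exact pos m hm'.1 (by omega)
  -- main induction on j
  revert hji
  induction j with
  | zero => intro _; simp
  | succ j ih =>
    intro hji
    have e4 : (j + 1) * n = j * n + n := by ring
    have h1 : j * n + i ≤ k * (n - 1) + 1 := by omega
    have ihb := ih h1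
    set r := j * n + i with hrdef
    have hq : q ((j + 1) * n + i) = q r -
        s / ∏ m ∈ Finset.Icc (r + 1) (r + n - 1), q m := by
      have := hq2 ((j + 1) * n + i) (by omega) hji
      rw [show (j + 1) * n + i - n = r from by omega] at this
      rw [this, show (j + 1) * n + i = r + n from by omega, reindex r (by omega)]
    have hr1 : 1 ≤ r := by omega
    have hrR : r ≤ (k - 1) * (n - 1) + 1 := by omega
    obtain ⟨hWr, _⟩ := key r hr1 hrR
    rw [split r hr1] at hWr
    have hDpos : 0 < ∏ m ∈ Finset.Icc (r + 1) (r + n - 1), q m := by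
      apply Finset.prod_pos
      intro m hm
      simp only [Finset.mem_Icc] at hm
      exact pos m (by omega) (by omega)
    have hqr : 0 < q r := pos r hr1 (by omega)
    have hqi : 0 < q i := pos i hi1 (by omega)
    have hmon : q r ≤ q i := mono j h1
    -- W1 ≤ n * (window product at r)
    have hnr : n * (r - 1) ≤ (n - 1) * (k * n) := by
      calc n * (r - 1) ≤ n * ((k - 1) * (n - 1)) := Nat.mul_le_mul_left _ (by omega)
      _ = (n - 1) * ((k - 1) * n) := by ring
      _ ≤ (n - 1) * (k * n) := Nat.mul_le_mul_left _ (Nat.mul_le_mul_right _ (by omega))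
    have hnrR : (n : ℝ) * ((r : ℝ) - 1) * s ≤ ((n : ℝ) - 1) * W1 := by
      have h1' : ((n * (r - 1) : ℕ) : ℝ) ≤ (((n - 1) * (k * n) : ℕ) : ℝ) := by
        exact_mod_cast hnr
      have h2' : ((n * (r - 1) : ℕ) : ℝ) = (n : ℝ) * ((r : ℝ) - 1) := by
        push_cast [Nat.cast_sub hr1]; ring
      have h3' : (((n - 1) * (k * n) : ℕ) : ℝ) = ((n : ℝ) - 1) * ((k * n : ℕ) : ℝ) := by
        push_cast [Nat.cast_sub (show 1 ≤ n from by omega)]; ring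
      have h4' : ((n : ℝ) - 1) * (((k * n : ℕ) : ℝ) * s) ≤ ((n : ℝ) - 1) * W1 := by
        apply mul_le_mul_of_nonneg_left hprod
        have : (1 : ℝ) ≤ (n : ℝ) := by exact_mod_cast (show 1 ≤ n from by omega)
        linarith
      calc (n : ℝ) * ((r : ℝ) - 1) * s = ((n * (r - 1) : ℕ) : ℝ) * s := by rw [h2']
      _ ≤ (((n - 1) * (k * n) : ℕ) : ℝ) * s := by
          apply mul_le_mul_of_nonneg_right h1' hspos.le
      _ = ((n : ℝ) - 1) * (((k * n : ℕ) : ℝ) * s) := by rw [h3']; ring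
      _ ≤ ((n : ℝ) - 1) * W1 := h4'
    have hW1n : W1 ≤ (n : ℝ) * (q r * ∏ m ∈ Finset.Icc (r + 1) (r + n - 1), q m) := by
      rw [hWr]
      have hexp : (n : ℝ) * (W1 - ((r:ℝ) - 1) * s)
          = (n : ℝ) * W1 - (n : ℝ) * ((r:ℝ) - 1) * s := by ring
      rw [hexp]
      have hexp2 : ((n : ℝ) - 1) * W1 = (n : ℝ) * W1 - W1 := by ring
      linarith [hnrR]
    -- the step bound
    have hstep : s / (∏ m ∈ Finset.Icc (r + 1) (r + n - 1), q m) *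
        (∏ ℓ ∈ (Finset.Icc 1 n).erase i, q ℓ) ≤ (n : ℝ) * s := by
      rw [div_mul_eq_mul_div, div_le_iff₀ hDpos]
      have hn0 : (0:ℝ) < n := by exact_mod_cast (show 0 < n from by omega)
      have hP : (∏ ℓ ∈ (Finset.Icc 1 n).erase i, q ℓ) ≤
          (n : ℝ) * ∏ m ∈ Finset.Icc (r + 1) (r + n - 1), q m := by
        have h5 : W1 ≤ (n : ℝ) * (q i * ∏ m ∈ Finset.Icc (r + 1) (r + n - 1), q m) := by
          refine le_trans hW1n ?_
          have : q r * (∏ m ∈ Finset.Icc (r + 1) (r + n - 1), q m)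
              ≤ q i * (∏ m ∈ Finset.Icc (r + 1) (r + n - 1), q m) :=
            mul_le_mul_of_nonneg_right hmon hDpos.le
          exact mul_le_mul_of_nonneg_left this hn0.le
        rw [← hiP] at h5
        have h6 : q i * (∏ ℓ ∈ (Finset.Icc 1 n).erase i, q ℓ)
            ≤ q i * ((n : ℝ) * ∏ m ∈ Finset.Icc (r + 1) (r + n - 1), q m) := by
          rw [show q i * ((n : ℝ) * ∏ m ∈ Finset.Icc (r + 1) (r + n - 1), q m)
              = (n : ℝ) * (q i * ∏ m ∈ Finset.Icc (r + 1) (r + n - 1), q m) from by ring]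
          exact h5
        exact le_of_mul_le_mul_left h6 hqi
      calc s * ∏ ℓ ∈ (Finset.Icc 1 n).erase i, q ℓ
          ≤ s * ((n : ℝ) * ∏ m ∈ Finset.Icc (r + 1) (r + n - 1), q m) :=
            mul_le_mul_of_nonneg_left hP hspos.le
        _ = (n : ℝ) * s * ∏ m ∈ Finset.Icc (r + 1) (r + n - 1), q m := by ring
    rw [hq]
    have : (q i - (q r - s / ∏ m ∈ Finset.Icc (r + 1) (r + n - 1), q m)) *
        ∏ ℓ ∈ (Finset.Icc 1 n).erase i, q ℓ
        = (q i - q r) * (∏ ℓ ∈ (Finset.Icc 1 n).erase i, q ℓ) +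
          s / (∏ m ∈ Finset.Icc (r + 1) (r + n - 1), q m) *
          (∏ ℓ ∈ (Finset.Icc 1 n).erase i, q ℓ) := by ring
    rw [this]
    push_cast
    have hfin : ((j:ℝ) + 1) * (n:ℝ) * s = (j:ℝ) * (n:ℝ) * s + (n:ℝ) * s := by ring
    rw [hfin]
    linarith [ihb, hstep]
end

section
/- Let n ≥ 2 and k ≥ n + 1 be integers with k ≡ 1 (mod n), let m = kn, let p_1, …, p_{k(n−1)+1} be nonnegative reals, and set s = Σ_{j=1}^{(k−1)(n−1)} |(p_j − p_{j+n}) · Π_{i=1}^{n−1} p_{j+i}|. Assume s > 0 and Π_{ℓ=1}^{n} p_ℓ ≥ m·s. Define q_1, …, q_{k(n−1)+1} recursively by q_j = p_j for 1 ≤ j ≤ n and q_j = q_{j−n} − s / Π_{ℓ=1}^{n−1} q_{j−ℓ} for n < j ≤ k(n−1)+1. Then 0 < q_j ≤ p_j for every j with 1 ≤ j ≤ k(n−1)+1. -/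
/-- With the setup of the chain construction (`n ≥ 2`, `k ≥ n+1`, `k ≡ 1 (mod n)`,
`m = kn`, nonnegative `p`, `s > 0`, `Π_{ℓ=1}^n p_ℓ ≥ m·s`, and `q` defined recursively
by `q_j = p_j` for `j ≤ n` and `q_j = q_{j−n} − s / Π_{ℓ=1}^{n−1} q_{j−ℓ}` for
`n < j ≤ k(n−1)+1`): `0 < q_j ≤ p_j` for every `1 ≤ j ≤ k(n−1)+1`. -/
theorem single_bounds
    (n k : ℕ) (hn : 2 ≤ n) (hk : n + 1 ≤ k) (hmod : k % n = 1)
    (p : ℕ → ℝ) (hp : ∀ j, 1 ≤ j → j ≤ k * (n - 1) + 1 → 0 ≤ p j)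
    (s : ℝ)
    (hs : s = ∑ j ∈ Finset.Icc 1 ((k - 1) * (n - 1)),
      |(p j - p (j + n)) * ∏ i ∈ Finset.Icc 1 (n - 1), p (j + i)|)
    (hspos : 0 < s)
    (hprod : ((k * n : ℕ) : ℝ) * s ≤ ∏ ℓ ∈ Finset.Icc 1 n, p ℓ)
    (q : ℕ → ℝ)
    (hq1 : ∀ j, 1 ≤ j → j ≤ n → q j = p j)
    (hq2 : ∀ j, n < j → j ≤ k * (n - 1) + 1 →
      q j = q (j - n) - s / ∏ ℓ ∈ Finset.Icc 1 (n - 1), q (j - ℓ))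
    (j : ℕ) (hj1 : 1 ≤ j) (hj2 : j ≤ k * (n - 1) + 1) :
    0 < q j ∧ q j ≤ p j := by
  have h1 : k * (n - 1) + k = k * n := by
    have h : n - 1 + 1 = n := by omega
    calc k * (n - 1) + k = k * ((n - 1) + 1) := by ring
      _ = k * n := by rw [h]
  have h2 : (k - 1) * (n - 1) + (n - 1) = k * (n - 1) := by
    have h : k - 1 + 1 = k := by omega
    calc (k - 1) * (n - 1) + (n - 1) = (k - 1 + 1) * (n - 1) := by ring
      _ = k * (n - 1) := by rw [h]
  set N := k * (n - 1) + 1 with hN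
  set C := ∏ ℓ ∈ Finset.Icc 1 n, p ℓ with hC
  have hnN : n ≤ N := by omega
  have hkn1 : (1 : ℕ) ≤ k * n := by omega
  have hCpos : 0 < C := lt_of_lt_of_le (by positivity) hprod
  -- positivity of the first n values of p
  have hppos : ∀ ℓ, 1 ≤ ℓ → ℓ ≤ n → 0 < p ℓ := by
    intro ℓ hℓ1 hℓ2
    rcases lt_or_eq_of_le (hp ℓ hℓ1 (by omega)) with h | h
    · exact h
    · exfalso
      have : C = 0 := Finset.prod_eq_zero (Finset.mem_Icc.mpr ⟨hℓ1, hℓ2⟩) h.symm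
      exact absurd this (ne_of_gt hCpos)
  have main : ∀ j, 1 ≤ j → j ≤ N →
      (0 < q j ∧ q j ≤ p j) ∧
      (n ≤ j → ∏ i ∈ Finset.Icc (j - n + 1) j, q i = C - ((j - n : ℕ) : ℝ) * s) := by
    intro j
    induction j using Nat.strong_induction_on with
    | _ j ih =>
      intro hj1 hjN
      by_cases hjn : j ≤ n
      · refine ⟨⟨?_, ?_⟩, ?_⟩
        · rw [hq1 j hj1 hjn]; exact hppos j hj1 hjn
        · rw [hq1 j hj1 hjn]
        · intro hnj
          have hjeq : j = n := le_antisymm hjn hnj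
          subst hjeq
          have : ∏ i ∈ Finset.Icc (j - j + 1) j, q i = C := by
            rw [hC]
            have : j - j + 1 = 1 := by omega
            rw [this]
            exact Finset.prod_congr rfl fun i hi => by
              rw [Finset.mem_Icc] at hi; exact hq1 i hi.1 hi.2
          rw [this]
          simp
      · push_neg at hjn
        -- the denominator product
        set Q := ∏ ℓ ∈ Finset.Icc 1 (n - 1), q (j - ℓ) with hQ
        have hQeq : Q = ∏ i ∈ Finset.Icc (j - n + 1) (j - 1), q i := by
          rw [hQ]
          apply Finset.prod_nbij' (fun ℓ => j - ℓ) (fun i => j - i)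
          · intro a ha; rw [Finset.mem_Icc] at *; omega
          · intro a ha; rw [Finset.mem_Icc] at *; omega
          · intro a ha; rw [Finset.mem_Icc] at ha; omega
          · intro a ha; rw [Finset.mem_Icc] at ha; omega
          · intro a ha; rfl
        have hih : ∀ i, j - n + 1 ≤ i → i ≤ j - 1 → 0 < q i ∧ q i ≤ p i := by
          intro i hi1 hi2
          exact (ih i (by omega) (by omega) (by omega)).1
        have hQpos : 0 < Q := by
          rw [hQeq]
          apply Finset.prod_pos
          intro i hi; rw [Finset.mem_Icc] at hi
          exact (hih i hi.1 hi.2).1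
        -- previous window product
        have hprev := (ih (j - 1) (by omega) (by omega) (by omega)).2 (by omega)
        have hidx : j - 1 - n + 1 = j - n := by omega
        rw [hidx] at hprev
        -- split the previous window at the bottom
        have hsplit : Finset.Icc (j - n) (j - 1)
            = insert (j - n) (Finset.Icc (j - n + 1) (j - 1)) := by
          ext x; simp only [Finset.mem_Icc, Finset.mem_insert]; omega
        have hmem : (j - n) ∉ Finset.Icc (j - n + 1) (j - 1) := by
          rw [Finset.mem_Icc]; omega
        have hprev2 : q (j - n) * Q = C - ((j - 1 - n : ℕ) : ℝ) * s := by
          rw [hQeq, ← Finset.prod_insert hmem, ← hsplit, hprev]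
        -- the recursion
        have hqj : q j = q (j - n) - s / Q := hq2 j hjn hjN
        have hqjQ : q j * Q = C - ((j - n : ℕ) : ℝ) * s := by
          have hc : ((j - n : ℕ) : ℝ) = ((j - 1 - n : ℕ) : ℝ) + 1 := by
            have : j - n = (j - 1 - n) + 1 := by omega
            rw [this]; push_cast; ring
          rw [hqj, sub_mul, div_mul_cancel₀ _ (ne_of_gt hQpos), hprev2, hc]
          ring
        have hrem : 0 < C - ((j - n : ℕ) : ℝ) * s := by
          have hle : (j - n : ℕ) + (k + n - 1) ≤ k * n := by omega
          have : ((j - n : ℕ) : ℝ) * s + s ≤ ((k * n : ℕ) : ℝ) * s := by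
            have hle' : ((j - n : ℕ) : ℝ) + 1 ≤ ((k * n : ℕ) : ℝ) := by
              have : (j - n : ℕ) + 1 ≤ k * n := by omega
              exact_mod_cast this
            nlinarith
          nlinarith [hprod]
        have hqjpos : 0 < q j := by
          have := hrem
          rw [← hqjQ] at this
          nlinarith [hQpos]
        -- now q j ≤ p j using the definition of s
        have hjnB : 1 ≤ j - n ∧ j - n ≤ (k - 1) * (n - 1) := by omega
        have hterm : |(p (j - n) - p (j - n + n)) *
            ∏ i ∈ Finset.Icc 1 (n - 1), p (j - n + i)| ≤ s := by
          rw [hs]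
          exact Finset.single_le_sum
            (f := fun j' => |(p j' - p (j' + n)) * ∏ i ∈ Finset.Icc 1 (n - 1), p (j' + i)|)
            (fun i _ => abs_nonneg _) (Finset.mem_Icc.mpr hjnB)
        have hjnn : j - n + n = j := by omega
        rw [hjnn] at hterm
        set Pp := ∏ ℓ ∈ Finset.Icc 1 (n - 1), p (j - ℓ) with hPp
        have hPpeq : (∏ i ∈ Finset.Icc 1 (n - 1), p (j - n + i)) = Pp := by
          rw [hPp]
          apply Finset.prod_nbij' (fun i => n - i) (fun ℓ => n - ℓ)
          · intro a ha; rw [Finset.mem_Icc] at *; omega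
          · intro a ha; rw [Finset.mem_Icc] at *; omega
          · intro a ha; rw [Finset.mem_Icc] at ha; omega
          · intro a ha; rw [Finset.mem_Icc] at ha; omega
          · intro a ha; rw [Finset.mem_Icc] at ha
            have : j - n + a = j - (n - a) := by omega
            rw [this]
        rw [hPpeq] at hterm
        have hterm2 : (p (j - n) - p j) * Pp ≤ s :=
          le_trans (le_abs_self _) hterm
        have hQlePp : Q ≤ Pp := by
          rw [hQ, hPp]
          apply Finset.prod_le_prod
          · intro ℓ hℓ; rw [Finset.mem_Icc] at hℓ
            exact le_of_lt (hih (j - ℓ) (by omega) (by omega)).1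
          · intro ℓ hℓ; rw [Finset.mem_Icc] at hℓ
            exact (hih (j - ℓ) (by omega) (by omega)).2
        have hdiv : p (j - n) - p j ≤ s / Q := by
          rcases le_or_gt (p (j - n) - p j) 0 with h | h
          · exact le_trans h (le_of_lt (div_pos hspos hQpos))
          · rw [le_div_iff₀ hQpos]
            calc (p (j - n) - p j) * Q ≤ (p (j - n) - p j) * Pp :=
                  mul_le_mul_of_nonneg_left hQlePp (le_of_lt h)
              _ ≤ s := hterm2
        have hqn := (ih (j - n) (by omega) (by omega) (by omega)).1
        have hqjle : q j ≤ p j := by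
          rw [hqj]
          have := hqn.2
          linarith
        refine ⟨⟨hqjpos, hqjle⟩, fun _ => ?_⟩
        -- window product at j
        have hsplit2 : Finset.Icc (j - n + 1) j
            = insert j (Finset.Icc (j - n + 1) (j - 1)) := by
          ext x; simp only [Finset.mem_Icc, Finset.mem_insert]; omega
        have hmem2 : j ∉ Finset.Icc (j - n + 1) (j - 1) := by
          rw [Finset.mem_Icc]; omega
        rw [hsplit2, Finset.prod_insert hmem2, ← hQeq, hqjQ]
  exact (main j hj1 hj2).1
end

section
/- Let n ≥ 2 and k ≥ n + 1 be integers with k ≡ 1 (mod n), let m = kn, let p_1, …, p_{k(n−1)+1} be nonnegative reals, and set s = Σ_{j=1}^{(k−1)(n−1)} |(p_j − p_{j+n}) · Π_{i=1}^{n−1} p_{j+i}|. Assume s > 0 and Π_{ℓ=1}^{n} p_ℓ ≥ m·s. Define q_1, …, q_{k(n−1)+1} recursively by q_j = p_j for 1 ≤ j ≤ n and q_j = q_{j−n} − s / Π_{ℓ=1}^{n−1} q_{j−ℓ} for n < j ≤ k(n−1)+1. Then for every integer j ≥ 0 with j + n ≤ k(n−1) + 1, Π_{ℓ=1}^{n}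 q_{j+ℓ} ≥ (m − j)·s. -/
/-- With the setup of the chain construction (`n ≥ 2`, `k ≥ n+1`, `k ≡ 1 (mod n)`,
`m = kn`, nonnegative `p`, `s > 0`, `Π_{ℓ=1}^n p_ℓ ≥ m·s`, and `q` defined recursively
by `q_j = p_j` for `j ≤ n` and `q_j = q_{j−n} − s / Π_{ℓ=1}^{n−1} q_{j−ℓ}` for
`n < j ≤ k(n−1)+1`): for every `j ≥ 0` with `j + n ≤ k(n−1)+1`,
`Π_{ℓ=1}^n q_{j+ℓ} ≥ (m − j)·s`. -/
theorem n_tuple_bound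
    (n k : ℕ) (hn : 2 ≤ n) (hk : n + 1 ≤ k) (hmod : k % n = 1)
    (p : ℕ → ℝ) (hp : ∀ j, 1 ≤ j → j ≤ k * (n - 1) + 1 → 0 ≤ p j)
    (s : ℝ)
    (hs : s = ∑ j ∈ Finset.Icc 1 ((k - 1) * (n - 1)),
      |(p j - p (j + n)) * ∏ i ∈ Finset.Icc 1 (n - 1), p (j + i)|)
    (hspos : 0 < s)
    (hprod : ((k * n : ℕ) : ℝ) * s ≤ ∏ ℓ ∈ Finset.Icc 1 n, p ℓ)
    (q : ℕ → ℝ)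
    (hq1 : ∀ j, 1 ≤ j → j ≤ n → q j = p j)
    (hq2 : ∀ j, n < j → j ≤ k * (n - 1) + 1 →
      q j = q (j - n) - s / ∏ ℓ ∈ Finset.Icc 1 (n - 1), q (j - ℓ))
    (j : ℕ) (hj : j + n ≤ k * (n - 1) + 1) :
    (((k * n : ℕ) : ℝ) - j) * s ≤ ∏ ℓ ∈ Finset.Icc 1 n, q (j + ℓ) := by
  induction j with
  | zero =>
      have h : ∏ ℓ ∈ Finset.Icc 1 n, q (0 + ℓ) = ∏ ℓ ∈ Finset.Icc 1 n, p ℓ := by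
        apply Finset.prod_congr rfl
        intro ℓ hℓ
        simp only [Finset.mem_Icc] at hℓ
        rw [zero_add]
        exact hq1 ℓ hℓ.1 hℓ.2
      rw [h, Nat.cast_zero, sub_zero]
      exact hprod
  | succ j ih =>
      have hj' : j + n ≤ k * (n - 1) + 1 := by omega
      have prev := ih hj'
      have hm1 : k * (n - 1) + k = k * n := by
        have h : n - 1 + 1 = n := by omega
        calc k * (n - 1) + k = k * ((n - 1) + 1) := by ring
          _ = k * n := by rw [h]
      have hjm : j + 1 ≤ k * n := by omega
      set P := ∏ ℓ ∈ Finset.Icc 1 (n - 1), q (j + 1 + ℓ) with hP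
      -- split off the bottom of the product in prev
      have hA : ∏ ℓ ∈ Finset.Icc 1 n, q (j + ℓ) = q (j + 1) * P := by
        have hins : Finset.Icc 1 n = insert 1 (Finset.Icc 2 n) := by
          ext x; simp only [Finset.mem_insert, Finset.mem_Icc]; omega
        rw [hins, Finset.prod_insert (by simp)]
        congr 1
        rw [hP]
        refine Finset.prod_bij' (fun ℓ _ => ℓ - 1) (fun ℓ _ => ℓ + 1) ?_ ?_ ?_ ?_ ?_
        · intro a ha; simp only [Finset.mem_Icc] at ha; beta_reduce
          simp only [Finset.mem_Icc]; omega
        · intro a ha; simp only [Finset.mem_Icc] at ha; beta_reduce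
          simp only [Finset.mem_Icc]; omega
        · intro a ha; simp only [Finset.mem_Icc] at ha; beta_reduce; omega
        · intro a ha; simp only [Finset.mem_Icc] at ha; beta_reduce; omega
        · intro a ha; simp only [Finset.mem_Icc] at ha; beta_reduce; congr 1; omega
      -- split off the top of the goal product
      have hB : ∏ ℓ ∈ Finset.Icc 1 n, q (j + 1 + ℓ) = P * q (j + 1 + n) := by
        have h : n = (n - 1) + 1 := by omega
        rw [h, Finset.prod_Icc_succ_top (by omega)]
      have hrec := hq2 (j + 1 + n) (by omega) (by omega)
      have hC : ∏ ℓ ∈ Finset.Icc 1 (n - 1), q (j + 1 + n - ℓ) = P := by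
        rw [hP]
        refine Finset.prod_bij' (fun ℓ _ => n - ℓ) (fun ℓ _ => n - ℓ) ?_ ?_ ?_ ?_ ?_
        · intro a ha; simp only [Finset.mem_Icc] at ha; beta_reduce
          simp only [Finset.mem_Icc]; omega
        · intro a ha; simp only [Finset.mem_Icc] at ha; beta_reduce
          simp only [Finset.mem_Icc]; omega
        · intro a ha; simp only [Finset.mem_Icc] at ha; beta_reduce; omega
        · intro a ha; simp only [Finset.mem_Icc] at ha; beta_reduce; omega
        · intro a ha; simp only [Finset.mem_Icc] at ha; beta_reduce; congr 1; omega
      have hsub : j + 1 + n - n = j + 1 := by omega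
      rw [hsub, hC] at hrec
      have hjmR : (j : ℝ) + 1 ≤ ((k * n : ℕ) : ℝ) := by exact_mod_cast hjm
      have hprevpos : 0 < (((k * n : ℕ) : ℝ) - j) * s := by
        apply mul_pos _ hspos
        linarith
      have hPne : P ≠ 0 := by
        intro h0
        rw [hA, h0, mul_zero] at prev
        linarith
      have hqP : q (j + 1 + n) * P = q (j + 1) * P - s := by
        rw [hrec]
        field_simp
      have hcast : ((j + 1 : ℕ) : ℝ) = (j : ℝ) + 1 := by push_cast; ring
      rw [hB, mul_comm P _, hqP, ← hA, hcast]
      have hring : (((k * n : ℕ) : ℝ) - ((j : ℝ) + 1)) * s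
          = (((k * n : ℕ) : ℝ) - (j : ℝ)) * s - s := by ring
      rw [hring]
      linarith
end

section
/- Let n be a positive integer, let T be a finite set (of transcripts), and for each i ∈ [n] let A_i be a set (of possible inputs of player i) and let ρ_i : A_i × T → ℝ≥0. For a tuple x ∈ Π_{i∈[n]} A_i define P_x : T → ℝ≥0 by P_x(π) = Π_{i∈[n]} ρ_i(x_i, π). Let X, Y, Z ∈ Π_{i∈[n]} A_i and let I, J ⊆ [n] be disjoint sets such that X_i = Y_i for all i ∉ I and X_i = Z_i for all i ∉ J. Define W by W_i = Y_i for i ∈ I, W_i = Z_i for i ∈ J, and W_i = X_i otherwise. Suppose each of P_X, P_Y, P_Z, P_W sums to 1 over T. Then (1/2)·Σ_{π∈T} |P_X(π) − P_W(π)| ≤ (1/2)·Σ_{π∈T} |P_X(π) − P_Y(π)| + (1/2)·Σ_{π∈T} |P_X(π) − P_Z(π)|. -/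
lemma rect_scalar (a b c d : ℝ) (ha : 0 ≤ a) (hb : 0 ≤ b) (hc : 0 ≤ c) (hd : 0 ≤ d)
    (h : a * d = b * c) : max (a - d) 0 ≤ max (a - b) 0 + max (a - c) 0 := by
  rcases le_or_gt a d with h1 | h1
  · have : max (a - d) 0 = 0 := max_eq_right (by linarith)
    rw [this]
    exact add_nonneg (le_max_right _ _) (le_max_right _ _)
  · have ha0 : 0 < a := lt_of_le_of_lt hd h1
    have hL : max (a - d) 0 = a - d := max_eq_left (by linarith)
    rcases le_or_gt b a with hb1 | hb1
    · rcases le_or_gt c a with hc1 | hc1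
      · have key : a - d ≤ (a - b) + (a - c) := by nlinarith [mul_nonneg (sub_nonneg.mpr hb1) (sub_nonneg.mpr hc1)]
        rw [hL]
        calc a - d ≤ (a - b) + (a - c) := key
          _ ≤ max (a - b) 0 + max (a - c) 0 := add_le_add (le_max_left _ _) (le_max_left _ _)
      · -- c > a, so d ≥ b
        have hdb : b ≤ d := by nlinarith
        rw [hL]
        calc a - d ≤ a - b := by linarith
          _ ≤ max (a - b) 0 := le_max_left _ _
          _ ≤ _ := le_add_of_nonneg_right (le_max_right _ _)
    · -- b > a, so d ≥ c
      have hdc : c ≤ d := by nlinarith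
      rw [hL]
      calc a - d ≤ a - c := by linarith
        _ ≤ max (a - c) 0 := le_max_left _ _
        _ ≤ _ := le_add_of_nonneg_left (le_max_right _ _)

lemma tv_eq_sum_pos {T : Type*} [Fintype T] (f g : T → ℝ)
    (hf : ∑ π : T, f π = 1) (hg : ∑ π : T, g π = 1) :
    ∑ π : T, |f π - g π| = 2 * ∑ π : T, max (f π - g π) 0 := by
  have habs : ∀ v : ℝ, |v| = 2 * max v 0 - v := by
    intro v
    rcases le_total v 0 with hv | hv
    · rw [abs_of_nonpos hv, max_eq_right hv]; ring
    · rw [abs_of_nonneg hv, max_eq_left hv]; ring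
  calc ∑ π : T, |f π - g π| = ∑ π : T, (2 * max (f π - g π) 0 - (f π - g π)) := by
        simp only [habs]
    _ = 2 * ∑ π : T, max (f π - g π) 0 - (∑ π : T, f π - ∑ π : T, g π) := by
        rw [Finset.sum_sub_distrib, Finset.mul_sum, Finset.sum_sub_distrib]
    _ = 2 * ∑ π : T, max (f π - g π) 0 := by rw [hf, hg]; ring

/-- The randomized rectangle property: if the transcript distribution on input `x`
factors as `P_x(π) = Π_i ρ_i(x_i, π)`, `X, Y, Z` are inputs with `X = Y` outside `I`
and `X = Z` outside `J` (for disjoint `I, J`), and `W` takes `Y`'s coordinates on `I`,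
`Z`'s on `J`, and `X`'s elsewhere, and all four induced functions are probability mass
functions on `T`, then `TV(P_X, P_W) ≤ TV(P_X, P_Y) + TV(P_X, P_Z)`. -/
theorem rectangling
    (n : ℕ) (hn : 0 < n) {T : Type*} [Fintype T]
    (A : Fin n → Type*) (ρ : (i : Fin n) → A i → T → ℝ)
    (hρ : ∀ i a π, 0 ≤ ρ i a π)
    (X Y Z W : (i : Fin n) → A i)
    (I J : Finset (Fin n)) (hIJ : Disjoint I J)
    (hXY : ∀ i ∉ I, X i = Y i) (hXZ : ∀ i ∉ J, X i = Z i)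
    (hW : ∀ i, W i = if i ∈ I then Y i else if i ∈ J then Z i else X i)
    (hXsum : ∑ π : T, ∏ i, ρ i (X i) π = 1)
    (hYsum : ∑ π : T, ∏ i, ρ i (Y i) π = 1)
    (hZsum : ∑ π : T, ∏ i, ρ i (Z i) π = 1)
    (hWsum : ∑ π : T, ∏ i, ρ i (W i) π = 1) :
    (1 / 2) * ∑ π : T, |∏ i, ρ i (X i) π - ∏ i, ρ i (W i) π| ≤
      (1 / 2) * ∑ π : T, |∏ i, ρ i (X i) π - ∏ i, ρ i (Y i) π| +
      (1 / 2) * ∑ π : T, |∏ i, ρ i (X i) π - ∏ i, ρ i (Z i) π| := by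
  -- key pointwise identity P_X * P_W = P_Y * P_Z
  have key : ∀ π : T, (∏ i, ρ i (X i) π) * (∏ i, ρ i (W i) π)
      = (∏ i, ρ i (Y i) π) * (∏ i, ρ i (Z i) π) := by
    intro π
    rw [← Finset.prod_mul_distrib, ← Finset.prod_mul_distrib]
    apply Finset.prod_congr rfl
    intro i _
    rw [hW i]
    by_cases hI : i ∈ I
    · have hJ : i ∉ J := fun hJ => (Finset.disjoint_left.mp hIJ hI) hJ
      rw [if_pos hI, ← hXZ i hJ]
      ring
    · by_cases hJ : i ∈ J
      · rw [if_neg hI, if_pos hJ, ← hXY i hI]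
      · rw [if_neg hI, if_neg hJ, ← hXY i hI, ← hXZ i hJ]
  have hprod_nonneg : ∀ (x : (i : Fin n) → A i) (π : T), 0 ≤ ∏ i, ρ i (x i) π :=
    fun x π => Finset.prod_nonneg fun i _ => hρ i (x i) π
  rw [tv_eq_sum_pos _ _ hXsum hWsum, tv_eq_sum_pos _ _ hXsum hYsum,
    tv_eq_sum_pos _ _ hXsum hZsum]
  have main : ∑ π : T, max (∏ i, ρ i (X i) π - ∏ i, ρ i (W i) π) 0 ≤
      ∑ π : T, (max (∏ i, ρ i (X i) π - ∏ i, ρ i (Y i) π) 0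
        + max (∏ i, ρ i (X i) π - ∏ i, ρ i (Z i) π) 0) := by
    apply Finset.sum_le_sum
    intro π _
    exact rect_scalar _ _ _ _ (hprod_nonneg X π) (hprod_nonneg Y π) (hprod_nonneg Z π)
      (hprod_nonneg W π) (key π)
  rw [Finset.sum_add_distrib] at main
  linarith
end
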